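/- arXiv:1503.01022 — 12 statements merged into one kernel-verified Lean document; each statement's English description precedes it below -/
import Mathlib

section
/- For real numbers $2 \geq \alpha_1 \geq \alpha_2 \geq \alpha_3 > 1$, one has $\max\{2 + 2\alpha_3/\alpha_1 + 2\alpha_3/\alpha_2 - 2\alpha_3,\ 3 + 2\alpha_2/\alpha_1 + \alpha_2/\alpha_3 - 2\alpha_2\} \leq 4 + \alpha_1/\alpha_2 + \alpha_1/\alpha_3 - 2\alpha_1$. -/
theorem stmt0 (α₁ α₂ α₃ : ℝ) (h1 : 2 ≥ α₁) (h2 : α₁ ≥ α₂) (h3 : α₂ ≥ α₃) (h4 : α₃ > 1) :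
    max (2 + 2 * α₃ / α₁ + 2 * α₃ / α₂ - 2 * α₃)
        (3 + 2 * α₂ / α₁ + α₂ / α₃ - 2 * α₂)
      ≤ 4 + α₁ / α₂ + α₁ / α₃ - 2 * α₁ := by
  have p3 : (0:ℝ) < α₃ := by linarith
  have p2 : (0:ℝ) < α₂ := by linarith
  have p1 : (0:ℝ) < α₁ := by linarith
  have hd : (0:ℝ) < α₁ * α₂ * α₃ := by positivity
  rw [max_le_iff]
  constructor
  · rw [← sub_nonneg]
    have e : (4 + α₁ / α₂ + α₁ / α₃ - 2 * α₁) - (2 + 2 * α₃ / α₁ + 2 * α₃ / α₂ - 2 * α₃) =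
        ((2 - 2*α₁ + 2*α₃) * (α₁*α₂*α₃) + α₁*α₁*α₃ + α₁*α₁*α₂ - 2*α₂*α₃*α₃ - 2*α₁*α₃*α₃) / (α₁*α₂*α₃) := by
      field_simp; ring
    rw [e]
    apply div_nonneg _ hd.le
    nlinarith [mul_nonneg (mul_nonneg (sub_nonneg.2 h2) (sub_nonneg.2 h3)) p3.le,
      mul_nonneg (mul_nonneg (sub_nonneg.2 h1) (sub_nonneg.2 h3)) p3.le,
      mul_nonneg (mul_nonneg (sub_nonneg.2 h2) (sub_nonneg.2 h3)) p1.le,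
      mul_nonneg (mul_nonneg (sub_nonneg.2 h1) (sub_nonneg.2 h2)) p3.le,
      mul_nonneg (mul_nonneg (sub_nonneg.2 h3) (by linarith : (0:ℝ) ≤ α₃ - 1)) p1.le,
      mul_nonneg (mul_nonneg (sub_nonneg.2 h2) (by linarith : (0:ℝ) ≤ α₃ - 1)) p3.le,
      mul_nonneg (mul_nonneg (by linarith : (0:ℝ) ≤ 2 - α₁) (by linarith : (0:ℝ) ≤ α₃ - 1)) p3.le,
      mul_nonneg (mul_nonneg (by linarith : (0:ℝ) ≤ 2 - α₁) (by linarith : (0:ℝ) ≤ α₃ - 1)) p2.le]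
  · rw [← sub_nonneg]
    have e : (4 + α₁ / α₂ + α₁ / α₃ - 2 * α₁) - (3 + 2 * α₂ / α₁ + α₂ / α₃ - 2 * α₂) =
        ((1 - 2*α₁ + 2*α₂) * (α₁*α₂*α₃) + α₁*α₁*α₃ + α₁*α₁*α₂ - 2*α₂*α₂*α₃ - α₁*α₂*α₂) / (α₁*α₂*α₃) := by
      field_simp; ring
    rw [e]
    apply div_nonneg _ hd.le
    have t1 : 0 ≤ (α₁ - α₂) * (α₁ * α₂) * (2 - α₃) :=
      mul_nonneg (mul_nonneg (by linarith) (by positivity)) (by linarith)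
    have t2 : 0 ≤ (α₁ - α₂) * (α₁ * α₃) * (2 - α₂) :=
      mul_nonneg (mul_nonneg (by linarith) (by positivity)) (by linarith)
    have t3 : 0 ≤ (α₁ - α₂) * (α₂ * α₃) * (2 - α₁) :=
      mul_nonneg (mul_nonneg (by linarith) (by positivity)) (by linarith)
    have key : (1 - 2*α₁ + 2*α₂) * (α₁*α₂*α₃) + α₁*α₁*α₃ + α₁*α₁*α₂ - 2*α₂*α₂*α₃ - α₁*α₂*α₂
        = ((α₁ - α₂) * (α₁ * α₂) * (2 - α₃) + (α₁ - α₂) * (α₁ * α₃) * (2 - α₂)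
            + 2 * ((α₁ - α₂) * (α₂ * α₃) * (2 - α₁))) / 2 := by ring
    rw [key]
    linarith
end

section
/- Let $0 < \alpha_2 \leq \alpha_1 \leq 2$ with $2 - 1/\alpha_1 - 1/\alpha_2 > 0$, and set $\gamma = 2 - 1/\alpha_1 - 1/\alpha_2$. Then the infimum of the set of $\beta \in (0,2)$ such that $\sum_{k=1}^{\infty}\sum_{n=1}^{\infty} \frac{1}{k^{\beta}+n^{\beta}} \left(\frac{1}{k^{\alpha_1}+n^{\alpha_2}}\right)^{\gamma} < \infty$ equals $\max\{3 + \alpha_1/\alpha_2 - 2\alpha_1,\ 2 + 2\alpha_2/\alpha_1 - 2\alpha_2\}$. -/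
open Set Real

lemma geo_le_max (x y θ : ℝ) (hx : 0 < x) (hy : 0 < y) (hθ0 : 0 ≤ θ) (hθ1 : θ ≤ 1) :
    x ^ θ * y ^ (1 - θ) ≤ max x y := by
  calc x ^ θ * y ^ (1 - θ) ≤ (max x y) ^ θ * (max x y) ^ (1 - θ) := by
        apply mul_le_mul
        · exact Real.rpow_le_rpow hx.le (le_max_left _ _) hθ0
        · exact Real.rpow_le_rpow hy.le (le_max_right _ _) (by linarith)
        · positivity
        · positivity
    _ = max x y := by
        rw [← Real.rpow_add (lt_max_of_lt_left hx)]
        simp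

lemma term_bound (β α₁ α₂ γ θ s k n : ℝ) (hβ : 0 ≤ β) (hγ : 0 ≤ γ)
    (hθ0 : 0 ≤ θ) (hθ1 : θ ≤ 1) (hs0 : 0 ≤ s) (hs1 : s ≤ 1)
    (hk : 1 ≤ k) (hn : 1 ≤ n) :
    (k ^ β + n ^ β)⁻¹ * ((k ^ α₁ + n ^ α₂)⁻¹) ^ γ ≤
      (k ^ (θ * β + s * α₁ * γ))⁻¹ * (n ^ ((1 - θ) * β + (1 - s) * α₂ * γ))⁻¹ := by
  have hk0 : (0:ℝ) < k := lt_of_lt_of_le one_pos hk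
  have hn0 : (0:ℝ) < n := lt_of_lt_of_le one_pos hn
  have hP : k ^ (θ * β) * n ^ ((1 - θ) * β) ≤ k ^ β + n ^ β := by
    have h1 : (k ^ θ * n ^ (1 - θ)) ^ β ≤ (max k n) ^ β :=
      Real.rpow_le_rpow (by positivity) (geo_le_max k n θ hk0 hn0 hθ0 hθ1) hβ
    have h2 : (max k n) ^ β ≤ k ^ β + n ^ β := by
      have := Real.rpow_nonneg hk0.le β
      have := Real.rpow_nonneg hn0.le β
      rcases max_cases k n with ⟨h, _⟩ | ⟨h, _⟩ <;> rw [h] <;> linarith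
    calc k ^ (θ * β) * n ^ ((1 - θ) * β) = (k ^ θ * n ^ (1 - θ)) ^ β := by
          rw [Real.mul_rpow (by positivity) (by positivity), ← Real.rpow_mul hk0.le,
            ← Real.rpow_mul hn0.le]
      _ ≤ k ^ β + n ^ β := h1.trans h2
  have hQ : k ^ (s * α₁) * n ^ ((1 - s) * α₂) ≤ k ^ α₁ + n ^ α₂ := by
    have h1 : ((k ^ α₁) ^ s * (n ^ α₂) ^ (1 - s)) ≤ max (k ^ α₁) (n ^ α₂) :=
      geo_le_max _ _ s (by positivity) (by positivity) hs0 hs1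
    have h2 : max (k ^ α₁) (n ^ α₂) ≤ k ^ α₁ + n ^ α₂ := by
      have := Real.rpow_nonneg hk0.le α₁
      have := Real.rpow_nonneg hn0.le α₂
      rcases max_cases (k ^ α₁) (n ^ α₂) with ⟨h, _⟩ | ⟨h, _⟩ <;> rw [h] <;> linarith
    calc k ^ (s * α₁) * n ^ ((1 - s) * α₂)
        = (k ^ α₁) ^ s * (n ^ α₂) ^ (1 - s) := by
          rw [← Real.rpow_mul hk0.le, ← Real.rpow_mul hn0.le, mul_comm α₁ s, mul_comm α₂ (1-s)]
      _ ≤ k ^ α₁ + n ^ α₂ := h1.trans h2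
  have e1 : (k ^ β + n ^ β)⁻¹ ≤ (k ^ (θ * β) * n ^ ((1 - θ) * β))⁻¹ := by
    apply inv_anti₀ (by positivity) hP
  have e2 : ((k ^ α₁ + n ^ α₂)⁻¹) ^ γ ≤ ((k ^ (s * α₁) * n ^ ((1 - s) * α₂))⁻¹) ^ γ := by
    apply Real.rpow_le_rpow (by positivity) _ hγ
    exact inv_anti₀ (by positivity) hQ
  calc (k ^ β + n ^ β)⁻¹ * ((k ^ α₁ + n ^ α₂)⁻¹) ^ γ
      ≤ (k ^ (θ * β) * n ^ ((1 - θ) * β))⁻¹ * ((k ^ (s * α₁) * n ^ ((1 - s) * α₂))⁻¹) ^ γ := by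
        apply mul_le_mul e1 e2 (by positivity) (by positivity)
    _ = (k ^ (θ * β + s * α₁ * γ))⁻¹ * (n ^ ((1 - θ) * β + (1 - s) * α₂ * γ))⁻¹ := by
        rw [Real.inv_rpow (by positivity), Real.mul_rpow (by positivity) (by positivity),
          ← Real.rpow_mul hk0.le, ← Real.rpow_mul hn0.le, Real.rpow_add hk0, Real.rpow_add hn0]
        rw [mul_inv, mul_inv, mul_inv]
        ring_nf

lemma summable_shift_rpow {a : ℝ} (ha : 1 < a) :
    Summable fun n : ℕ => (((n : ℝ) + 1) ^ a)⁻¹ := by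
  have h : Summable fun n : ℕ => ((n : ℝ)) ^ (-a) := Real.summable_nat_rpow.2 (by linarith)
  have h2 := (summable_nat_add_iff 1).2 h
  refine h2.congr fun n => ?_
  rw [← Real.rpow_neg (by positivity)]
  push_cast
  ring_nf

lemma summable_prod_rpow {a b : ℝ} (ha : 1 < a) (hb : 1 < b) :
    Summable fun p : ℕ × ℕ => (((p.1 : ℝ) + 1) ^ a)⁻¹ * (((p.2 : ℝ) + 1) ^ b)⁻¹ :=
  (summable_shift_rpow ha).mul_of_nonneg (summable_shift_rpow hb)
    (fun n => by positivity) (fun n => by positivity)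

lemma exponent_lt_of_summable {g : ℕ → ℝ} (hg : Summable g) {c p : ℝ} (hc : 0 < c)
    {K : ℕ} (h : ∀ k, K ≤ k → c * ((k : ℝ) + 1) ^ p ≤ g k) : p < -1 := by
  have h1 : Summable fun k : ℕ => g (k + K) := (summable_nat_add_iff K).2 hg
  have h2 : Summable fun k : ℕ => c * (((k + K : ℕ) : ℝ) + 1) ^ p :=
    h1.of_nonneg_of_le (fun k => by positivity) (fun k => h (k + K) (Nat.le_add_left K k))
  have h3 : Summable fun k : ℕ => (((k + K : ℕ) : ℝ) + 1) ^ p := by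
    have h4 := h2.mul_left c⁻¹
    refine h4.congr fun k => ?_
    rw [← mul_assoc, inv_mul_cancel₀ hc.ne', one_mul]
  have h5 : Summable fun k : ℕ => ((k + (K + 1) : ℕ) : ℝ) ^ p := by
    refine h3.congr fun k => ?_
    push_cast
    ring_nf
  exact Real.summable_nat_rpow.1 ((summable_nat_add_iff (K + 1)).1 h5)

lemma div1 (α₁ α₂ γ β : ℝ) (hβ : 0 < β) (hγ : 0 < γ) (h20 : 0 ≤ α₂) (h21 : α₂ ≤ α₁)
    (hsum : Summable (fun p : ℕ × ℕ =>
        (((p.1 : ℝ) + 1) ^ β + ((p.2 : ℝ) + 1) ^ β)⁻¹ *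
          ((((p.1 : ℝ) + 1) ^ α₁ + ((p.2 : ℝ) + 1) ^ α₂)⁻¹) ^ γ)) :
    2 - α₁ * γ < β := by
  set F : ℕ × ℕ → ℝ := fun p =>
      (((p.1 : ℝ) + 1) ^ β + ((p.2 : ℝ) + 1) ^ β)⁻¹ *
        ((((p.1 : ℝ) + 1) ^ α₁ + ((p.2 : ℝ) + 1) ^ α₂)⁻¹) ^ γ with hF
  have hF0 : 0 ≤ F := fun p => by
    have : (0:ℝ) < ((p.1 : ℝ) + 1) := by positivity
    positivity
  obtain ⟨hrow, hg⟩ := (summable_prod_of_nonneg hF0).1 hsum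
  set c : ℝ := 2⁻¹ * (2 : ℝ) ^ (-γ) with hc
  have hcpos : 0 < c := by positivity
  have key : ∀ k : ℕ, c * ((k : ℝ) + 1) ^ (1 - β - α₁ * γ) ≤ ∑' n, F (k, n) := by
    intro k
    set x : ℝ := (k : ℝ) + 1 with hx
    have hx1 : (1:ℝ) ≤ x := by simp [hx]
    have hx0 : (0:ℝ) < x := by positivity
    have hterm : ∀ n ∈ Finset.range (k + 1), c * x ^ (-(β + α₁ * γ)) ≤ F (k, n) := by
      intro n hn
      have hnk : n ≤ k := Nat.lt_succ_iff.1 (Finset.mem_range.1 hn)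
      set m : ℝ := (n : ℝ) + 1 with hm
      have hm1 : (1:ℝ) ≤ m := by simp [hm]
      have hmx : m ≤ x := by
        simp only [hm, hx]
        exact_mod_cast Nat.add_le_add_right hnk 1
      have hd1 : x ^ β + m ^ β ≤ 2 * x ^ β := by
        have : m ^ β ≤ x ^ β := Real.rpow_le_rpow (by positivity) hmx hβ.le
        linarith
      have hd2 : x ^ α₁ + m ^ α₂ ≤ 2 * x ^ α₁ := by
        have h1 : m ^ α₂ ≤ x ^ α₂ := Real.rpow_le_rpow (by positivity) hmx h20
        have h2 : x ^ α₂ ≤ x ^ α₁ := Real.rpow_le_rpow_of_exponent_le hx1 h21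
        linarith
      have e1 : (x ^ β + m ^ β)⁻¹ ≥ (2 * x ^ β)⁻¹ := by
        apply inv_anti₀ (by positivity) hd1
      have e2 : ((x ^ α₁ + m ^ α₂)⁻¹) ^ γ ≥ ((2 * x ^ α₁)⁻¹) ^ γ := by
        apply Real.rpow_le_rpow (by positivity) _ hγ.le
        exact inv_anti₀ (by positivity) hd2
      have eq1 : (2 * x ^ β)⁻¹ * ((2 * x ^ α₁)⁻¹) ^ γ = c * x ^ (-(β + α₁ * γ)) := by
        rw [Real.inv_rpow (by positivity), Real.mul_rpow (by norm_num) (by positivity),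
          ← Real.rpow_mul hx0.le, hc, Real.rpow_neg (by norm_num : (0:ℝ) ≤ 2),
          Real.rpow_neg hx0.le, Real.rpow_add hx0, mul_inv, mul_inv, mul_inv]
        ring
      have : F (k, n) = (x ^ β + m ^ β)⁻¹ * ((x ^ α₁ + m ^ α₂)⁻¹) ^ γ := rfl
      rw [this, ← eq1]
      exact mul_le_mul e1 e2 (by positivity) (by positivity)
    have hsumle : ∑ n ∈ Finset.range (k + 1), (c * x ^ (-(β + α₁ * γ)))
        ≤ ∑ n ∈ Finset.range (k + 1), F (k, n) := Finset.sum_le_sum hterm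
    have htsum : ∑ n ∈ Finset.range (k + 1), F (k, n) ≤ ∑' n, F (k, n) :=
      Summable.sum_le_tsum _ (fun n _ => hF0 (k, n)) (hrow k)
    have hcard : ∑ n ∈ Finset.range (k + 1), (c * x ^ (-(β + α₁ * γ)))
        = x * (c * x ^ (-(β + α₁ * γ))) := by
      rw [Finset.sum_const, Finset.card_range, nsmul_eq_mul]
      norm_num [hx]
    have hxpow : x * (c * x ^ (-(β + α₁ * γ))) = c * x ^ (1 - β - α₁ * γ) := by
      rw [show (1 : ℝ) - β - α₁ * γ = 1 + -(β + α₁ * γ) by ring, Real.rpow_add hx0,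
        Real.rpow_one]
      ring
    linarith [hsumle, htsum, hcard ▸ hsumle]
  have := exponent_lt_of_summable hg hcpos (K := 0) (fun k _ => key k)
  linarith

set_option maxHeartbeats 1000000 in
lemma div2 (α₁ α₂ γ β : ℝ) (hβ : 0 < β) (hγ : 0 < γ) (h20 : 0 < α₂) (h21 : α₂ ≤ α₁)
    (hsum : Summable (fun p : ℕ × ℕ =>
        (((p.1 : ℝ) + 1) ^ β + ((p.2 : ℝ) + 1) ^ β)⁻¹ *
          ((((p.1 : ℝ) + 1) ^ α₁ + ((p.2 : ℝ) + 1) ^ α₂)⁻¹) ^ γ)) :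
    1 + α₂ / α₁ - α₂ * γ < β := by
  have h10 : 0 < α₁ := lt_of_lt_of_le h20 h21
  set F : ℕ × ℕ → ℝ := fun p =>
      (((p.1 : ℝ) + 1) ^ β + ((p.2 : ℝ) + 1) ^ β)⁻¹ *
        ((((p.1 : ℝ) + 1) ^ α₁ + ((p.2 : ℝ) + 1) ^ α₂)⁻¹) ^ γ with hF
  have hF0 : 0 ≤ F := fun p => by
    have : (0:ℝ) < ((p.1 : ℝ) + 1) := by positivity
    positivity
  obtain ⟨hrow, hg⟩ := (summable_prod_of_nonneg hF0).1 hsum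
  set a : ℝ := α₁ / α₂ with ha
  have ha1 : 1 ≤ a := (one_le_div h20).2 h21
  have haa : a * α₂ = α₁ := div_mul_cancel₀ _ h20.ne'
  set C : ℝ := 2 ^ (α₂⁻¹) with hC
  have hC1 : 1 < C := (Real.one_lt_rpow_iff_of_pos (by norm_num)).2
    (Or.inl ⟨by norm_num, inv_pos.2 h20⟩)
  have hCpow : C ^ α₂ = 2 := by
    rw [hC, ← Real.rpow_mul (by norm_num), inv_mul_cancel₀ h20.ne', Real.rpow_one]
  have hC0 : 0 < C := by linarith
  set c₂ : ℝ := (1 + C ^ β)⁻¹ * (3:ℝ) ^ (-γ) with hc₂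
  have hc₂pos : 0 < c₂ := by positivity
  set c₃ : ℝ := (C - 1) / 2 * c₂ with hc₃
  have hc₃pos : 0 < c₃ := by
    apply mul_pos _ hc₂pos
    linarith
  set K₀ : ℕ := ⌈4 / (C - 1)⌉₊ with hK₀
  have key : ∀ k : ℕ, K₀ ≤ k →
      c₃ * ((k : ℝ) + 1) ^ (a - a * β - α₁ * γ) ≤ ∑' n, F (k, n) := by
    intro k hk
    set X : ℝ := (k : ℝ) + 1 with hX
    have hX1 : (1:ℝ) ≤ X := by simp [hX]
    have hX0 : (0:ℝ) < X := by positivity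
    set x : ℝ := X ^ a with hx
    have hx1 : (1:ℝ) ≤ x := Real.one_le_rpow hX1 (by linarith)
    have hx0 : (0:ℝ) < x := by positivity
    have hXx : X ≤ x := by
      calc X = X ^ (1:ℝ) := (Real.rpow_one X).symm
        _ ≤ X ^ a := Real.rpow_le_rpow_of_exponent_le hX1 ha1
    have h4 : 4 ≤ (C - 1) * x := by
      have h5 : 4 / (C - 1) ≤ (K₀ : ℝ) := Nat.le_ceil _
      have h6 : (K₀ : ℝ) ≤ (k : ℝ) := Nat.cast_le.2 hk
      have h7 : 4 / (C - 1) ≤ x := by linarith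
      rw [div_le_iff₀ (by linarith : (0:ℝ) < C - 1)] at h7
      linarith [mul_comm x (C - 1)]
    have hceil1 : 1 ≤ ⌈x⌉₊ := Nat.one_le_ceil_iff.2 (by linarith)
    set n₀ : ℕ := ⌈x⌉₊ - 1 with hn₀
    have hn₀c : ((n₀ : ℝ)) + 1 = (⌈x⌉₊ : ℝ) := by
      rw [hn₀]
      push_cast [Nat.cast_sub hceil1]
      ring
    have hfloor : 2 ≤ ⌊(C - 1) * x⌋₊ := Nat.le_floor (by norm_num; linarith)
    set L : ℕ := ⌊(C - 1) * x⌋₊ - 2 with hL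
    have hLc : ((L : ℝ)) = (⌊(C - 1) * x⌋₊ : ℝ) - 2 := by
      rw [hL]; push_cast [Nat.cast_sub hfloor]; ring
    have hLy : (L : ℝ) ≤ (C - 1) * x - 2 := by
      rw [hLc]
      have := Nat.floor_le (by positivity : (0:ℝ) ≤ (C - 1) * x)
      linarith
    have hLy2 : (C - 1) * x / 2 ≤ (L : ℝ) + 1 := by
      rw [hLc]
      have := Nat.lt_floor_add_one ((C - 1) * x)
      linarith
    -- per-term bound on Icc n₀ (n₀ + L)
    have hterm : ∀ n ∈ Finset.Icc n₀ (n₀ + L), c₂ * X ^ (-(a * β) - α₁ * γ) ≤ F (k, n) := by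
      intro n hn
      obtain ⟨hn1, hn2⟩ := Finset.mem_Icc.1 hn
      set m : ℝ := (n : ℝ) + 1 with hm
      have hmlo : x ≤ m := by
        calc x ≤ (⌈x⌉₊ : ℝ) := Nat.le_ceil x
          _ = (n₀ : ℝ) + 1 := hn₀c.symm
          _ ≤ m := by rw [hm]; exact_mod_cast Nat.add_le_add_right hn1 1
      have hmhi : m ≤ C * x := by
        have h8 : (m : ℝ) ≤ (n₀ : ℝ) + (L : ℝ) + 1 := by
          rw [hm]
          push_cast
          have : (n : ℝ) ≤ (n₀ : ℝ) + (L : ℝ) := by exact_mod_cast Nat.cast_le.2 hn2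
          linarith
        have h9 : (⌈x⌉₊ : ℝ) < x + 1 := Nat.ceil_lt_add_one (by positivity)
        have : (n₀ : ℝ) + 1 < x + 1 := by rw [hn₀c]; exact h9
        calc m ≤ (n₀ : ℝ) + (L : ℝ) + 1 := h8
          _ ≤ (x + 1) + ((C - 1) * x - 2) := by linarith
          _ ≤ C * x := by ring_nf; linarith
      have hm0 : (0:ℝ) < m := by positivity
      -- denominators
      have hxa2 : x ^ α₂ = X ^ α₁ := by
        rw [hx, ← Real.rpow_mul hX0.le, haa]
      have hda : m ^ α₂ ≤ 2 * X ^ α₁ := by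
        calc m ^ α₂ ≤ (C * x) ^ α₂ := Real.rpow_le_rpow hm0.le hmhi h20.le
          _ = C ^ α₂ * x ^ α₂ := Real.mul_rpow hC0.le hx0.le
          _ = 2 * X ^ α₁ := by rw [hCpow, hxa2]
      have hd2 : X ^ α₁ + m ^ α₂ ≤ 3 * X ^ α₁ := by linarith
      have hd1 : X ^ β + m ^ β ≤ (1 + C ^ β) * X ^ (a * β) := by
        have e1 : X ^ β ≤ X ^ (a * β) := by
          apply Real.rpow_le_rpow_of_exponent_le hX1
          nlinarith
        have e2 : m ^ β ≤ C ^ β * X ^ (a * β) := by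
          calc m ^ β ≤ (C * x) ^ β := Real.rpow_le_rpow hm0.le hmhi hβ.le
            _ = C ^ β * x ^ β := Real.mul_rpow hC0.le hx0.le
            _ = C ^ β * X ^ (a * β) := by rw [hx, ← Real.rpow_mul hX0.le]
        linarith
      have e1 : (X ^ β + m ^ β)⁻¹ ≥ ((1 + C ^ β) * X ^ (a * β))⁻¹ :=
        inv_anti₀ (by positivity) hd1
      have e2 : ((X ^ α₁ + m ^ α₂)⁻¹) ^ γ ≥ ((3 * X ^ α₁)⁻¹) ^ γ := by
        apply Real.rpow_le_rpow (by positivity) _ hγ.le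
        exact inv_anti₀ (by positivity) hd2
      have eq1 : ((1 + C ^ β) * X ^ (a * β))⁻¹ * ((3 * X ^ α₁)⁻¹) ^ γ
          = c₂ * X ^ (-(a * β) - α₁ * γ) := by
        rw [Real.inv_rpow (by positivity), Real.mul_rpow (by norm_num) (by positivity),
          ← Real.rpow_mul hX0.le, hc₂, Real.rpow_neg (by norm_num : (0:ℝ) ≤ 3),
          show -(a * β) - α₁ * γ = -(a * β) + -(α₁ * γ) by ring,
          Real.rpow_add hX0, Real.rpow_neg hX0.le, Real.rpow_neg hX0.le,
          mul_inv, mul_inv]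
        ring
      have : F (k, n) = (X ^ β + m ^ β)⁻¹ * ((X ^ α₁ + m ^ α₂)⁻¹) ^ γ := rfl
      rw [this, ← eq1]
      exact mul_le_mul e1 e2 (by positivity) (by positivity)
    have hsumle : ∑ n ∈ Finset.Icc n₀ (n₀ + L), (c₂ * X ^ (-(a * β) - α₁ * γ))
        ≤ ∑ n ∈ Finset.Icc n₀ (n₀ + L), F (k, n) := Finset.sum_le_sum hterm
    have htsum : ∑ n ∈ Finset.Icc n₀ (n₀ + L), F (k, n) ≤ ∑' n, F (k, n) :=
      Summable.sum_le_tsum _ (fun n _ => hF0 (k, n)) (hrow k)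
    have hcard : ∑ n ∈ Finset.Icc n₀ (n₀ + L), (c₂ * X ^ (-(a * β) - α₁ * γ))
        = ((L : ℝ) + 1) * (c₂ * X ^ (-(a * β) - α₁ * γ)) := by
      rw [Finset.sum_const, Nat.card_Icc, show n₀ + L + 1 - n₀ = L + 1 by omega,
        nsmul_eq_mul]
      push_cast
      ring
    have hfinal : c₃ * X ^ (a - a * β - α₁ * γ)
        ≤ ((L : ℝ) + 1) * (c₂ * X ^ (-(a * β) - α₁ * γ)) := by
      have hcount : (C - 1) / 2 * x ≤ (L : ℝ) + 1 := by linarith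
      have hxX : x = X ^ a := hx
      have hsplit : X ^ (a - a * β - α₁ * γ) = X ^ a * X ^ (-(a * β) - α₁ * γ) := by
        rw [← Real.rpow_add hX0]; ring_nf
      rw [hc₃, hsplit]
      have hpow : (0:ℝ) < X ^ (-(a * β) - α₁ * γ) := Real.rpow_pos_of_pos hX0 _
      calc (C - 1) / 2 * c₂ * (X ^ a * X ^ (-(a * β) - α₁ * γ))
          = ((C - 1) / 2 * x) * (c₂ * X ^ (-(a * β) - α₁ * γ)) := by
            rw [hxX]
            try ring
        _ ≤ ((L : ℝ) + 1) * (c₂ * X ^ (-(a * β) - α₁ * γ)) := by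
            exact mul_le_mul_of_nonneg_right hcount (by positivity)
    linarith
  have hlt := exponent_lt_of_summable hg hc₃pos (K := K₀) key
  -- from a - a*β - α₁*γ < -1 deduce 1 + α₂/α₁ - α₂*γ < β
  have hmul : α₁ - α₁ * β - α₂ * (α₁ * γ) < -α₂ := by
    have := mul_lt_mul_of_pos_right hlt h20
    rw [ha] at this
    calc α₁ - α₁ * β - α₂ * (α₁ * γ)
        = (α₁ / α₂ - α₁ / α₂ * β - α₁ * γ) * α₂ := by field_simp; try ring
      _ < -1 * α₂ := this
      _ = -α₂ := by ring
  rw [show 1 + α₂ / α₁ - α₂ * γ = (α₁ + α₂ - α₁ * (α₂ * γ)) / α₁ by field_simp; try ring,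
    div_lt_iff₀ h10]
  nlinarith

lemma summ_main (α₁ α₂ γ β θ s : ℝ) (hβ : 0 ≤ β) (hγ : 0 ≤ γ)
    (hθ0 : 0 ≤ θ) (hθ1 : θ ≤ 1) (hs0 : 0 ≤ s) (hs1 : s ≤ 1)
    (h1 : 1 < θ * β + s * α₁ * γ) (h2 : 1 < (1 - θ) * β + (1 - s) * α₂ * γ) :
    Summable (fun p : ℕ × ℕ =>
        (((p.1 : ℝ) + 1) ^ β + ((p.2 : ℝ) + 1) ^ β)⁻¹ *
          ((((p.1 : ℝ) + 1) ^ α₁ + ((p.2 : ℝ) + 1) ^ α₂)⁻¹) ^ γ) := by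
  apply Summable.of_nonneg_of_le _ _ (summable_prod_rpow h1 h2)
  · intro p
    have h0 : (0:ℝ) < (p.1 : ℝ) + 1 := by positivity
    have h0' : (0:ℝ) < (p.2 : ℝ) + 1 := by positivity
    positivity
  · intro p
    have hk : (1:ℝ) ≤ (p.1 : ℝ) + 1 := by
      have : (0:ℝ) ≤ (p.1 : ℝ) := Nat.cast_nonneg _
      linarith
    have hn : (1:ℝ) ≤ (p.2 : ℝ) + 1 := by
      have : (0:ℝ) ≤ (p.2 : ℝ) := Nat.cast_nonneg _
      linarith
    exact term_bound β α₁ α₂ γ θ s _ _ hβ hγ hθ0 hθ1 hs0 hs1 hk hn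

theorem stmt1 (α₁ α₂ : ℝ) (h2 : 0 < α₂) (h21 : α₂ ≤ α₁) (h12 : α₁ ≤ 2)
    (hγ : 0 < 2 - 1 / α₁ - 1 / α₂) :
    sInf {β : ℝ | β ∈ Ioo (0 : ℝ) 2 ∧
        Summable (fun p : ℕ × ℕ =>
          (((p.1 : ℝ) + 1) ^ β + ((p.2 : ℝ) + 1) ^ β)⁻¹ *
            ((((p.1 : ℝ) + 1) ^ α₁ + ((p.2 : ℝ) + 1) ^ α₂)⁻¹) ^ (2 - 1 / α₁ - 1 / α₂))}
      = max (3 + α₁ / α₂ - 2 * α₁) (2 + 2 * α₂ / α₁ - 2 * α₂) := by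
  have h1 : 0 < α₁ := lt_of_lt_of_le h2 h21
  set γ : ℝ := 2 - 1 / α₁ - 1 / α₂ with hγdef
  set A : ℝ := 3 + α₁ / α₂ - 2 * α₁ with hAdef
  set B : ℝ := 2 + 2 * α₂ / α₁ - 2 * α₂ with hBdef
  clear_value γ A B
  have hd21 : 1 / α₁ ≤ 1 / α₂ := one_div_le_one_div_of_le h2 h21
  have h11 : 1 < α₁ := by
    have h1a : 1 / α₁ < 1 := by linarith
    rwa [div_lt_one h1] at h1a
  have hA : A = 2 - α₁ * γ := by
    rw [hAdef, hγdef]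
    field_simp
    ring
  have hB : B = 1 + α₂ / α₁ - α₂ * γ := by
    rw [hBdef, hγdef]
    field_simp
    ring
  have hhalf : (1:ℝ) / 2 ≤ 1 / α₁ := one_div_le_one_div_of_le h1 h12
  have hB0 : 0 ≤ B := by
    rw [hBdef]
    have e1 : α₂ * (1 / 2) ≤ α₂ * (1 / α₁) := by nlinarith
    have e2 : α₂ * (1 / α₁) = α₂ / α₁ := by ring
    nlinarith
  have hB2 : B < 2 := by
    rw [hBdef]
    have e3 : 2 * α₂ / α₁ < 2 * α₂ := by
      rw [div_lt_iff₀ h1]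
      nlinarith
    linarith
  have hA2 : A < 2 := by
    rw [hA]
    nlinarith [mul_pos h1 hγ]
  have hmax2 : max A B < 2 := max_lt hA2 hB2
  have hmax0 : 0 ≤ max A B := le_trans hB0 (le_max_right A B)
  have hset : {β : ℝ | β ∈ Ioo (0 : ℝ) 2 ∧
      Summable (fun p : ℕ × ℕ =>
        (((p.1 : ℝ) + 1) ^ β + ((p.2 : ℝ) + 1) ^ β)⁻¹ *
          ((((p.1 : ℝ) + 1) ^ α₁ + ((p.2 : ℝ) + 1) ^ α₂)⁻¹) ^ γ)} = Ioo (max A B) 2 := by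
    ext β
    simp only [mem_setOf_eq, mem_Ioo]
    constructor
    · rintro ⟨⟨hb0, hb2⟩, hsum⟩
      refine ⟨max_lt ?_ ?_, hb2⟩
      · rw [hA]
        exact div1 α₁ α₂ γ β hb0 hγ h2.le h21 hsum
      · rw [hB]
        exact div2 α₁ α₂ γ β hb0 hγ h2 h21 hsum
    · rintro ⟨hb1, hb2⟩
      have hb0 : 0 < β := lt_of_le_of_lt hmax0 hb1
      refine ⟨⟨hb0, hb2⟩, ?_⟩
      rcases le_or_gt (α₁ * γ) 1 with hcase | hcase
      · -- use s = 1, θ = (1 - α₁γ + ε)/β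
        have hAβ : A < β := lt_of_le_of_lt (le_max_left A B) hb1
        rw [hA] at hAβ
        set ε : ℝ := (β - (2 - α₁ * γ)) / 2 with hε
        clear_value ε
        have hεpos : 0 < ε := by rw [hε]; linarith
        set θ : ℝ := (1 - α₁ * γ + ε) / β with hθ
        clear_value θ
        have hnum : 0 ≤ 1 - α₁ * γ + ε := by linarith
        have hθ0 : 0 ≤ θ := by rw [hθ]; exact div_nonneg hnum hb0.le
        have hθ1 : θ ≤ 1 := by
          rw [hθ, div_le_one hb0]
          linarith
        have hθβ : θ * β = 1 - α₁ * γ + ε := by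
          rw [hθ]; exact div_mul_cancel₀ _ hb0.ne'
        apply summ_main α₁ α₂ γ β θ 1 hb0.le hγ.le hθ0 hθ1 zero_le_one le_rfl
        · rw [hθβ]; linarith [one_mul (α₁ * γ), mul_assoc (1:ℝ) α₁ γ]
        · have : (1 - θ) * β = β - θ * β := by ring
          rw [this, hθβ]
          have h0 : (1 - (1:ℝ)) * α₂ * γ = 0 := by ring
          rw [h0]
          linarith
      · -- use s = (α₁γ)⁻¹, θ = (β - B)/(2β)
        have hBβ : B < β := lt_of_le_of_lt (le_max_right A B) hb1
        have hγ0 : 0 < α₁ * γ := by linarith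
        set s : ℝ := (α₁ * γ)⁻¹ with hs
        clear_value s
        have hs0 : 0 ≤ s := by rw [hs]; positivity
        have hs1 : s ≤ 1 := by
          rw [hs]
          exact inv_le_one_of_one_le₀ hcase.le
        have hsval : s * α₁ * γ = 1 := by
          rw [hs, mul_assoc]
          exact inv_mul_cancel₀ hγ0.ne'
        have hsval2 : (1 - s) * α₂ * γ = α₂ * γ - α₂ / α₁ := by
          rw [hs]
          have hγne : γ ≠ 0 := by
            intro h
            rw [h, mul_zero] at hγ0
            exact lt_irrefl 0 hγ0
          field_simp
        set θ : ℝ := (β - B) / (2 * β) with hθ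
        clear_value θ
        have hθ0 : 0 ≤ θ := by
          rw [hθ]; exact div_nonneg (by linarith) (by linarith)
        have hθ1 : θ ≤ 1 := by
          rw [hθ, div_le_one (by linarith : (0:ℝ) < 2 * β)]
          linarith
        have hθβ : θ * β = (β - B) / 2 := by
          rw [hθ]
          field_simp
        apply summ_main α₁ α₂ γ β θ s hb0.le hγ.le hθ0 hθ1 hs0 hs1
        · rw [show θ * β + s * α₁ * γ = θ * β + s * α₁ * γ from rfl, hsval, hθβ]
          linarith
        · have e : (1 - θ) * β = β - θ * β := by ring
          rw [e, hθβ, hsval2]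
          linarith [hB, hBβ]
    
  rw [hset]
  exact csInf_Ioo hmax2
end

section
/- Let $0 < \alpha_3 \leq \alpha_2 \leq \alpha_1 \leq 2$ with $\gamma := 2 - 1/\alpha_1 - 1/\alpha_2 - 1/\alpha_3 > 0$. Then the infimum of the set of $\beta \in (0,3)$ such that $\sum_{k,n,m \geq 1} \frac{(k^{\alpha_1} + n^{\alpha_2} + m^{\alpha_3})^{-\gamma}}{k^{\beta} + n^{\beta} + m^{\beta}} < \infty$ equals $4 + \alpha_1/\alpha_2 + \alpha_1/\alpha_3 - 2\alpha_1$. -/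
open Set Real

lemma tri_bound {K N M a b c w₁ w₂ w₃ : ℝ} (hK : 0 ≤ K) (hN : 0 ≤ N) (hM : 0 ≤ M)
    (hw₁ : 0 ≤ w₁) (hw₂ : 0 ≤ w₂) (hw₃ : 0 ≤ w₃) (hw : w₁ + w₂ + w₃ = 1) :
    K ^ (a * w₁) * N ^ (b * w₂) * M ^ (c * w₃) ≤ K ^ a + N ^ b + M ^ c := by
  have hA : (0:ℝ) ≤ K ^ a := Real.rpow_nonneg hK a
  have hB : (0:ℝ) ≤ N ^ b := Real.rpow_nonneg hN b
  have hC : (0:ℝ) ≤ M ^ c := Real.rpow_nonneg hM c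
  have h := Real.geom_mean_le_arith_mean3_weighted hw₁ hw₂ hw₃ hA hB hC hw
  calc K ^ (a*w₁) * N ^ (b*w₂) * M ^ (c*w₃) = (K^a)^w₁ * (N^b)^w₂ * (M^c)^w₃ := by
        rw [← Real.rpow_mul hK, ← Real.rpow_mul hN, ← Real.rpow_mul hM]
    _ ≤ w₁ * K^a + w₂ * N^b + w₃ * M^c := h
    _ ≤ K^a + N^b + M^c := by
        nlinarith [mul_nonneg (by linarith : (0:ℝ) ≤ 1 - w₁) hA,
          mul_nonneg (by linarith : (0:ℝ) ≤ 1 - w₂) hB,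
          mul_nonneg (by linarith : (0:ℝ) ≤ 1 - w₃) hC]

lemma summable_shift {q : ℝ} (hq : 1 < q) : Summable (fun n : ℕ => ((n:ℝ)+1) ^ (-q)) := by
  have h0 : Summable (fun n : ℕ => (n:ℝ) ^ (-q)) := Real.summable_nat_rpow.mpr (by linarith)
  have h1 : Summable (fun n : ℕ => ((n+1 : ℕ):ℝ) ^ (-q)) := (summable_nat_add_iff 1).mpr h0
  have : (fun n : ℕ => ((n+1 : ℕ):ℝ) ^ (-q)) = (fun n : ℕ => ((n:ℝ)+1) ^ (-q)) := by
    funext n; push_cast; ring_nf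
  rwa [this] at h1

set_option maxHeartbeats 1000000 in
lemma key_summable (α₁ α₂ α₃ β : ℝ) (h3 : 0 < α₃) (h32 : α₃ ≤ α₂) (h21 : α₂ ≤ α₁)
    (h12 : α₁ ≤ 2) (hγ : 0 < 2 - 1 / α₁ - 1 / α₂ - 1 / α₃)
    (hβl : 3 - α₁ * (2 - 1 / α₁ - 1 / α₂ - 1 / α₃) < β) (hβ3 : β < 3) :
    Summable (fun p : ℕ × ℕ × ℕ =>
      (((p.1 : ℝ) + 1) ^ α₁ + ((p.2.1 : ℝ) + 1) ^ α₂ + ((p.2.2 : ℝ) + 1) ^ α₃)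
          ^ (-(2 - 1 / α₁ - 1 / α₂ - 1 / α₃)) /
        (((p.1 : ℝ) + 1) ^ β + ((p.2.1 : ℝ) + 1) ^ β + ((p.2.2 : ℝ) + 1) ^ β)) := by
  set γ := 2 - 1/α₁ - 1/α₂ - 1/α₃ with hγdef
  have hα2 : 0 < α₂ := lt_of_lt_of_le h3 h32
  have hα1 : 0 < α₁ := lt_of_lt_of_le hα2 h21
  have hg : 0 < α₁ * γ := mul_pos hα1 hγ
  have e1 : α₁ * (1/α₁) = 1 := by field_simp
  have e2 : 1 ≤ α₁ * (1/α₂) := by rw [mul_one_div]; exact (one_le_div hα2).mpr h21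
  have e3 : 1 ≤ α₁ * (1/α₃) := by
    rw [mul_one_div]; exact (one_le_div h3).mpr (le_trans h32 h21)
  have hexp : α₁ * γ = 2*α₁ - α₁*(1/α₁) - α₁*(1/α₂) - α₁*(1/α₃) := by rw [hγdef]; ring
  have hg1 : α₁ * γ ≤ 1 := by rw [hexp]; linarith
  have hβ2 : 2 < β := by linarith
  set r := (3-β)/(α₁*γ) with hrdef
  have hr0 : 0 < r := div_pos (by linarith) hg
  have hr1 : r < 1 := (div_lt_one hg).mpr (by linarith)
  set θ₁ := (r+1)/2 with hθ₁def
  set θ₂ := (1-θ₁)/2 with hθ₂def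
  have hθ₁r : r < θ₁ := by rw [hθ₁def]; linarith
  have hθ₁1 : θ₁ < 1 := by rw [hθ₁def]; linarith
  have hθ₁0 : 0 < θ₁ := by rw [hθ₁def]; linarith
  have hθ₂0 : 0 < θ₂ := by rw [hθ₂def]; linarith
  have hsumθ : θ₁ + θ₂ + θ₂ = 1 := by rw [hθ₂def]; ring
  set q₁ := α₁*θ₁*γ + (β-2) with hq₁def
  set q₂ := α₂*θ₂*γ + 1 with hq₂def
  set q₃ := α₃*θ₂*γ + 1 with hq₃def
  have hrg : α₁ * r * γ = 3 - β := by rw [hrdef]; field_simp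
  have hq₁ : 1 < q₁ := by
    have : α₁*γ*(θ₁ - r) > 0 := mul_pos hg (by linarith)
    rw [hq₁def]; nlinarith
  have hq₂ : 1 < q₂ := by
    have : 0 < α₂*θ₂*γ := mul_pos (mul_pos hα2 hθ₂0) hγ
    rw [hq₂def]; linarith
  have hq₃ : 1 < q₃ := by
    have : 0 < α₃*θ₂*γ := mul_pos (mul_pos h3 hθ₂0) hγ
    rw [hq₃def]; linarith
  have S1 := summable_shift hq₁
  have S23 : Summable (fun w : ℕ×ℕ => ((w.1:ℝ)+1)^(-q₂) * ((w.2:ℝ)+1)^(-q₃)) :=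
    (summable_shift hq₂).mul_of_nonneg (summable_shift hq₃)
      (fun n => Real.rpow_nonneg (by positivity) _)
      (fun n => Real.rpow_nonneg (by positivity) _)
  have SG : Summable (fun p : ℕ×ℕ×ℕ =>
      ((p.1:ℝ)+1)^(-q₁) * (((p.2.1:ℝ)+1)^(-q₂) * ((p.2.2:ℝ)+1)^(-q₃))) :=
    S1.mul_of_nonneg S23 (fun n => Real.rpow_nonneg (by positivity) _)
      (fun w => mul_nonneg (Real.rpow_nonneg (by positivity) _)
        (Real.rpow_nonneg (by positivity) _))
  apply Summable.of_nonneg_of_le (fun p => by positivity) _ SG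
  intro p
  set K : ℝ := (p.1:ℝ)+1 with hKdef
  set N : ℝ := (p.2.1:ℝ)+1 with hNdef
  set M : ℝ := (p.2.2:ℝ)+1 with hMdef
  have hK0 : (0:ℝ) < K := by positivity
  have hN0 : (0:ℝ) < N := by positivity
  have hM0 : (0:ℝ) < M := by positivity
  -- numerator bound
  have hnum : K^(α₁*θ₁) * N^(α₂*θ₂) * M^(α₃*θ₂) ≤ K^α₁ + N^α₂ + M^α₃ :=
    tri_bound hK0.le hN0.le hM0.le hθ₁0.le hθ₂0.le hθ₂0.le hsumθ
  have hP : (0:ℝ) < K^(α₁*θ₁) * N^(α₂*θ₂) * M^(α₃*θ₂) := by positivity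
  have h1 : (K^α₁ + N^α₂ + M^α₃)^(-γ) ≤ (K^(α₁*θ₁)*N^(α₂*θ₂)*M^(α₃*θ₂))^(-γ) :=
    Real.rpow_le_rpow_of_nonpos hP hnum (by linarith)
  -- denominator bound
  have hβ0 : β ≠ 0 := by linarith
  have hw1 : (0:ℝ) ≤ (β-2)/β := div_nonneg (by linarith) (by linarith)
  have hw2 : (0:ℝ) ≤ 1/β := by positivity
  have hwsum : (β-2)/β + 1/β + 1/β = 1 := by field_simp; ring
  have hden := tri_bound (a := β) (b := β) (c := β)
    hK0.le hN0.le hM0.le hw1 hw2 hw2 hwsum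
  rw [show β*((β-2)/β) = β - 2 by field_simp, show β*(1/β) = 1 by field_simp] at hden
  have hDb : (0:ℝ) < K^(β-2) * N^(1:ℝ) * M^(1:ℝ) := by positivity
  have step : (K^α₁ + N^α₂ + M^α₃)^(-γ) / (K^β + N^β + M^β)
      ≤ (K^(α₁*θ₁)*N^(α₂*θ₂)*M^(α₃*θ₂))^(-γ) / (K^(β-2) * N^(1:ℝ) * M^(1:ℝ)) :=
    div_le_div₀ (Real.rpow_nonneg hP.le _) h1 hDb hden
  refine le_trans step (le_of_eq ?_)
  have expand : (K^(α₁*θ₁)*N^(α₂*θ₂)*M^(α₃*θ₂))^(-γ)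
      = K^((α₁*θ₁)*(-γ)) * N^((α₂*θ₂)*(-γ)) * M^((α₃*θ₂)*(-γ)) := by
    rw [Real.mul_rpow (by positivity) (by positivity),
        Real.mul_rpow (by positivity) (by positivity),
        ← Real.rpow_mul hK0.le, ← Real.rpow_mul hN0.le, ← Real.rpow_mul hM0.le]
  have eK : K^((α₁*θ₁)*(-γ)) / K^(β-2) = K^(-q₁) := by
    rw [← Real.rpow_sub hK0]; congr 1; rw [hq₁def]; ring
  have eN : N^((α₂*θ₂)*(-γ)) / N^(1:ℝ) = N^(-q₂) := by
    rw [← Real.rpow_sub hN0]; congr 1; rw [hq₂def]; ring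
  have eM : M^((α₃*θ₂)*(-γ)) / M^(1:ℝ) = M^(-q₃) := by
    rw [← Real.rpow_sub hM0]; congr 1; rw [hq₃def]; ring
  rw [expand, ← eK, ← eN, ← eM]; ring


lemma not_summable_one_div_succ : ¬ Summable (fun n : ℕ => 1/((n:ℝ)+1)) := by
  intro h
  have : Summable (fun n : ℕ => 1/((n+1:ℕ):ℝ)) := by
    convert h using 2 with n; push_cast; ring
  exact Real.not_summable_one_div_natCast ((summable_nat_add_iff 1).mp this)

set_option maxHeartbeats 1000000 in
lemma key_not_summable (α₁ α₂ α₃ β : ℝ) (h3 : 0 < α₃) (h32 : α₃ ≤ α₂) (h21 : α₂ ≤ α₁)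
    (hγ : 0 < 2 - 1 / α₁ - 1 / α₂ - 1 / α₃) (hβ0 : 0 < β)
    (hβl : β ≤ 3 - α₁ * (2 - 1 / α₁ - 1 / α₂ - 1 / α₃)) :
    ¬ Summable (fun p : ℕ × ℕ × ℕ =>
      (((p.1 : ℝ) + 1) ^ α₁ + ((p.2.1 : ℝ) + 1) ^ α₂ + ((p.2.2 : ℝ) + 1) ^ α₃)
          ^ (-(2 - 1 / α₁ - 1 / α₂ - 1 / α₃)) /
        (((p.1 : ℝ) + 1) ^ β + ((p.2.1 : ℝ) + 1) ^ β + ((p.2.2 : ℝ) + 1) ^ β)) := by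
  intro hs
  set γ := 2 - 1/α₁ - 1/α₂ - 1/α₃ with hγdef
  have hα2 : 0 < α₂ := lt_of_lt_of_le h3 h32
  have hα1 : 0 < α₁ := lt_of_lt_of_le hα2 h21
  set F := (fun p : ℕ × ℕ × ℕ =>
      (((p.1 : ℝ) + 1) ^ α₁ + ((p.2.1 : ℝ) + 1) ^ α₂ + ((p.2.2 : ℝ) + 1) ^ α₃) ^ (-γ) /
        (((p.1 : ℝ) + 1) ^ β + ((p.2.1 : ℝ) + 1) ^ β + ((p.2.2 : ℝ) + 1) ^ β)) with hFdef
  have hFnn : ∀ p : ℕ × ℕ × ℕ, 0 ≤ F p := fun p => by rw [hFdef]; positivity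
  set c := (3:ℝ)^(-γ)/3 with hcdef
  have hc : 0 < c := by positivity
  set T : ℕ → Finset (ℕ×ℕ×ℕ) :=
    fun i => Finset.range (i+1) ×ˢ (Finset.range (i+1) ×ˢ {i}) with hTdef
  have hmemT : ∀ i (p : ℕ×ℕ×ℕ), p ∈ T i ↔ (p.1 < i+1 ∧ p.2.1 < i+1 ∧ p.2.2 = i) := by
    intro i p
    simp only [hTdef, Finset.mem_product, Finset.mem_range, Finset.mem_singleton]
  -- pointwise lower bound on T i
  have hlow : ∀ i (p : ℕ×ℕ×ℕ), p ∈ T i → c * ((i:ℝ)+1)^(-(3:ℝ)) ≤ F p := by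
    intro i p hp
    rw [hmemT] at hp
    obtain ⟨hk, hn, hm⟩ := hp
    set I : ℝ := (i:ℝ)+1 with hIdef
    have hI1 : (1:ℝ) ≤ I := by
      rw [hIdef]; have : (0:ℝ) ≤ (i:ℝ) := Nat.cast_nonneg _; linarith
    have hI0 : (0:ℝ) < I := by linarith
    set K : ℝ := (p.1:ℝ)+1 with hKdef
    set N : ℝ := (p.2.1:ℝ)+1 with hNdef
    set M : ℝ := (p.2.2:ℝ)+1 with hMdef
    have hK0 : (0:ℝ) < K := by positivity
    have hN0 : (0:ℝ) < N := by positivity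
    have hM0 : (0:ℝ) < M := by positivity
    have hKI : K ≤ I := by
      rw [hKdef, hIdef]
      have : (p.1:ℝ) ≤ (i:ℝ) := by exact_mod_cast Nat.lt_succ_iff.mp hk
      linarith
    have hNI : N ≤ I := by
      rw [hNdef, hIdef]
      have : (p.2.1:ℝ) ≤ (i:ℝ) := by exact_mod_cast Nat.lt_succ_iff.mp hn
      linarith
    have hMI : M = I := by rw [hMdef, hIdef, hm]
    -- numerator
    have hnum_ub : K^α₁ + N^α₂ + M^α₃ ≤ 3 * I^α₁ := by
      have b1 : K^α₁ ≤ I^α₁ := Real.rpow_le_rpow hK0.le hKI hα1.le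
      have b2 : N^α₂ ≤ I^α₂ := Real.rpow_le_rpow hN0.le hNI hα2.le
      have b2' : I^α₂ ≤ I^α₁ := Real.rpow_le_rpow_of_exponent_le hI1 h21
      have b3 : M^α₃ ≤ I^α₃ := by rw [hMI]
      have b3' : I^α₃ ≤ I^α₁ := Real.rpow_le_rpow_of_exponent_le hI1 (le_trans h32 h21)
      linarith
    have hnumpos : (0:ℝ) < K^α₁ + N^α₂ + M^α₃ := by positivity
    have hnum_lb : (3 * I^α₁)^(-γ) ≤ (K^α₁ + N^α₂ + M^α₃)^(-γ) :=
      Real.rpow_le_rpow_of_nonpos hnumpos hnum_ub (by linarith)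
    -- denominator
    have hden_ub : K^β + N^β + M^β ≤ 3 * I^β := by
      have b1 : K^β ≤ I^β := Real.rpow_le_rpow hK0.le hKI hβ0.le
      have b2 : N^β ≤ I^β := Real.rpow_le_rpow hN0.le hNI hβ0.le
      have b3 : M^β ≤ I^β := by rw [hMI]
      linarith
    have hdenpos : (0:ℝ) < K^β + N^β + M^β := by positivity
    have step : (3 * I^α₁)^(-γ) / (3 * I^β)
        ≤ (K^α₁ + N^α₂ + M^α₃)^(-γ) / (K^β + N^β + M^β) :=
      div_le_div₀ (Real.rpow_nonneg hnumpos.le _) hnum_lb hdenpos hden_ub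
    refine le_trans ?_ step
    have expand : (3 * I^α₁)^(-γ) / (3 * I^β) = c * I^(α₁*(-γ) - β) := by
      rw [Real.mul_rpow (by norm_num) (Real.rpow_nonneg hI0.le _),
        ← Real.rpow_mul hI0.le, Real.rpow_sub hI0, hcdef]
      ring
    rw [expand]
    have hexpβ : -(3:ℝ) ≤ α₁*(-γ) - β := by
      have : α₁*(-γ) = -(α₁*γ) := by ring
      rw [this]; linarith
    exact mul_le_mul_of_nonneg_left (Real.rpow_le_rpow_of_exponent_le hI1 hexpβ) hc.le
  -- counting
  have hcount : ∀ i : ℕ, c/((i:ℝ)+1) ≤ ∑ p ∈ T i, F p := by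
    intro i
    have hcard : (T i).card = (i+1)*(i+1) := by
      simp [hTdef]
    have h1 : (T i).card • (c * ((i:ℝ)+1)^(-(3:ℝ))) ≤ ∑ p ∈ T i, F p :=
      Finset.card_nsmul_le_sum (T i) _ _ (fun p hp => hlow i p hp)
    rw [hcard] at h1
    refine le_trans (le_of_eq ?_) h1
    rw [nsmul_eq_mul]
    push_cast
    set I : ℝ := (i:ℝ)+1 with hIdef
    have hI0 : (0:ℝ) < I := by positivity
    have : ((i:ℝ)+1)*((i:ℝ)+1) = I^(2:ℝ) := by
      rw [show (2:ℝ) = ((2:ℕ):ℝ) by norm_num, Real.rpow_natCast]; ring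
    rw [this, mul_comm (I^(2:ℝ)), mul_assoc, ← Real.rpow_add hI0]
    norm_num
    rw [Real.rpow_neg_one]
    ring
  -- partial sums of harmonic-type series bounded
  have key : ∀ n : ℕ, ∑ i ∈ Finset.range n, c/((i:ℝ)+1) ≤ ∑' p, F p := by
    intro n
    have hdisj : ∀ i ∈ (Finset.range n : Finset ℕ), ∀ j ∈ (Finset.range n : Finset ℕ),
        i ≠ j → Disjoint (T i) (T j) := by
      intro i _ j _ hij
      rw [Finset.disjoint_left]
      intro p hpi hpj
      rw [hmemT] at hpi hpj
      exact hij (hpi.2.2 ▸ hpj.2.2 ▸ rfl)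
    calc ∑ i ∈ Finset.range n, c/((i:ℝ)+1) ≤ ∑ i ∈ Finset.range n, ∑ p ∈ T i, F p :=
          Finset.sum_le_sum (fun i _ => hcount i)
      _ = ∑ p ∈ (Finset.range n).biUnion T, F p := (Finset.sum_biUnion hdisj).symm
      _ ≤ ∑' p, F p := Summable.sum_le_tsum _ (fun p _ => hFnn p) hs
  have hsum2 : Summable (fun i : ℕ => c/((i:ℝ)+1)) :=
    summable_of_sum_range_le (fun n => by positivity) key
  have hsum3 : Summable (fun i : ℕ => 1/((i:ℝ)+1)) := by
    have h := hsum2.mul_left c⁻¹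
    have : (fun i : ℕ => c⁻¹ * (c/((i:ℝ)+1))) = (fun i : ℕ => 1/((i:ℝ)+1)) := by
      funext i
      field_simp
    rwa [this] at h
  exact not_summable_one_div_succ hsum3


theorem stmt2 (α₁ α₂ α₃ : ℝ) (h3 : 0 < α₃) (h32 : α₃ ≤ α₂) (h21 : α₂ ≤ α₁) (h12 : α₁ ≤ 2)
    (hγ : 0 < 2 - 1 / α₁ - 1 / α₂ - 1 / α₃) :
    sInf {β : ℝ | β ∈ Ioo (0 : ℝ) 3 ∧
        Summable (fun p : ℕ × ℕ × ℕ =>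
          (((p.1 : ℝ) + 1) ^ α₁ + ((p.2.1 : ℝ) + 1) ^ α₂ + ((p.2.2 : ℝ) + 1) ^ α₃)
              ^ (-(2 - 1 / α₁ - 1 / α₂ - 1 / α₃)) /
            (((p.1 : ℝ) + 1) ^ β + ((p.2.1 : ℝ) + 1) ^ β + ((p.2.2 : ℝ) + 1) ^ β))}
      = 4 + α₁ / α₂ + α₁ / α₃ - 2 * α₁ := by
  have hα2 : 0 < α₂ := lt_of_lt_of_le h3 h32
  have hα1 : 0 < α₁ := lt_of_lt_of_le hα2 h21
  have hg : 0 < α₁ * (2 - 1 / α₁ - 1 / α₂ - 1 / α₃) := mul_pos hα1 hγ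
  have e1 : α₁ * (1/α₁) = 1 := by field_simp
  have e2 : 1 ≤ α₁ * (1/α₂) := by rw [mul_one_div]; exact (one_le_div hα2).mpr h21
  have e3 : 1 ≤ α₁ * (1/α₃) := by
    rw [mul_one_div]; exact (one_le_div h3).mpr (le_trans h32 h21)
  have hexp : α₁ * (2 - 1 / α₁ - 1 / α₂ - 1 / α₃)
      = 2*α₁ - α₁*(1/α₁) - α₁*(1/α₂) - α₁*(1/α₃) := by ring
  have hg1 : α₁ * (2 - 1 / α₁ - 1 / α₂ - 1 / α₃) ≤ 1 := by rw [hexp]; linarith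
  have hset : {β : ℝ | β ∈ Ioo (0 : ℝ) 3 ∧
        Summable (fun p : ℕ × ℕ × ℕ =>
          (((p.1 : ℝ) + 1) ^ α₁ + ((p.2.1 : ℝ) + 1) ^ α₂ + ((p.2.2 : ℝ) + 1) ^ α₃)
              ^ (-(2 - 1 / α₁ - 1 / α₂ - 1 / α₃)) /
            (((p.1 : ℝ) + 1) ^ β + ((p.2.1 : ℝ) + 1) ^ β + ((p.2.2 : ℝ) + 1) ^ β))}
      = Ioo (3 - α₁ * (2 - 1 / α₁ - 1 / α₂ - 1 / α₃)) 3 := by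
    ext β
    simp only [mem_setOf_eq, mem_Ioo]
    constructor
    · rintro ⟨⟨hβ0, hβ3⟩, hsum⟩
      refine ⟨?_, hβ3⟩
      by_contra hcon
      push_neg at hcon
      exact key_not_summable α₁ α₂ α₃ β h3 h32 h21 hγ hβ0 hcon hsum
    · rintro ⟨hβl, hβ3⟩
      exact ⟨⟨by linarith, hβ3⟩, key_summable α₁ α₂ α₃ β h3 h32 h21 h12 hγ hβl hβ3⟩
  rw [hset, csInf_Ioo (by linarith : 3 - α₁ * (2 - 1 / α₁ - 1 / α₂ - 1 / α₃) < 3)]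
  field_simp
  ring
end

section
/- The improper integral $\int_1^{\infty}\int_1^{\infty} \left(x + y\ln\sqrt{x^2+y^2}\right)^{-2}\, dy\, dx$ diverges (is infinite). -/
open Set MeasureTheory Real

lemma exp5_ge : (64 : ℝ) ≤ Real.exp 5 := by
  have h : (5/2 : ℝ) ≤ Real.exp 1 := by
    have := Real.exp_one_gt_d9; linarith
  have h2 : ((5:ℝ)/2) ^ 5 ≤ (Real.exp 1) ^ 5 := pow_le_pow_left₀ (by norm_num) h 5
  have h3 : Real.exp 5 = (Real.exp 1) ^ 5 := by
    rw [← Real.exp_nat_mul]; norm_num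
  rw [h3]; nlinarith

lemma log_le_quarter {x : ℝ} (hx : Real.exp 5 ≤ x) : 4 * Real.log x ≤ x := by
  have hx64 : (64 : ℝ) ≤ x := le_trans exp5_ge hx
  have hxpos : (0:ℝ) < x := by linarith
  have hs : Real.log x = 2 * Real.log (Real.sqrt x) := by
    rw [Real.log_sqrt hxpos.le]; ring
  have h1 : Real.log (Real.sqrt x) ≤ Real.sqrt x - 1 :=
    Real.log_le_sub_one_of_pos (Real.sqrt_pos.2 hxpos)
  have h2 : Real.sqrt x ≤ x / 8 := by
    rw [show x/8 = Real.sqrt ((x/8)^2) from (Real.sqrt_sq (by positivity)).symm]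
    apply Real.sqrt_le_sqrt
    nlinarith
  nlinarith

lemma log_ge_five {x : ℝ} (hx : Real.exp 5 ≤ x) : (5:ℝ) ≤ Real.log x := by
  have := Real.log_le_log (Real.exp_pos 5) hx
  rwa [Real.log_exp] at this

lemma point_bound {x y : ℝ} (hx : Real.exp 5 ≤ x)
    (hy : y ∈ Icc 1 (x / (2 * Real.log x))) :
    ENNReal.ofReal (1 / (2*x)^2)
      ≤ ENNReal.ofReal (1 / (x + y * Real.log (Real.sqrt (x ^ 2 + y ^ 2))) ^ 2) := by
  have hL : (5:ℝ) ≤ Real.log x := log_ge_five hx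
  have hx64 : (64:ℝ) ≤ x := le_trans exp5_ge hx
  obtain ⟨hy1, hy2⟩ := hy
  have hyx : y ≤ x := le_trans hy2 (by
    rw [div_le_iff₀ (by linarith)]
    nlinarith)
  have hlog_ub : Real.log (Real.sqrt (x ^ 2 + y ^ 2)) ≤ 2 * Real.log x := by
    have h1 : Real.sqrt (x ^ 2 + y ^ 2) ≤ x ^ 2 := by
      have := Real.sqrt_le_sqrt (show x ^ 2 + y ^ 2 ≤ (x^2)^2 by nlinarith [pow_le_pow_left₀ (show (0:ℝ) ≤ y by linarith) hyx 2, sq_nonneg (x^2 - 2), sq_nonneg x])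
      rwa [Real.sqrt_sq (by positivity)] at this
    calc Real.log (Real.sqrt (x ^ 2 + y ^ 2)) ≤ Real.log (x ^ 2) :=
          Real.log_le_log (Real.sqrt_pos.2 (by nlinarith)) h1
      _ = 2 * Real.log x := by
          rw [Real.log_pow]; norm_num
  have hlog_nn : 0 ≤ Real.log (Real.sqrt (x ^ 2 + y ^ 2)) := by
    apply Real.log_nonneg
    rw [show (1:ℝ) = Real.sqrt 1 from (Real.sqrt_one).symm]
    apply Real.sqrt_le_sqrt; nlinarith
  have hd_ub : x + y * Real.log (Real.sqrt (x ^ 2 + y ^ 2)) ≤ 2 * x := by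
    have : y * Real.log (Real.sqrt (x ^ 2 + y ^ 2)) ≤ (x / (2 * Real.log x)) * (2 * Real.log x) :=
      mul_le_mul hy2 hlog_ub hlog_nn (by positivity)
    rw [div_mul_cancel₀] at this
    · linarith
    · positivity
  have hd_pos : 0 < x + y * Real.log (Real.sqrt (x ^ 2 + y ^ 2)) := by nlinarith
  apply ENNReal.ofReal_le_ofReal
  apply one_div_le_one_div_of_le (by positivity)
  apply pow_le_pow_left₀ hd_pos.le hd_ub

lemma inner_bound {x : ℝ} (hx : Real.exp 5 ≤ x) :
    ENNReal.ofReal (1 / (16 * x * Real.log x))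
      ≤ ∫⁻ y in Ici (1:ℝ),
          ENNReal.ofReal (1 / (x + y * Real.log (Real.sqrt (x ^ 2 + y ^ 2))) ^ 2) := by
  have hL : (5:ℝ) ≤ Real.log x := log_ge_five hx
  have hx64 : (64:ℝ) ≤ x := le_trans exp5_ge hx
  have h4L : 4 * Real.log x ≤ x := log_le_quarter hx
  set c : ℝ := x / (2 * Real.log x) with hc
  have hc2 : (2:ℝ) ≤ c := by
    rw [hc, le_div_iff₀ (by positivity)]; linarith
  calc ENNReal.ofReal (1 / (16 * x * Real.log x))
      ≤ ENNReal.ofReal (1 / (2*x)^2 * (c - 1)) := by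
        apply ENNReal.ofReal_le_ofReal
        rw [div_mul_eq_mul_div, one_mul, div_le_div_iff₀ (by positivity) (by positivity)]
        have key : x ≤ (c - 1) * (4 * Real.log x) := by
          have heq : (c - 1) * (4 * Real.log x) = 2*x - 4*Real.log x := by
            rw [hc]; field_simp; ring
          rw [heq]; linarith
        nlinarith [mul_le_mul_of_nonneg_left key (show (0:ℝ) ≤ 4*x by linarith)]
    _ = ENNReal.ofReal (1 / (2*x)^2) * volume (Icc (1:ℝ) c) := by
        rw [Real.volume_Icc, ENNReal.ofReal_mul (by positivity)]
    _ = ∫⁻ y in Icc (1:ℝ) c, ENNReal.ofReal (1 / (2*x)^2) := (setLIntegral_const _ _).symm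
    _ ≤ ∫⁻ y in Icc (1:ℝ) c,
          ENNReal.ofReal (1 / (x + y * Real.log (Real.sqrt (x ^ 2 + y ^ 2))) ^ 2) := by
        apply lintegral_mono_ae
        filter_upwards [ae_restrict_mem measurableSet_Icc] with y hy
        exact point_bound hx hy
    _ ≤ ∫⁻ y in Ici (1:ℝ),
          ENNReal.ofReal (1 / (x + y * Real.log (Real.sqrt (x ^ 2 + y ^ 2))) ^ 2) :=
        lintegral_mono_set Icc_subset_Ici_self

lemma outer_top :
    (∫⁻ x in Ici (Real.exp 5), ENNReal.ofReal (1 / (16 * x * Real.log x))) = ⊤ := by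
  apply ENNReal.eq_top_of_forall_nnreal_le
  intro r
  set a : ℝ := Real.exp 5 with ha
  set b : ℝ := Real.exp (Real.exp (16 * r + Real.log 5)) with hb
  have hab : a ≤ b := by
    rw [ha, hb]
    apply Real.exp_le_exp.2
    calc (5:ℝ) = Real.exp (Real.log 5) := (Real.exp_log (by norm_num)).symm
      _ ≤ Real.exp (16 * r + Real.log 5) := Real.exp_le_exp.2 (by
          have h1 : (0:ℝ) ≤ 16 * r := by positivity
          have h2 : (0:ℝ) ≤ Real.log 5 := Real.log_nonneg (by norm_num)
          linarith)
  have hapos : (0:ℝ) < a := Real.exp_pos 5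
  -- properties on Icc a b
  have hmem : ∀ x ∈ Icc a b, (0:ℝ) < x ∧ (5:ℝ) ≤ Real.log x := fun x hx =>
    ⟨lt_of_lt_of_le hapos hx.1, log_ge_five hx.1⟩
  have hcont : ContinuousOn (fun x : ℝ => 1 / (16 * x * Real.log x)) (Icc a b) := by
    apply ContinuousOn.div continuousOn_const
    · exact (continuousOn_const.mul continuousOn_id).mul
        (Real.continuousOn_log.mono (fun x hx => by
          have := (hmem x hx).1; simp [ne_of_gt this]))
    · intro x hx
      obtain ⟨h1, h2⟩ := hmem x hx
      positivity
  -- derivative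
  have hderiv : ∀ x ∈ Icc a b,
      HasDerivAt (fun t : ℝ => Real.log (Real.log t) / 16) (1 / (16 * x * Real.log x)) x := by
    intro x hx
    obtain ⟨h1, h2⟩ := hmem x hx
    have hd1 : HasDerivAt Real.log x⁻¹ x := Real.hasDerivAt_log h1.ne'
    have hd2 : HasDerivAt Real.log (Real.log x)⁻¹ (Real.log x) :=
      Real.hasDerivAt_log (by positivity)
    have := (hd2.comp x hd1).div_const 16
    convert this using 1
    · rfl
    · rfl
    · rfl
    · ring
  have hint : IntervalIntegrable (fun x : ℝ => 1 / (16 * x * Real.log x)) volume a b := by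
    rw [intervalIntegrable_iff_integrableOn_Icc_of_le hab]
    exact hcont.integrableOn_compact isCompact_Icc
  have hval : ∫ x in a..b, 1 / (16 * x * Real.log x) = (r:ℝ) := by
    rw [intervalIntegral.integral_eq_sub_of_hasDerivAt
      (fun x hx => hderiv x (by rwa [uIcc_of_le hab] at hx)) hint]
    rw [hb, ha, Real.log_exp, Real.log_exp, Real.log_exp]
    ring
  have hnn : 0 ≤ᵐ[volume.restrict (Icc a b)] (fun x : ℝ => 1 / (16 * x * Real.log x)) := by
    filter_upwards [ae_restrict_mem measurableSet_Icc] with x hx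
    obtain ⟨h1, h2⟩ := hmem x hx
    positivity
  calc (r : ENNReal) = ENNReal.ofReal (r : ℝ) := ENNReal.ofReal_coe_nnreal.symm
    _ = ENNReal.ofReal (∫ x in Icc a b, 1 / (16 * x * Real.log x)) := by
        rw [← hval, intervalIntegral.integral_of_le hab,
          MeasureTheory.integral_Icc_eq_integral_Ioc]
    _ = ∫⁻ x in Icc a b, ENNReal.ofReal (1 / (16 * x * Real.log x)) :=
        ofReal_integral_eq_lintegral_ofReal (hcont.integrableOn_compact isCompact_Icc) hnn
    _ ≤ ∫⁻ x in Ici a, ENNReal.ofReal (1 / (16 * x * Real.log x)) :=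
        lintegral_mono_set Icc_subset_Ici_self

theorem stmt3 :
    (∫⁻ x in Ici (1 : ℝ), ∫⁻ y in Ici (1 : ℝ),
        ENNReal.ofReal (1 / (x + y * Real.log (Real.sqrt (x ^ 2 + y ^ 2))) ^ 2)) = ⊤ := by
  rw [eq_top_iff]
  calc (⊤ : ENNReal) = ∫⁻ x in Ici (Real.exp 5), ENNReal.ofReal (1 / (16 * x * Real.log x)) :=
        outer_top.symm
    _ ≤ ∫⁻ x in Ici (Real.exp 5), ∫⁻ y in Ici (1:ℝ),
          ENNReal.ofReal (1 / (x + y * Real.log (Real.sqrt (x ^ 2 + y ^ 2))) ^ 2) := by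
        apply lintegral_mono_ae
        filter_upwards [ae_restrict_mem measurableSet_Ici] with x hx
        exact inner_bound hx
    _ ≤ ∫⁻ x in Ici (1:ℝ), ∫⁻ y in Ici (1:ℝ),
          ENNReal.ofReal (1 / (x + y * Real.log (Real.sqrt (x ^ 2 + y ^ 2))) ^ 2) :=
        lintegral_mono_set (Ici_subset_Ici.2 (by
          have := Real.exp_pos 5
          nlinarith [Real.add_one_le_exp (5:ℝ)]))
end

section
/- The integral $\int_1^{\infty} \left(\frac{1}{x + \ln x} - \frac{1}{x + x\ln x}\right) \frac{dx}{\ln x}$ diverges. -/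
open Set MeasureTheory Real Filter
open scoped ENNReal

noncomputable def gg (x : ℝ) : ℝ := 1 / (4 * x * (1 + Real.log x))
noncomputable def GG (x : ℝ) : ℝ := (1/4) * Real.log (1 + Real.log x)

lemma GG_deriv {x : ℝ} (hx : 2 ≤ x) : HasDerivAt GG (gg x) x := by
  have hx0 : (0:ℝ) < x := by linarith
  have hlog : 0 < Real.log x := Real.log_pos (by linarith)
  have h1 : HasDerivAt (fun y : ℝ => 1 + Real.log y) (x⁻¹) x :=
    (Real.hasDerivAt_log hx0.ne').const_add 1
  have h2 : HasDerivAt (fun y : ℝ => Real.log (1 + Real.log y)) (x⁻¹ / (1 + Real.log x)) x :=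
    h1.log (by positivity)
  have h3 := h2.const_mul (1/4 : ℝ)
  refine h3.congr_deriv ?_
  unfold gg
  field_simp

lemma gg_cont : ContinuousOn gg (Ici 2) := by
  intro x hx
  have hx0 : (0:ℝ) < x := by simp at hx; linarith
  have hlog : 0 < Real.log x := Real.log_pos (by simp at hx; linarith)
  apply ContinuousWithinAt.div continuousWithinAt_const
  · exact (continuousWithinAt_const.mul continuousWithinAt_id).mul
      (continuousWithinAt_const.add ((Real.continuousAt_log hx0.ne').continuousWithinAt))
  · positivity

lemma integral_gg {n : ℝ} (hn : 2 ≤ n) :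
    ∫ x in Ioc (2:ℝ) n, gg x = GG n - GG 2 := by
  rw [← intervalIntegral.integral_of_le hn]
  apply intervalIntegral.integral_eq_sub_of_hasDerivAt
  · intro x hx
    rw [uIcc_of_le hn] at hx
    exact GG_deriv hx.1
  · apply ContinuousOn.intervalIntegrable
    apply gg_cont.mono
    rw [uIcc_of_le hn]
    exact fun y hy => hy.1

theorem stmt4 :
    (∫⁻ x in Ioi (1 : ℝ),
        ENNReal.ofReal ((1 / (x + Real.log x) - 1 / (x + x * Real.log x)) / Real.log x)) = ⊤ := by
  set f : ℝ → ℝ≥0∞ := fun x =>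
    ENNReal.ofReal ((1 / (x + Real.log x) - 1 / (x + x * Real.log x)) / Real.log x) with hf
  -- key pointwise bound on Ioi 2
  have key : ∀ x ∈ Ioi (2:ℝ), ENNReal.ofReal (gg x) ≤ f x := by
    intro x hx
    simp only [mem_Ioi] at hx
    have hx0 : (0:ℝ) < x := by linarith
    set L := Real.log x with hL
    have hLpos : 0 < L := Real.log_pos (by linarith)
    have hLlt : L ≤ x - 1 := Real.log_le_sub_one_of_pos hx0
    apply ENNReal.ofReal_le_ofReal
    have heq : (1 / (x + L) - 1 / (x + x * L)) / L = (x - 1) / ((x + L) * (x * (1 + L))) := by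
      have h1 : x + L > 0 := by linarith
      have h2 : x + x * L > 0 := by nlinarith
      field_simp
      ring
    rw [heq]
    unfold gg
    rw [div_le_div_iff₀ (by positivity) (by positivity)]
    nlinarith [mul_pos hx0 hLpos]
  -- lintegral of gg over Ioc 2 n
  have hioc : ∀ n : ℝ, 2 ≤ n →
      ENNReal.ofReal (GG n - GG 2) ≤ ∫⁻ x in Ioi (1:ℝ), f x := by
    intro n hn
    have hInt : IntegrableOn gg (Ioc 2 n) :=
      ((gg_cont.mono (fun y (hy : y ∈ Icc 2 n) => hy.1)).integrableOn_compact
        isCompact_Icc).mono_set Ioc_subset_Icc_self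
    have hnn : 0 ≤ᵐ[volume.restrict (Ioc (2:ℝ) n)] gg := by
      filter_upwards [ae_restrict_mem measurableSet_Ioc] with y hy
      have : (0:ℝ) < Real.log y := Real.log_pos (by linarith [hy.1])
      have : (0:ℝ) < y := by linarith [hy.1]
      unfold gg; positivity
    calc ENNReal.ofReal (GG n - GG 2)
        = ∫⁻ x in Ioc (2:ℝ) n, ENNReal.ofReal (gg x) := by
          rw [← integral_gg hn, ofReal_integral_eq_lintegral_ofReal hInt hnn]
      _ ≤ ∫⁻ x in Ioc (2:ℝ) n, f x := by
          apply setLIntegral_mono' measurableSet_Ioc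
          intro y hy
          exact key y (mem_Ioi.mpr hy.1)
      _ ≤ ∫⁻ x in Ioi (1:ℝ), f x := lintegral_mono_set (fun y hy => by
          simp only [mem_Ioc] at hy; exact mem_Ioi.mpr (by linarith [hy.1]))
  -- GG n → ∞
  have hGG : Tendsto (fun n : ℝ => GG n - GG 2) atTop atTop := by
    apply Tendsto.atTop_add _ tendsto_const_nhds
    unfold GG
    apply Tendsto.const_mul_atTop (by norm_num)
    exact Real.tendsto_log_atTop.comp (tendsto_atTop_add_const_left _ 1 Real.tendsto_log_atTop)
  have := (ENNReal.tendsto_ofReal_atTop.comp hGG)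
  refine top_le_iff.mp (le_of_tendsto this ?_)
  filter_upwards [eventually_ge_atTop (2:ℝ)] with n hn using hioc n hn
end

section
/- For real $\alpha$ with $1 \leq \alpha < 3/2$, the integral $\int_2^{\infty}\int_1^{x}\int_1^{y} \left(x + y\ln x + z\ln^2 x\right)^{-2\alpha}\, dz\, dy\, dx$ diverges. -/
open Set MeasureTheory Real Filter

theorem stmt6 (α : ℝ) (h1 : 1 ≤ α) (h2 : α < 3 / 2) :
    (∫⁻ x in Ici (2 : ℝ), ∫⁻ y in Icc (1 : ℝ) x, ∫⁻ z in Icc (1 : ℝ) y,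
        ENNReal.ofReal ((x + y * Real.log x + z * Real.log x ^ 2) ^ (-(2 * α)))) = ⊤ := by
  set ε : ℝ := 3 - 2 * α with hεdef
  have hεpos : 0 < ε := by simp only [hεdef]; linarith
  have hoo := (isLittleO_log_rpow_rpow_atTop (6 : ℝ) hεpos).def (c := 1/216) (by norm_num)
  rw [Filter.eventually_atTop] at hoo
  obtain ⟨X₁, hX₁⟩ := hoo
  set X₀ : ℝ := max X₁ 4 with hX₀def
  have hX₀4 : (4:ℝ) ≤ X₀ := le_max_right _ _
  -- key pointwise bound
  have key : ∀ x ∈ Ici X₀, ENNReal.ofReal x⁻¹ ≤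
      ∫⁻ y in Icc (1 : ℝ) x, ∫⁻ z in Icc (1 : ℝ) y,
        ENNReal.ofReal ((x + y * Real.log x + z * Real.log x ^ 2) ^ (-(2 * α))) := by
    intro x hx
    have hx4 : (4:ℝ) ≤ x := le_trans hX₀4 hx
    have hx0 : (0:ℝ) < x := by linarith
    have hL1 : (1:ℝ) ≤ Real.log x := by
      rw [Real.le_log_iff_exp_le hx0]
      have := Real.exp_one_lt_d9
      linarith
    have hL0 : (0:ℝ) ≤ Real.log x := by linarith
    set L : ℝ := Real.log x with hLdef
    set C : ℝ := 3 * x * L ^ 2 with hCdef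
    have hC0 : 0 < C := by positivity
    set c : ℝ := C ^ (-(2 * α)) with hcdef
    have hc0 : 0 ≤ c := Real.rpow_nonneg hC0.le _
    -- integrand lower bound
    have stepA : ∀ y ∈ Icc (1:ℝ) x, ∀ z ∈ Icc (1:ℝ) y,
        ENNReal.ofReal c ≤ ENNReal.ofReal ((x + y * L + z * L ^ 2) ^ (-(2 * α))) := by
      intro y hy z hz
      obtain ⟨hy1, hyx⟩ := hy
      obtain ⟨hz1, hzy⟩ := hz
      have hbase : 0 < x + y * L + z * L ^ 2 := by positivity
      have hle : x + y * L + z * L ^ 2 ≤ C := by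
        rw [hCdef]
        nlinarith [sq_nonneg L, sq_nonneg (L - 1), mul_nonneg hL0 (by linarith : (0:ℝ) ≤ x - y),
          mul_nonneg (sq_nonneg L) (by linarith : (0:ℝ) ≤ x - z)]
      exact ENNReal.ofReal_le_ofReal (Real.rpow_le_rpow_of_nonpos hbase hle (by linarith))
    -- real inequality
    have hreal : x⁻¹ ≤ c * (x / 2 - 1) * (x / 2) := by
      have hxX₁ : X₁ ≤ x := le_trans (le_max_left _ _) hx
      have hL6 : L ^ (6:ℝ) ≤ (1/216) * x ^ ε := by
        have := hX₁ x hxX₁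
        rwa [Real.norm_eq_abs, Real.norm_eq_abs, abs_of_nonneg (Real.rpow_nonneg hL0 _),
          abs_of_nonneg (Real.rpow_nonneg hx0.le _)] at this
      have hmain : C ^ (2 * α) ≤ x ^ (3:ℝ) / 8 := by
        have h3 : (3:ℝ) ^ (2*α) ≤ 27 := by
          calc (3:ℝ) ^ (2*α) ≤ (3:ℝ) ^ (3:ℝ) :=
                Real.rpow_le_rpow_of_exponent_le (by norm_num) (by linarith)
            _ = 27 := by
                rw [show (3:ℝ) = ((3:ℕ):ℝ) from by norm_num, Real.rpow_natCast]; norm_num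
        have hL4 : (L ^ 2) ^ (2*α) ≤ L ^ (6:ℝ) := by
          rw [← Real.rpow_natCast L 2, ← Real.rpow_mul hL0]
          push_cast
          exact Real.rpow_le_rpow_of_exponent_le hL1 (by linarith)
        have hCsplit : C ^ (2*α) = (3:ℝ) ^ (2*α) * x ^ (2*α) * (L ^ 2) ^ (2*α) := by
          rw [hCdef, Real.mul_rpow (by positivity) (by positivity),
            Real.mul_rpow (by norm_num) hx0.le]
        calc C ^ (2*α) = (3:ℝ) ^ (2*α) * x ^ (2*α) * (L ^ 2) ^ (2*α) := hCsplit
          _ ≤ 27 * x ^ (2*α) * ((1/216) * x ^ ε) := by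
              have hx2α : (0:ℝ) ≤ x ^ (2*α) := Real.rpow_nonneg hx0.le _
              have := hL4.trans hL6
              gcongr
          _ = x ^ (2*α) * x ^ ε / 8 := by ring
          _ = x ^ (3:ℝ) / 8 := by
              rw [← Real.rpow_add hx0]
              norm_num [hεdef]
      have hx3 : x ^ (3:ℝ) = x ^ 3 := by
        rw [show (3:ℝ) = ((3:ℕ):ℝ) from by norm_num, Real.rpow_natCast]
      have hCpos : 0 < C ^ (2*α) := Real.rpow_pos_of_pos hC0 _
      have hcinv : c = (C ^ (2*α))⁻¹ := by
        rw [hcdef, Real.rpow_neg hC0.le]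
      have hinv : (x ^ 3 / 8)⁻¹ ≤ c := by
        rw [hcinv]
        apply inv_anti₀ hCpos
        rw [← hx3]; exact hmain
      have h8 : (0:ℝ) < x ^ 3 / 8 := by positivity
      calc x⁻¹ = (x^3/8)⁻¹ * ((x/4) * (x/2)) := by field_simp; ring
        _ ≤ c * ((x/2 - 1) * (x/2)) := by
            apply mul_le_mul hinv _ (by nlinarith) hc0
            nlinarith
        _ = c * (x/2 - 1) * (x/2) := by ring
    -- chain of integral bounds
    have step1 : ∀ y ∈ Icc (x/2) x,
        ENNReal.ofReal c * ENNReal.ofReal (x/2 - 1) ≤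
        ∫⁻ z in Icc (1:ℝ) y, ENNReal.ofReal ((x + y * L + z * L ^ 2) ^ (-(2 * α))) := by
      intro y hy
      have hy' : y ∈ Icc (1:ℝ) x := ⟨by linarith [hy.1], hy.2⟩
      calc ENNReal.ofReal c * ENNReal.ofReal (x/2 - 1)
          = ∫⁻ _ in Icc (1:ℝ) (x/2), ENNReal.ofReal c := by
            rw [setLIntegral_const, Real.volume_Icc]
        _ ≤ ∫⁻ z in Icc (1:ℝ) (x/2), ENNReal.ofReal ((x + y * L + z * L ^ 2) ^ (-(2 * α))) := by
            apply setLIntegral_mono' measurableSet_Icc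
            intro z hz
            exact stepA y hy' z ⟨hz.1, le_trans hz.2 hy.1⟩
        _ ≤ _ := lintegral_mono_set (Icc_subset_Icc le_rfl hy.1)
    calc ENNReal.ofReal x⁻¹
        ≤ ENNReal.ofReal (c * (x/2 - 1) * (x/2)) := ENNReal.ofReal_le_ofReal hreal
      _ = ENNReal.ofReal c * ENNReal.ofReal (x/2 - 1) * ENNReal.ofReal (x/2) := by
          rw [ENNReal.ofReal_mul (mul_nonneg hc0 (by linarith)), ENNReal.ofReal_mul hc0]
      _ = ∫⁻ _ in Icc (x/2) x, (ENNReal.ofReal c * ENNReal.ofReal (x/2 - 1)) := by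
          rw [setLIntegral_const, Real.volume_Icc, show x - x/2 = x/2 by ring]
      _ ≤ ∫⁻ y in Icc (x/2) x,
            ∫⁻ z in Icc (1:ℝ) y, ENNReal.ofReal ((x + y * L + z * L ^ 2) ^ (-(2 * α))) :=
          setLIntegral_mono' measurableSet_Icc step1
      _ ≤ _ := lintegral_mono_set (Icc_subset_Icc (by linarith) le_rfl)
  -- divergence of ∫ x⁻¹
  have htop : (∫⁻ x in Ici X₀, ENNReal.ofReal x⁻¹) = ⊤ := by
    by_contra h
    have hInt : IntegrableOn (fun x : ℝ => x⁻¹) (Ici X₀) := by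
      constructor
      · exact measurable_inv.aestronglyMeasurable
      · rw [hasFiniteIntegral_iff_ofReal]
        · exact lt_top_iff_ne_top.2 h
        · filter_upwards [ae_restrict_mem measurableSet_Ici] with x hx
          have hx0 : (0:ℝ) < x := lt_of_lt_of_le (by linarith) hx
          positivity
    exact not_IntegrableOn_Ioi_inv (hInt.mono_set Ioi_subset_Ici_self)
  have mono1 : (∫⁻ x in Ici X₀, ENNReal.ofReal x⁻¹) ≤
      ∫⁻ x in Ici X₀, ∫⁻ y in Icc (1 : ℝ) x, ∫⁻ z in Icc (1 : ℝ) y,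
        ENNReal.ofReal ((x + y * Real.log x + z * Real.log x ^ 2) ^ (-(2 * α))) :=
    setLIntegral_mono' measurableSet_Ici key
  have mono2 : (∫⁻ x in Ici X₀, ∫⁻ y in Icc (1 : ℝ) x, ∫⁻ z in Icc (1 : ℝ) y,
        ENNReal.ofReal ((x + y * Real.log x + z * Real.log x ^ 2) ^ (-(2 * α)))) ≤
      ∫⁻ x in Ici (2:ℝ), ∫⁻ y in Icc (1 : ℝ) x, ∫⁻ z in Icc (1 : ℝ) y,
        ENNReal.ofReal ((x + y * Real.log x + z * Real.log x ^ 2) ^ (-(2 * α))) :=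
    lintegral_mono_set (Ici_subset_Ici.2 (by linarith))
  exact eq_top_iff.2 (htop ▸ (mono1.trans mono2))
end

section
/- Let $2 \geq \alpha_1 \geq \alpha_2 > 0$ with $2 - 1/\alpha_1 - 1/\alpha_2 > 0$ (so in particular $\alpha_1 > 1$). Then for all integers $k, n \geq 1$, the integral $\int_1^{\infty}\int_1^{\infty} \frac{dt\, ds}{(t^{\alpha_1} + s^{\alpha_2})\left((t+k)^{\alpha_1} + (s+n)^{\alpha_2}\right)}$ is finite, and there exist constants $0 < c \leq C$ depending only on $\alpha_1, \alpha_2$ such that this integral lies between $c\,(k^{\alpha_1} + n^{\alpha_2})^{1/\alpha_1 + 1/\alpha_2 - 2}$ and $C\,(k^{\alpha_1} + n^{\alpha_2})^{1/\alpha_1 + 1/\alpha_2 - 2}$, provided $\alpha_2 < 2$. -/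
open Set MeasureTheory Real

private lemma mrpow (c : ℝ) : Measurable fun x : ℝ => x ^ c :=
  measurable_id.pow measurable_const

private lemma lint_Ioc {p a : ℝ} (hp0 : 0 ≤ p) (hp : p < 1) (ha : 0 < a) :
    ∫⁻ x in Set.Ioc (0:ℝ) a, ENNReal.ofReal (x ^ (-p)) = ENNReal.ofReal (a ^ (1 - p) / (1 - p)) := by
  have hint : IntegrableOn (fun x : ℝ => x ^ (-p)) (Set.Ioc 0 a) :=
    (intervalIntegrable_iff_integrableOn_Ioc_of_le ha.le).mp
      (intervalIntegral.intervalIntegrable_rpow' (by linarith))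
  rw [← ofReal_integral_eq_lintegral_ofReal hint
      ((ae_restrict_mem measurableSet_Ioc).mono fun x hx => Real.rpow_nonneg hx.1.le _)]
  congr 1
  rw [← intervalIntegral.integral_of_le ha.le, integral_rpow (Or.inl (by linarith)),
    Real.zero_rpow (ne_of_gt (by linarith : (0:ℝ) < -p + 1)), sub_zero,
    show -p + 1 = 1 - p from by ring]

private lemma lint_Icc {p a : ℝ} (hp0 : 0 ≤ p) (hp : p < 1) (ha : 1 ≤ a) :
    ∫⁻ x in Set.Icc (1:ℝ) a, ENNReal.ofReal (x ^ (-p)) ≤ ENNReal.ofReal (a ^ (1 - p) / (1 - p)) :=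
  (lintegral_mono_set (fun x hx => Set.mem_Ioc.mpr ⟨lt_of_lt_of_le zero_lt_one hx.1, hx.2⟩)).trans_eq
    (lint_Ioc hp0 hp (lt_of_lt_of_le zero_lt_one ha))

private lemma lint_Ioi {p a : ℝ} (hp : 1 < p) (ha : 0 < a) :
    ∫⁻ x in Set.Ioi a, ENNReal.ofReal (x ^ (-p)) = ENNReal.ofReal (a ^ (1 - p) / (p - 1)) := by
  have hint : IntegrableOn (fun x : ℝ => x ^ (-p)) (Set.Ioi a) :=
    integrableOn_Ioi_rpow_of_lt (by linarith) ha
  rw [← ofReal_integral_eq_lintegral_ofReal hint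
      ((ae_restrict_mem measurableSet_Ioi).mono fun x hx => Real.rpow_nonneg (ha.trans hx).le _)]
  congr 1
  rw [integral_Ioi_rpow_of_lt (by linarith) ha, show -p + 1 = 1 - p from by ring,
    show (1:ℝ) - p = -(p - 1) from by ring, div_neg, neg_div, neg_neg]

private lemma wmax {x y w : ℝ} (hx : 0 < x) (hy : 0 < y) (hw : 0 ≤ w) (hw1 : w ≤ 1) :
    x ^ w * y ^ (1 - w) ≤ x + y := by
  have hm : 0 < max x y := lt_max_of_lt_left hx
  calc x ^ w * y ^ (1 - w) ≤ (max x y) ^ w * (max x y) ^ (1 - w) := by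
        have h1 : x ^ w ≤ (max x y) ^ w := Real.rpow_le_rpow hx.le (le_max_left _ _) hw
        have h2 : y ^ (1 - w) ≤ (max x y) ^ (1 - w) :=
          Real.rpow_le_rpow hy.le (le_max_right _ _) (by linarith)
        exact mul_le_mul h1 h2 (Real.rpow_nonneg hy.le _) (Real.rpow_nonneg hm.le _)
    _ = max x y := by
        rw [← Real.rpow_add hm, show w + (1 - w) = 1 from by ring, Real.rpow_one]
    _ ≤ x + y := max_le (by linarith) (by linarith)

private lemma inv_bound {A B X Y : ℝ} (hX : 0 < X) (hY : 0 < Y) (h1 : X ≤ A) (h2 : Y ≤ B) :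
    1 / (A * B) ≤ 1 / (X * Y) :=
  one_div_le_one_div_of_le (mul_pos hX hY)
    (mul_le_mul h1 h2 hY.le (hX.le.trans h1))

private lemma piece {S T : Set ℝ} (f : ℝ → ℝ → ℝ)
    {c e₁ e₂ V₁ V₂ : ℝ} (hc : 0 ≤ c) (hV₂ : 0 ≤ V₂)
    (hS0 : S ⊆ Set.Ioi 0)
    (hb : ∀ t ∈ S, ∀ s ∈ T, f t s ≤ c * (t ^ (-e₁) * s ^ (-e₂)))
    (h1 : (∫⁻ t in S, ENNReal.ofReal (t ^ (-e₁))) ≤ ENNReal.ofReal V₁)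
    (h2 : (∫⁻ s in T, ENNReal.ofReal (s ^ (-e₂))) ≤ ENNReal.ofReal V₂) :
    (∫⁻ t in S, ∫⁻ s in T, ENNReal.ofReal (f t s)) ≤ ENNReal.ofReal ((c * V₂) * V₁) := by
  calc (∫⁻ t in S, ∫⁻ s in T, ENNReal.ofReal (f t s))
      ≤ ∫⁻ t in S, (ENNReal.ofReal (c * t ^ (-e₁))) * ENNReal.ofReal V₂ := by
        refine setLIntegral_mono (((mrpow (-e₁)).const_mul c).ennreal_ofReal.mul_const _) ?_
        intro t ht
        calc (∫⁻ s in T, ENNReal.ofReal (f t s))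
            ≤ ∫⁻ s in T, ENNReal.ofReal (c * t ^ (-e₁)) * ENNReal.ofReal (s ^ (-e₂)) := by
              refine setLIntegral_mono (((mrpow (-e₂)).ennreal_ofReal).const_mul _) ?_
              intro s hs
              rw [← ENNReal.ofReal_mul (mul_nonneg hc (Real.rpow_nonneg (le_of_lt (hS0 ht)) _))]
              refine ENNReal.ofReal_le_ofReal ?_
              rw [mul_assoc]
              exact hb t ht s hs
          _ = ENNReal.ofReal (c * t ^ (-e₁)) * ∫⁻ s in T, ENNReal.ofReal (s ^ (-e₂)) :=
              lintegral_const_mul' _ _ ENNReal.ofReal_ne_top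
          _ ≤ ENNReal.ofReal (c * t ^ (-e₁)) * ENNReal.ofReal V₂ := mul_le_mul_right h2 _
    _ = ∫⁻ t in S, ENNReal.ofReal (c * V₂) * ENNReal.ofReal (t ^ (-e₁)) := by
        refine lintegral_congr fun t => ?_
        rw [ENNReal.ofReal_mul hc, ENNReal.ofReal_mul hc]
        ring
    _ = ENNReal.ofReal (c * V₂) * ∫⁻ t in S, ENNReal.ofReal (t ^ (-e₁)) :=
        lintegral_const_mul' _ _ ENNReal.ofReal_ne_top
    _ ≤ ENNReal.ofReal (c * V₂) * ENNReal.ofReal V₁ := mul_le_mul_right h1 _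
    _ = ENNReal.ofReal ((c * V₂) * V₁) := (ENNReal.ofReal_mul (mul_nonneg hc hV₂)).symm


set_option maxHeartbeats 2000000 in
theorem stmt7 (α₁ α₂ : ℝ) (h2 : 0 < α₂) (h21 : α₂ ≤ α₁) (h12 : α₁ ≤ 2) (h2lt : α₂ < 2)
    (hγ : 0 < 2 - 1 / α₁ - 1 / α₂) :
    ∃ c C : ℝ, 0 < c ∧ c ≤ C ∧ ∀ k n : ℕ, 1 ≤ k → 1 ≤ n →
      (∫⁻ t in Ici (1 : ℝ), ∫⁻ s in Ici (1 : ℝ),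
          ENNReal.ofReal (1 / ((t ^ α₁ + s ^ α₂) *
            ((t + (k : ℝ)) ^ α₁ + (s + (n : ℝ)) ^ α₂)))) ≠ ⊤ ∧
      ENNReal.ofReal (c * ((k : ℝ) ^ α₁ + (n : ℝ) ^ α₂) ^ (1 / α₁ + 1 / α₂ - 2)) ≤
        (∫⁻ t in Ici (1 : ℝ), ∫⁻ s in Ici (1 : ℝ),
          ENNReal.ofReal (1 / ((t ^ α₁ + s ^ α₂) *
            ((t + (k : ℝ)) ^ α₁ + (s + (n : ℝ)) ^ α₂)))) ∧
      (∫⁻ t in Ici (1 : ℝ), ∫⁻ s in Ici (1 : ℝ),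
          ENNReal.ofReal (1 / ((t ^ α₁ + s ^ α₂) *
            ((t + (k : ℝ)) ^ α₁ + (s + (n : ℝ)) ^ α₂)))) ≤
        ENNReal.ofReal (C * ((k : ℝ) ^ α₁ + (n : ℝ) ^ α₂) ^ (1 / α₁ + 1 / α₂ - 2)) := by
  have hα₁ : 0 < α₁ := lt_of_lt_of_le h2 h21
  have hα₁ne : α₁ ≠ 0 := ne_of_gt hα₁
  have hα₂ne : α₂ ≠ 0 := ne_of_gt h2
  have hia : 1 / α₁ + 1 / α₂ < 2 := by linarith
  have hinv21 : 1 / α₁ ≤ 1 / α₂ := one_div_le_one_div_of_le h2 h21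
  have hhalf₂ : (1:ℝ)/2 < 1 / α₂ := one_div_lt_one_div_of_lt h2 h2lt
  have hhalf₁ : (1:ℝ)/2 ≤ 1 / α₁ := one_div_le_one_div_of_le hα₁ h12
  have hα₁1 : 1 < α₁ := by
    have h' : 1 / α₁ < 1 := by linarith
    rwa [div_lt_one hα₁] at h'
  set θ : ℝ := (max 0 (1 - 1 / α₂) + 1 / α₁) / 2 with hθdef
  have h1α₁pos : 0 < 1 / α₁ := by positivity
  have hmax_lt : max 0 (1 - 1 / α₂) < 1 / α₁ := max_lt h1α₁pos (by linarith)
  have hmax0 : (0:ℝ) ≤ max 0 (1 - 1 / α₂) := le_max_left _ _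
  have hmax1 : 1 - 1 / α₂ ≤ max 0 (1 - 1 / α₂) := le_max_right _ _
  have hθ_lt : θ < 1 / α₁ := by rw [hθdef]; linarith
  have hθ_pos : 0 < θ := by rw [hθdef]; linarith
  have hθ_gt : 1 - 1 / α₂ < θ := by rw [hθdef]; linarith
  have h1α₁le1 : 1 / α₁ ≤ 1 := by rw [div_le_one hα₁]; linarith
  have hθ_le1 : θ ≤ 1 := by linarith
  have hp₁0 : 0 ≤ α₁ * θ := by positivity
  have hp₁1 : α₁ * θ < 1 := by
    have h := (lt_div_iff₀ hα₁).mp hθ_lt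
    linarith [h, mul_comm α₁ θ]
  have hq₁0 : 0 ≤ α₂ * (1 - θ) := mul_nonneg h2.le (by linarith)
  have hq₁1 : α₂ * (1 - θ) < 1 := by
    have h' : 1 - θ < 1 / α₂ := by linarith
    have h := (lt_div_iff₀ h2).mp h'
    linarith [h, mul_comm α₂ (1 - θ)]
  have hq₂1 : 1 < α₂ * (1 - θ) + α₂ := by
    have h' : 1 / α₂ < 2 - θ := by linarith
    have h := (div_lt_iff₀ h2).mp h'
    linarith [h, show (2 - θ) * α₂ = α₂ * (1 - θ) + α₂ from by ring]
  have hp₂1 : 1 < α₁ * θ + α₁ := by nlinarith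
  set u : ℝ := (1 / (2 * α₁) + (1 - 1 / (2 * α₂))) / 2 with hudef
  have h2α₁ : (0:ℝ) < 2 * α₁ := by linarith
  have h2α₂ : (0:ℝ) < 2 * α₂ := by linarith
  have hhalf : 1 / (2 * α₁) + 1 / (2 * α₂) < 1 := by
    have e1 : 1 / (2 * α₁) = (1 / α₁) / 2 := by ring
    have e2 : 1 / (2 * α₂) = (1 / α₂) / 2 := by ring
    linarith
  have h2α₁pos : (0:ℝ) < 1 / (2 * α₁) := by positivity
  have h2α₂pos : (0:ℝ) < 1 / (2 * α₂) := by positivity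
  have hu_lb : 1 / (2 * α₁) < u := by rw [hudef]; linarith
  have hu_ub : u < 1 - 1 / (2 * α₂) := by rw [hudef]; linarith
  have hu_pos : 0 < u := lt_trans h2α₁pos hu_lb
  have hu_le1 : u ≤ 1 := by linarith
  have hp₃1 : 1 < α₁ * u + α₁ * u := by
    have h := (div_lt_iff₀ h2α₁).mp hu_lb
    linarith [h, show u * (2 * α₁) = α₁ * u + α₁ * u from by ring]
  have hq₃1 : 1 < α₂ * (1 - u) + α₂ * (1 - u) := by
    have h' : 1 / (2 * α₂) < 1 - u := by linarith
    have h := (div_lt_iff₀ h2α₂).mp h'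
    linarith [h, show (1 - u) * (2 * α₂) = α₂ * (1 - u) + α₂ * (1 - u) from by ring]
  set K₁₁ : ℝ := (1 / (1 - α₂ * (1 - θ))) * (1 / (1 - α₁ * θ)) with hK11
  set K₁₂ : ℝ := (1 / (α₂ * (1 - θ) + α₂ - 1)) * (1 / (1 - α₁ * θ)) with hK12
  set K₂₁ : ℝ := (1 / (1 - α₂ * (1 - θ))) * (1 / (α₁ * θ + α₁ - 1)) with hK21
  set K₂₂ : ℝ := (1 / (α₂ * (1 - u) + α₂ * (1 - u) - 1)) * (1 / (α₁ * u + α₁ * u - 1)) with hK22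
  have hK11p : 0 < K₁₁ := by rw [hK11]; exact mul_pos (one_div_pos.mpr (by linarith)) (one_div_pos.mpr (by linarith))
  have hK12p : 0 < K₁₂ := by rw [hK12]; exact mul_pos (one_div_pos.mpr (by linarith)) (one_div_pos.mpr (by linarith))
  have hK21p : 0 < K₂₁ := by rw [hK21]; exact mul_pos (one_div_pos.mpr (by linarith)) (one_div_pos.mpr (by linarith))
  have hK22p : 0 < K₂₂ := by rw [hK22]; exact mul_pos (one_div_pos.mpr (by linarith)) (one_div_pos.mpr (by linarith))
  refine ⟨1/144, 1/144 + (K₁₁ + K₁₂ + K₂₁ + K₂₂), by norm_num, by linarith, ?_⟩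
  intro k n hk hn
  have hk1 : (1:ℝ) ≤ (k:ℝ) := by exact_mod_cast hk
  have hn1 : (1:ℝ) ≤ (n:ℝ) := by exact_mod_cast hn
  have hk0 : (0:ℝ) ≤ (k:ℝ) := by linarith
  have hn0 : (0:ℝ) ≤ (n:ℝ) := by linarith
  set M : ℝ := (k:ℝ) ^ α₁ + (n:ℝ) ^ α₂ with hMdef
  have hkα : (1:ℝ) ≤ (k:ℝ) ^ α₁ := by
    calc (1:ℝ) = 1 ^ α₁ := (Real.one_rpow _).symm
    _ ≤ (k:ℝ) ^ α₁ := Real.rpow_le_rpow zero_le_one hk1 hα₁.le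
  have hnα : (1:ℝ) ≤ (n:ℝ) ^ α₂ := by
    calc (1:ℝ) = 1 ^ α₂ := (Real.one_rpow _).symm
    _ ≤ (n:ℝ) ^ α₂ := Real.rpow_le_rpow zero_le_one hn1 h2.le
  have hM1 : 1 ≤ M := by rw [hMdef]; linarith
  have hM0 : (0:ℝ) < M := by linarith
  set a : ℝ := M ^ (1/α₁) with hadef
  set b : ℝ := M ^ (1/α₂) with hbdef
  have ha1 : 1 ≤ a := by
    rw [hadef]
    calc (1:ℝ) = 1 ^ (1/α₁) := (Real.one_rpow _).symm
    _ ≤ M ^ (1/α₁) := Real.rpow_le_rpow zero_le_one hM1 (by positivity)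
  have hb1 : 1 ≤ b := by
    rw [hbdef]
    calc (1:ℝ) = 1 ^ (1/α₂) := (Real.one_rpow _).symm
    _ ≤ M ^ (1/α₂) := Real.rpow_le_rpow zero_le_one hM1 (by positivity)
  have ha0 : 0 < a := lt_of_lt_of_le zero_lt_one ha1
  have hb0 : 0 < b := lt_of_lt_of_le zero_lt_one hb1
  have hFm : Measurable (Function.uncurry fun t s : ℝ =>
      ENNReal.ofReal (1 / ((t ^ α₁ + s ^ α₂) * ((t + (k : ℝ)) ^ α₁ + (s + (n : ℝ)) ^ α₂)))) := by
    have hre : Measurable fun p : ℝ × ℝ =>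
        1 / ((p.1 ^ α₁ + p.2 ^ α₂) * ((p.1 + (k:ℝ)) ^ α₁ + (p.2 + (n:ℝ)) ^ α₂)) := by
      simp only [one_div]
      exact (((measurable_fst.pow measurable_const).add
        (measurable_snd.pow measurable_const)).mul
        (((measurable_fst.add measurable_const).pow measurable_const).add
          ((measurable_snd.add measurable_const).pow measurable_const))).inv
    exact hre.ennreal_ofReal
  -- pointwise upper bounds
  have hpt : ∀ t : ℝ, 1 ≤ t → ∀ s : ℝ, 1 ≤ s →
      (1 / ((t ^ α₁ + s ^ α₂) * ((t + (k : ℝ)) ^ α₁ + (s + (n : ℝ)) ^ α₂)) ≤ (1/M) * (t ^ (-(α₁ * θ)) * s ^ (-(α₂ * (1 - θ))))) ∧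
      (1 / ((t ^ α₁ + s ^ α₂) * ((t + (k : ℝ)) ^ α₁ + (s + (n : ℝ)) ^ α₂)) ≤ 1 * (t ^ (-(α₁ * θ)) * s ^ (-(α₂ * (1 - θ) + α₂)))) ∧
      (1 / ((t ^ α₁ + s ^ α₂) * ((t + (k : ℝ)) ^ α₁ + (s + (n : ℝ)) ^ α₂)) ≤ 1 * (t ^ (-(α₁ * θ + α₁)) * s ^ (-(α₂ * (1 - θ))))) ∧
      (1 / ((t ^ α₁ + s ^ α₂) * ((t + (k : ℝ)) ^ α₁ + (s + (n : ℝ)) ^ α₂)) ≤ 1 * (t ^ (-(α₁ * u + α₁ * u)) * s ^ (-(α₂ * (1 - u) + α₂ * (1 - u))))) := by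
    intro t ht s hs
    have ht0 : (0:ℝ) < t := lt_of_lt_of_le zero_lt_one ht
    have hs0 : (0:ℝ) < s := lt_of_lt_of_le zero_lt_one hs
    have htα : 0 < t ^ α₁ := Real.rpow_pos_of_pos ht0 _
    have hsα : 0 < s ^ α₂ := Real.rpow_pos_of_pos hs0 _
    have hX : ∀ w : ℝ, 0 ≤ w → w ≤ 1 →
        t ^ (α₁ * w) * s ^ (α₂ * (1 - w)) ≤ t ^ α₁ + s ^ α₂ := by
      intro w hw hw1
      rw [Real.rpow_mul ht0.le, Real.rpow_mul hs0.le]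
      exact wmax htα hsα hw hw1
    have hXpos : ∀ e e' : ℝ, 0 < t ^ e * s ^ e' := fun e e' =>
      mul_pos (Real.rpow_pos_of_pos ht0 _) (Real.rpow_pos_of_pos hs0 _)
    have hAB : t ^ α₁ + s ^ α₂ ≤ (t + (k:ℝ)) ^ α₁ + (s + (n:ℝ)) ^ α₂ :=
      add_le_add (Real.rpow_le_rpow ht0.le (by linarith) hα₁.le)
        (Real.rpow_le_rpow hs0.le (by linarith) h2.le)
    have hMB : M ≤ (t + (k:ℝ)) ^ α₁ + (s + (n:ℝ)) ^ α₂ := by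
      rw [hMdef]
      exact add_le_add (Real.rpow_le_rpow hk0 (by linarith) hα₁.le)
        (Real.rpow_le_rpow hn0 (by linarith) h2.le)
    refine ⟨?_, ?_, ?_, ?_⟩
    · calc 1 / ((t ^ α₁ + s ^ α₂) * ((t + (k : ℝ)) ^ α₁ + (s + (n : ℝ)) ^ α₂))
          ≤ 1 / ((t ^ (α₁ * θ) * s ^ (α₂ * (1 - θ))) * M) :=
            inv_bound (hXpos _ _) hM0 (hX θ hθ_pos.le hθ_le1) hMB
        _ = (1/M) * (t ^ (-(α₁ * θ)) * s ^ (-(α₂ * (1 - θ)))) := by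
            rw [Real.rpow_neg ht0.le, Real.rpow_neg hs0.le]
            simp only [one_div, mul_inv]
            ring
    · calc 1 / ((t ^ α₁ + s ^ α₂) * ((t + (k : ℝ)) ^ α₁ + (s + (n : ℝ)) ^ α₂))
          ≤ 1 / ((t ^ (α₁ * θ) * s ^ (α₂ * (1 - θ))) * s ^ α₂) :=
            inv_bound (hXpos _ _) hsα (hX θ hθ_pos.le hθ_le1)
              (le_trans (le_add_of_nonneg_left htα.le) hAB)
        _ = 1 * (t ^ (-(α₁ * θ)) * s ^ (-(α₂ * (1 - θ) + α₂))) := by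
            rw [Real.rpow_neg ht0.le, Real.rpow_neg hs0.le, Real.rpow_add hs0]
            simp only [one_div, mul_inv]
            ring
    · calc 1 / ((t ^ α₁ + s ^ α₂) * ((t + (k : ℝ)) ^ α₁ + (s + (n : ℝ)) ^ α₂))
          ≤ 1 / ((t ^ (α₁ * θ) * s ^ (α₂ * (1 - θ))) * t ^ α₁) :=
            inv_bound (hXpos _ _) htα (hX θ hθ_pos.le hθ_le1)
              (le_trans (le_add_of_nonneg_right hsα.le) hAB)
        _ = 1 * (t ^ (-(α₁ * θ + α₁)) * s ^ (-(α₂ * (1 - θ)))) := by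
            rw [Real.rpow_neg ht0.le, Real.rpow_neg hs0.le, Real.rpow_add ht0]
            simp only [one_div, mul_inv]
            ring
    · calc 1 / ((t ^ α₁ + s ^ α₂) * ((t + (k : ℝ)) ^ α₁ + (s + (n : ℝ)) ^ α₂))
          ≤ 1 / ((t ^ (α₁ * u) * s ^ (α₂ * (1 - u))) * (t ^ (α₁ * u) * s ^ (α₂ * (1 - u)))) :=
            inv_bound (hXpos _ _) (hXpos _ _) (hX u hu_pos.le hu_le1)
              (le_trans (hX u hu_pos.le hu_le1) hAB)
        _ = 1 * (t ^ (-(α₁ * u + α₁ * u)) * s ^ (-(α₂ * (1 - u) + α₂ * (1 - u)))) := by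
            rw [Real.rpow_neg ht0.le, Real.rpow_neg hs0.le, Real.rpow_add ht0, Real.rpow_add hs0]
            simp only [one_div, mul_inv]
            ring
  have hSa : Set.Icc (1:ℝ) a ⊆ Set.Ioi 0 :=
    fun x hx => Set.mem_Ioi.mpr (lt_of_lt_of_le zero_lt_one (Set.mem_Icc.mp hx).1)
  have hSa' : Set.Ioi a ⊆ Set.Ioi (0:ℝ) :=
    fun x hx => Set.mem_Ioi.mpr (lt_trans ha0 (Set.mem_Ioi.mp hx))
  have hV2b : (0:ℝ) ≤ b ^ (1 - α₂ * (1 - θ)) / (1 - α₂ * (1 - θ)) :=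
    div_nonneg (Real.rpow_nonneg hb0.le _) (by linarith)
  have hV2b' : (0:ℝ) ≤ b ^ (1 - (α₂ * (1 - θ) + α₂)) / (α₂ * (1 - θ) + α₂ - 1) :=
    div_nonneg (Real.rpow_nonneg hb0.le _) (by linarith)
  have hV2b'' : (0:ℝ) ≤ b ^ (1 - (α₂ * (1 - u) + α₂ * (1 - u))) / (α₂ * (1 - u) + α₂ * (1 - u) - 1) :=
    div_nonneg (Real.rpow_nonneg hb0.le _) (by linarith)
  have hD0 : (0:ℝ) < M ^ (1 / α₁ + 1 / α₂ - 2) := Real.rpow_pos_of_pos hM0 _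
  -- the four piece estimates
  have hP11 : (∫⁻ t in Set.Icc (1:ℝ) a, ∫⁻ s in Set.Icc (1:ℝ) b, ENNReal.ofReal (1 / ((t ^ α₁ + s ^ α₂) * ((t + (k : ℝ)) ^ α₁ + (s + (n : ℝ)) ^ α₂)))) ≤
      ENNReal.ofReal (K₁₁ * M ^ (1 / α₁ + 1 / α₂ - 2)) := by
    have h := piece (fun t s => 1 / ((t ^ α₁ + s ^ α₂) * ((t + (k : ℝ)) ^ α₁ + (s + (n : ℝ)) ^ α₂))) (by positivity : (0:ℝ) ≤ 1/M) hV2b hSa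
      (fun t ht s hs => (hpt t (Set.mem_Icc.mp ht).1 s (Set.mem_Icc.mp hs).1).1)
      (lint_Icc hp₁0 hp₁1 ha1) (lint_Icc hq₁0 hq₁1 hb1)
    refine h.trans_eq (congrArg ENNReal.ofReal ?_)
    rw [hadef, hbdef, ← Real.rpow_mul hM0.le, ← Real.rpow_mul hM0.le,
      show 1 / α₁ + 1 / α₂ - 2
          = 1 / α₂ * (1 - α₂ * (1 - θ)) + (1 / α₁ * (1 - α₁ * θ) + (-1)) from by
        field_simp; ring,
      Real.rpow_add hM0, Real.rpow_add hM0, Real.rpow_neg_one, hK11]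
    ring
  have hP12 : (∫⁻ t in Set.Icc (1:ℝ) a, ∫⁻ s in Set.Ioi b, ENNReal.ofReal (1 / ((t ^ α₁ + s ^ α₂) * ((t + (k : ℝ)) ^ α₁ + (s + (n : ℝ)) ^ α₂)))) ≤
      ENNReal.ofReal (K₁₂ * M ^ (1 / α₁ + 1 / α₂ - 2)) := by
    have h := piece (fun t s => 1 / ((t ^ α₁ + s ^ α₂) * ((t + (k : ℝ)) ^ α₁ + (s + (n : ℝ)) ^ α₂))) (zero_le_one) hV2b' hSa
      (fun t ht s hs => (hpt t (Set.mem_Icc.mp ht).1 s (hb1.trans (Set.mem_Ioi.mp hs).le)).2.1)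
      (lint_Icc hp₁0 hp₁1 ha1) (lint_Ioi hq₂1 hb0).le
    refine h.trans_eq (congrArg ENNReal.ofReal ?_)
    rw [hadef, hbdef, ← Real.rpow_mul hM0.le, ← Real.rpow_mul hM0.le,
      show 1 / α₁ + 1 / α₂ - 2
          = 1 / α₂ * (1 - (α₂ * (1 - θ) + α₂)) + 1 / α₁ * (1 - α₁ * θ) from by
        field_simp; ring,
      Real.rpow_add hM0, hK12]
    ring
  have hP21 : (∫⁻ t in Set.Ioi a, ∫⁻ s in Set.Icc (1:ℝ) b, ENNReal.ofReal (1 / ((t ^ α₁ + s ^ α₂) * ((t + (k : ℝ)) ^ α₁ + (s + (n : ℝ)) ^ α₂)))) ≤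
      ENNReal.ofReal (K₂₁ * M ^ (1 / α₁ + 1 / α₂ - 2)) := by
    have h := piece (fun t s => 1 / ((t ^ α₁ + s ^ α₂) * ((t + (k : ℝ)) ^ α₁ + (s + (n : ℝ)) ^ α₂))) (zero_le_one) hV2b hSa'
      (fun t ht s hs => (hpt t (ha1.trans (Set.mem_Ioi.mp ht).le) s (Set.mem_Icc.mp hs).1).2.2.1)
      (lint_Ioi hp₂1 ha0).le (lint_Icc hq₁0 hq₁1 hb1)
    refine h.trans_eq (congrArg ENNReal.ofReal ?_)
    rw [hadef, hbdef, ← Real.rpow_mul hM0.le, ← Real.rpow_mul hM0.le,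
      show 1 / α₁ + 1 / α₂ - 2
          = 1 / α₂ * (1 - α₂ * (1 - θ)) + 1 / α₁ * (1 - (α₁ * θ + α₁)) from by
        field_simp; ring,
      Real.rpow_add hM0, hK21]
    ring
  have hP22 : (∫⁻ t in Set.Ioi a, ∫⁻ s in Set.Ioi b, ENNReal.ofReal (1 / ((t ^ α₁ + s ^ α₂) * ((t + (k : ℝ)) ^ α₁ + (s + (n : ℝ)) ^ α₂)))) ≤
      ENNReal.ofReal (K₂₂ * M ^ (1 / α₁ + 1 / α₂ - 2)) := by
    have h := piece (fun t s => 1 / ((t ^ α₁ + s ^ α₂) * ((t + (k : ℝ)) ^ α₁ + (s + (n : ℝ)) ^ α₂))) (zero_le_one) hV2b'' hSa'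
      (fun t ht s hs => (hpt t (ha1.trans (Set.mem_Ioi.mp ht).le) s (hb1.trans (Set.mem_Ioi.mp hs).le)).2.2.2)
      (lint_Ioi hp₃1 ha0).le (lint_Ioi hq₃1 hb0).le
    refine h.trans_eq (congrArg ENNReal.ofReal ?_)
    rw [hadef, hbdef, ← Real.rpow_mul hM0.le, ← Real.rpow_mul hM0.le,
      show 1 / α₁ + 1 / α₂ - 2
          = 1 / α₂ * (1 - (α₂ * (1 - u) + α₂ * (1 - u))) + 1 / α₁ * (1 - (α₁ * u + α₁ * u)) from by
        field_simp; ring,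
      Real.rpow_add hM0, hK22]
    ring
  -- splitting the integral
  have hd : ∀ r : ℝ, Disjoint (Set.Icc (1:ℝ) r) (Set.Ioi r) := fun r =>
    Set.disjoint_left.mpr fun x hx hx' =>
      absurd (Set.mem_Icc.mp hx).2 (not_le.mpr (Set.mem_Ioi.mp hx'))
  have hsplit : (∫⁻ t in Set.Ici (1:ℝ), ∫⁻ s in Set.Ici (1:ℝ), ENNReal.ofReal (1 / ((t ^ α₁ + s ^ α₂) * ((t + (k : ℝ)) ^ α₁ + (s + (n : ℝ)) ^ α₂)))) =
      (((∫⁻ t in Set.Icc (1:ℝ) a, ∫⁻ s in Set.Icc (1:ℝ) b, ENNReal.ofReal (1 / ((t ^ α₁ + s ^ α₂) * ((t + (k : ℝ)) ^ α₁ + (s + (n : ℝ)) ^ α₂)))) + (∫⁻ t in Set.Ioi a, ∫⁻ s in Set.Icc (1:ℝ) b, ENNReal.ofReal (1 / ((t ^ α₁ + s ^ α₂) * ((t + (k : ℝ)) ^ α₁ + (s + (n : ℝ)) ^ α₂))))) +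
       ((∫⁻ t in Set.Icc (1:ℝ) a, ∫⁻ s in Set.Ioi b, ENNReal.ofReal (1 / ((t ^ α₁ + s ^ α₂) * ((t + (k : ℝ)) ^ α₁ + (s + (n : ℝ)) ^ α₂)))) + (∫⁻ t in Set.Ioi a, ∫⁻ s in Set.Ioi b, ENNReal.ofReal (1 / ((t ^ α₁ + s ^ α₂) * ((t + (k : ℝ)) ^ α₁ + (s + (n : ℝ)) ^ α₂)))))) := by
    have hinner : ∀ t : ℝ, (∫⁻ s in Set.Ici (1:ℝ), ENNReal.ofReal (1 / ((t ^ α₁ + s ^ α₂) * ((t + (k : ℝ)) ^ α₁ + (s + (n : ℝ)) ^ α₂)))) =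
        (∫⁻ s in Set.Icc (1:ℝ) b, ENNReal.ofReal (1 / ((t ^ α₁ + s ^ α₂) * ((t + (k : ℝ)) ^ α₁ + (s + (n : ℝ)) ^ α₂)))) +
          ∫⁻ s in Set.Ioi b, ENNReal.ofReal (1 / ((t ^ α₁ + s ^ α₂) * ((t + (k : ℝ)) ^ α₁ + (s + (n : ℝ)) ^ α₂))) := fun t => by
      rw [← Set.Icc_union_Ioi_eq_Ici hb1, lintegral_union measurableSet_Ioi (hd b)]
    rw [lintegral_congr hinner, lintegral_add_left (hFm.lintegral_prod_right) _,
      ← Set.Icc_union_Ioi_eq_Ici ha1, lintegral_union measurableSet_Ioi (hd a),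
      lintegral_union measurableSet_Ioi (hd a)]
  have hup : (∫⁻ t in Set.Ici (1:ℝ), ∫⁻ s in Set.Ici (1:ℝ), ENNReal.ofReal (1 / ((t ^ α₁ + s ^ α₂) * ((t + (k : ℝ)) ^ α₁ + (s + (n : ℝ)) ^ α₂)))) ≤
      ENNReal.ofReal ((1/144 + (K₁₁ + K₁₂ + K₂₁ + K₂₂)) * M ^ (1 / α₁ + 1 / α₂ - 2)) := by
    rw [hsplit]
    set D : ℝ := M ^ (1 / α₁ + 1 / α₂ - 2) with hDdef
    calc (((∫⁻ t in Set.Icc (1:ℝ) a, ∫⁻ s in Set.Icc (1:ℝ) b, ENNReal.ofReal (1 / ((t ^ α₁ + s ^ α₂) * ((t + (k : ℝ)) ^ α₁ + (s + (n : ℝ)) ^ α₂)))) + (∫⁻ t in Set.Ioi a, ∫⁻ s in Set.Icc (1:ℝ) b, ENNReal.ofReal (1 / ((t ^ α₁ + s ^ α₂) * ((t + (k : ℝ)) ^ α₁ + (s + (n : ℝ)) ^ α₂))))) +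
       ((∫⁻ t in Set.Icc (1:ℝ) a, ∫⁻ s in Set.Ioi b, ENNReal.ofReal (1 / ((t ^ α₁ + s ^ α₂) * ((t + (k : ℝ)) ^ α₁ + (s + (n : ℝ)) ^ α₂)))) + (∫⁻ t in Set.Ioi a, ∫⁻ s in Set.Ioi b, ENNReal.ofReal (1 / ((t ^ α₁ + s ^ α₂) * ((t + (k : ℝ)) ^ α₁ + (s + (n : ℝ)) ^ α₂))))))
        ≤ (ENNReal.ofReal (K₁₁ * D) + ENNReal.ofReal (K₂₁ * D)) +
          (ENNReal.ofReal (K₁₂ * D) + ENNReal.ofReal (K₂₂ * D)) :=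
          add_le_add (add_le_add hP11 hP21) (add_le_add hP12 hP22)
      _ = ENNReal.ofReal ((K₁₁ * D + K₂₁ * D) + (K₁₂ * D + K₂₂ * D)) := by
          rw [← ENNReal.ofReal_add (mul_nonneg hK11p.le hD0.le) (mul_nonneg hK21p.le hD0.le),
            ← ENNReal.ofReal_add (mul_nonneg hK12p.le hD0.le) (mul_nonneg hK22p.le hD0.le),
            ← ENNReal.ofReal_add (add_nonneg (mul_nonneg hK11p.le hD0.le) (mul_nonneg hK21p.le hD0.le))
              (add_nonneg (mul_nonneg hK12p.le hD0.le) (mul_nonneg hK22p.le hD0.le))]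
      _ ≤ ENNReal.ofReal ((1/144 + (K₁₁ + K₁₂ + K₂₁ + K₂₂)) * D) := by
          refine ENNReal.ofReal_le_ofReal ?_
          have hexp : (1/144 + (K₁₁ + K₁₂ + K₂₁ + K₂₂)) * D =
              1/144 * D + ((K₁₁ * D + K₂₁ * D) + (K₁₂ * D + K₂₂ * D)) := by ring
          rw [hexp]
          have : (0:ℝ) ≤ 1/144 * D := by positivity
          linarith
  -- lower bound
  have hloweq : 1/144 * M ^ (1 / α₁ + 1 / α₂ - 2) =
      (1 / (144 * (M * M))) * ((2 * b - b) * (2 * a - a)) := by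
    have hM2 : M ^ (2:ℝ) = M * M := by
      rw [show (2:ℝ) = ((2:ℕ):ℝ) from by norm_num, Real.rpow_natCast]; ring
    have hMneg2 : M ^ (-2:ℝ) = M⁻¹ * M⁻¹ := by
      rw [show (-2:ℝ) = -(2:ℝ) from by norm_num, Real.rpow_neg hM0.le, hM2, mul_inv]
    rw [hadef, hbdef, show 1 / α₁ + 1 / α₂ - 2 = 1 / α₁ + (1 / α₂ + (-2:ℝ)) from by ring,
      Real.rpow_add hM0, Real.rpow_add hM0, hMneg2]
    have hMne : M ≠ 0 := ne_of_gt hM0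
    field_simp
    ring
  have hlb : ∀ t ∈ Set.Icc a (2*a), ∀ s ∈ Set.Icc b (2*b),
      1 / (144 * (M * M)) ≤ 1 / ((t ^ α₁ + s ^ α₂) * ((t + (k : ℝ)) ^ α₁ + (s + (n : ℝ)) ^ α₂)) := by
    intro t ht s hs
    obtain ⟨hta, ht2⟩ := Set.mem_Icc.mp ht
    obtain ⟨hsb, hs2⟩ := Set.mem_Icc.mp hs
    have ht1 : (1:ℝ) ≤ t := le_trans ha1 hta
    have hs1 : (1:ℝ) ≤ s := le_trans hb1 hsb
    have ht0 : (0:ℝ) < t := lt_of_lt_of_le zero_lt_one ht1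
    have hs0 : (0:ℝ) < s := lt_of_lt_of_le zero_lt_one hs1
    have haM : a ^ α₁ = M := by
      rw [hadef, ← Real.rpow_mul hM0.le, one_div_mul_cancel hα₁ne, Real.rpow_one]
    have hbM : b ^ α₂ = M := by
      rw [hbdef, ← Real.rpow_mul hM0.le, one_div_mul_cancel hα₂ne, Real.rpow_one]
    have hka : (k:ℝ) ≤ a := by
      have h1 : ((k:ℝ) ^ α₁) ^ (1/α₁) ≤ M ^ (1/α₁) :=
        Real.rpow_le_rpow (Real.rpow_nonneg hk0 _)
          (le_add_of_nonneg_right (Real.rpow_nonneg hn0 _)) (by positivity)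
      rwa [← Real.rpow_mul hk0, mul_one_div_cancel hα₁ne, Real.rpow_one, ← hadef] at h1
    have hnb : (n:ℝ) ≤ b := by
      have h1 : ((n:ℝ) ^ α₂) ^ (1/α₂) ≤ M ^ (1/α₂) :=
        Real.rpow_le_rpow (Real.rpow_nonneg hn0 _)
          (le_add_of_nonneg_left (Real.rpow_nonneg hk0 _)) (by positivity)
      rwa [← Real.rpow_mul hn0, mul_one_div_cancel hα₂ne, Real.rpow_one, ← hbdef] at h1
    have hsq : ∀ x : ℝ, 1 ≤ x → x ^ (2:ℝ) = x * x := fun x hx => by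
      rw [show (2:ℝ) = ((2:ℕ):ℝ) from by norm_num, Real.rpow_natCast]; ring
    have h2a : (2:ℝ) ^ α₁ ≤ 4 := by
      calc (2:ℝ) ^ α₁ ≤ (2:ℝ) ^ (2:ℝ) := Real.rpow_le_rpow_of_exponent_le one_le_two h12
      _ = 4 := by rw [hsq 2 one_le_two]; norm_num
    have h2b : (2:ℝ) ^ α₂ ≤ 4 := by
      calc (2:ℝ) ^ α₂ ≤ (2:ℝ) ^ (2:ℝ) := Real.rpow_le_rpow_of_exponent_le one_le_two h2lt.le
      _ = 4 := by rw [hsq 2 one_le_two]; norm_num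
    have h3a : (3:ℝ) ^ α₁ ≤ 9 := by
      calc (3:ℝ) ^ α₁ ≤ (3:ℝ) ^ (2:ℝ) :=
        Real.rpow_le_rpow_of_exponent_le (by norm_num) h12
      _ = 9 := by rw [hsq 3 (by norm_num)]; norm_num
    have h3b : (3:ℝ) ^ α₂ ≤ 9 := by
      calc (3:ℝ) ^ α₂ ≤ (3:ℝ) ^ (2:ℝ) :=
        Real.rpow_le_rpow_of_exponent_le (by norm_num) h2lt.le
      _ = 9 := by rw [hsq 3 (by norm_num)]; norm_num
    have hAub : t ^ α₁ + s ^ α₂ ≤ 8 * M := by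
      have h1 : t ^ α₁ ≤ 2 ^ α₁ * M := by
        calc t ^ α₁ ≤ (2*a) ^ α₁ := Real.rpow_le_rpow ht0.le ht2 hα₁.le
        _ = 2 ^ α₁ * a ^ α₁ := Real.mul_rpow (by norm_num) ha0.le
        _ = 2 ^ α₁ * M := by rw [haM]
      have h2' : s ^ α₂ ≤ 2 ^ α₂ * M := by
        calc s ^ α₂ ≤ (2*b) ^ α₂ := Real.rpow_le_rpow hs0.le hs2 h2.le
        _ = 2 ^ α₂ * b ^ α₂ := Real.mul_rpow (by norm_num) hb0.le
        _ = 2 ^ α₂ * M := by rw [hbM]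
      have h1' : 2 ^ α₁ * M ≤ 4 * M := mul_le_mul_of_nonneg_right h2a hM0.le
      have h2'' : 2 ^ α₂ * M ≤ 4 * M := mul_le_mul_of_nonneg_right h2b hM0.le
      linarith
    have hBub : (t + (k:ℝ)) ^ α₁ + (s + (n:ℝ)) ^ α₂ ≤ 18 * M := by
      have h1 : (t + (k:ℝ)) ^ α₁ ≤ 3 ^ α₁ * M := by
        calc (t + (k:ℝ)) ^ α₁ ≤ (3*a) ^ α₁ :=
          Real.rpow_le_rpow (by linarith) (by linarith) hα₁.le
        _ = 3 ^ α₁ * a ^ α₁ := Real.mul_rpow (by norm_num) ha0.le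
        _ = 3 ^ α₁ * M := by rw [haM]
      have h2' : (s + (n:ℝ)) ^ α₂ ≤ 3 ^ α₂ * M := by
        calc (s + (n:ℝ)) ^ α₂ ≤ (3*b) ^ α₂ :=
          Real.rpow_le_rpow (by linarith) (by linarith) h2.le
        _ = 3 ^ α₂ * b ^ α₂ := Real.mul_rpow (by norm_num) hb0.le
        _ = 3 ^ α₂ * M := by rw [hbM]
      have h1' : 3 ^ α₁ * M ≤ 9 * M := mul_le_mul_of_nonneg_right h3a hM0.le
      have h2'' : 3 ^ α₂ * M ≤ 9 * M := mul_le_mul_of_nonneg_right h3b hM0.le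
      linarith
    have hApos : 0 < t ^ α₁ + s ^ α₂ :=
      add_pos (Real.rpow_pos_of_pos ht0 _) (Real.rpow_pos_of_pos hs0 _)
    have hBpos : 0 < (t + (k:ℝ)) ^ α₁ + (s + (n:ℝ)) ^ α₂ :=
      add_pos (Real.rpow_pos_of_pos (by linarith) _) (Real.rpow_pos_of_pos (by linarith) _)
    have hprod : (t ^ α₁ + s ^ α₂) * ((t + (k:ℝ)) ^ α₁ + (s + (n:ℝ)) ^ α₂) ≤ 144 * (M * M) := by
      calc (t ^ α₁ + s ^ α₂) * ((t + (k:ℝ)) ^ α₁ + (s + (n:ℝ)) ^ α₂)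
          ≤ (8 * M) * (18 * M) := mul_le_mul hAub hBub hBpos.le (by positivity)
      _ = 144 * (M * M) := by ring
    exact one_div_le_one_div_of_le (mul_pos hApos hBpos) hprod
  have hv0 : (0:ℝ) ≤ 1 / (144 * (M * M)) := by positivity
  have hlow : ENNReal.ofReal (1/144 * M ^ (1 / α₁ + 1 / α₂ - 2)) ≤
      (∫⁻ t in Set.Ici (1:ℝ), ∫⁻ s in Set.Ici (1:ℝ), ENNReal.ofReal (1 / ((t ^ α₁ + s ^ α₂) * ((t + (k : ℝ)) ^ α₁ + (s + (n : ℝ)) ^ α₂)))) := by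
    have hvval : (∫⁻ t in Set.Icc a (2*a), ∫⁻ s in Set.Icc b (2*b),
        ENNReal.ofReal (1 / (144 * (M * M)))) =
        ENNReal.ofReal ((1 / (144 * (M * M))) * ((2 * b - b) * (2 * a - a))) := by
      simp only [MeasureTheory.setLIntegral_const, Real.volume_Icc]
      rw [← ENNReal.ofReal_mul hv0,
        ← ENNReal.ofReal_mul (mul_nonneg hv0 (by linarith : (0:ℝ) ≤ 2*b - b))]
      congr 1
      ring
    calc ENNReal.ofReal (1/144 * M ^ (1 / α₁ + 1 / α₂ - 2))
        = ∫⁻ t in Set.Icc a (2*a), ∫⁻ s in Set.Icc b (2*b),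
            ENNReal.ofReal (1 / (144 * (M * M))) := by
          rw [hvval]; exact congrArg ENNReal.ofReal hloweq
      _ ≤ (∫⁻ t in Set.Icc a (2*a), ∫⁻ s in Set.Icc b (2*b), ENNReal.ofReal (1 / ((t ^ α₁ + s ^ α₂) * ((t + (k : ℝ)) ^ α₁ + (s + (n : ℝ)) ^ α₂)))) :=
          setLIntegral_mono (hFm.lintegral_prod_right)
            (fun t ht => setLIntegral_mono (hFm.of_uncurry_left)
              (fun s hs => ENNReal.ofReal_le_ofReal (hlb t ht s hs)))
      _ ≤ (∫⁻ t in Set.Icc a (2*a), ∫⁻ s in Set.Ici (1:ℝ), ENNReal.ofReal (1 / ((t ^ α₁ + s ^ α₂) * ((t + (k : ℝ)) ^ α₁ + (s + (n : ℝ)) ^ α₂)))) :=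
          lintegral_mono fun t => lintegral_mono_set
            (fun x hx => Set.mem_Ici.mpr (le_trans hb1 (Set.mem_Icc.mp hx).1))
      _ ≤ (∫⁻ t in Set.Ici (1:ℝ), ∫⁻ s in Set.Ici (1:ℝ), ENNReal.ofReal (1 / ((t ^ α₁ + s ^ α₂) * ((t + (k : ℝ)) ^ α₁ + (s + (n : ℝ)) ^ α₂)))) :=
          lintegral_mono_set (fun x hx => Set.mem_Ici.mpr (le_trans ha1 (Set.mem_Icc.mp hx).1))
  exact ⟨ne_top_of_le_ne_top ENNReal.ofReal_ne_top hup, hlow, hup⟩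
end

section
/- Let $2 \geq \alpha_1 \geq \alpha_2 > 0$ with $2 - 1/\alpha_1 - 1/\alpha_2 \leq 0$. Then $\int_1^{\infty}\int_1^{\infty} \frac{dt\, ds}{(t^{\alpha_1} + s^{\alpha_2})^2} = \infty$. -/
open Set MeasureTheory Real

theorem stmt8 (α₁ α₂ : ℝ) (h2 : 0 < α₂) (h21 : α₂ ≤ α₁) (h12 : α₁ ≤ 2)
    (hγ : 2 - 1 / α₁ - 1 / α₂ ≤ 0) :
    (∫⁻ t in Ici (1 : ℝ), ∫⁻ s in Ici (1 : ℝ),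
        ENNReal.ofReal (1 / (t ^ α₁ + s ^ α₂) ^ 2)) = ⊤ := by
  have hα₁ : 0 < α₁ := h2.trans_le h21
  -- exponent inequality
  have hkey : (1:ℝ) + α₁ / α₂ ≥ 2 * α₁ := by
    have h1 : (2:ℝ) ≤ 1 / α₁ + 1 / α₂ := by linarith
    have h3 := mul_le_mul_of_nonneg_left h1 hα₁.le
    rw [mul_add, mul_one_div, mul_one_div, div_self hα₁.ne'] at h3
    linarith
  have he : (-1:ℝ) ≤ α₁ / α₂ - 2 * α₁ := by linarith
  -- divergence of ∫ t^{-1}/8 on Ioi 2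
  have hcore : ∫⁻ t in Ioi (2:ℝ), ENNReal.ofReal (t ^ (-1:ℝ) / 8) = ⊤ := by
    by_contra h
    have hint : IntegrableOn (fun t : ℝ => t ^ (-1:ℝ) / 8) (Ioi 2) :=
      (lintegral_ofReal_ne_top_iff_integrable
        (Measurable.aestronglyMeasurable (by fun_prop))
        (by
          filter_upwards [ae_restrict_mem measurableSet_Ioi] with x hx
          have : (0:ℝ) ≤ x := by linarith [mem_Ioi.mp hx]
          positivity)).1 h
    have hint2 : IntegrableOn (fun t : ℝ => t ^ (-1:ℝ)) (Ioi 2) := by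
      have := hint.const_mul 8
      simp [mul_div_cancel₀] at this
      exact this
    have := (integrableOn_Ioi_rpow_iff (by norm_num : (0:ℝ) < 2)).1 hint2
    linarith
  rw [eq_top_iff, ← hcore]
  refine le_trans (setLIntegral_mono' measurableSet_Ioi ?_)
    (lintegral_mono_set (fun x hx => mem_Ici.mpr (le_of_lt (by linarith [mem_Ioi.mp hx]))))
  intro t ht
  have ht2 : 2 < t := mem_Ioi.mp ht
  have ht0 : (0:ℝ) < t := by linarith
  have ht1 : (1:ℝ) ≤ t := by linarith
  set T := t ^ (α₁ / α₂) with hTdef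
  have hratio : (1:ℝ) ≤ α₁ / α₂ := (one_le_div h2).mpr h21
  have hT2 : (2:ℝ) ≤ T := by
    calc (2:ℝ) ≤ t := ht2.le
    _ = t ^ (1:ℝ) := (Real.rpow_one t).symm
    _ ≤ T := Real.rpow_le_rpow_of_exponent_le ht1 hratio
  have htα : (0:ℝ) < t ^ α₁ := Real.rpow_pos_of_pos ht0 _
  have hTα : T ^ α₂ = t ^ α₁ := by
    rw [hTdef, ← Real.rpow_mul ht0.le, div_mul_cancel₀ _ h2.ne']
  -- inner bound
  calc ENNReal.ofReal (t ^ (-1:ℝ) / 8)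
      ≤ ENNReal.ofReal (1 / (2 * t ^ α₁) ^ 2) * ENNReal.ofReal (T - 1) := by
        rw [← ENNReal.ofReal_mul (by positivity)]
        apply ENNReal.ofReal_le_ofReal
        have hsq : (2 * t ^ α₁) ^ 2 = 4 * (t ^ α₁) ^ 2 := by ring
        have hP : (t ^ α₁) ^ 2 = t ^ (2 * α₁) := by
          rw [← Real.rpow_natCast (t ^ α₁) 2, ← Real.rpow_mul ht0.le]
          norm_num [mul_comm]
        have hEP : t ^ (α₁ / α₂ - 2 * α₁) * t ^ (2 * α₁) = T := by
          rw [← Real.rpow_add ht0]; ring_nf; rw [hTdef, div_eq_mul_inv]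
        have hA : t ^ (-1:ℝ) ≤ t ^ (α₁ / α₂ - 2 * α₁) :=
          Real.rpow_le_rpow_of_exponent_le ht1 he
        have hPpos : (0:ℝ) < t ^ (2 * α₁) := Real.rpow_pos_of_pos ht0 _
        have hApos : (0:ℝ) < t ^ (-1:ℝ) := Real.rpow_pos_of_pos ht0 _
        rw [one_div, mul_comm, ← div_eq_mul_inv, hsq, hP, div_le_div_iff₀ (by norm_num) (by positivity)]
        nlinarith [hA, hEP, hT2, hPpos, hApos]
    _ = ENNReal.ofReal (1 / (2 * t ^ α₁) ^ 2) * volume (Icc (1:ℝ) T) := by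
        rw [Real.volume_Icc]
    _ = ∫⁻ s in Icc (1:ℝ) T, ENNReal.ofReal (1 / (2 * t ^ α₁) ^ 2) := by
        rw [setLIntegral_const]
    _ ≤ ∫⁻ s in Icc (1:ℝ) T, ENNReal.ofReal (1 / (t ^ α₁ + s ^ α₂) ^ 2) := by
        apply setLIntegral_mono' measurableSet_Icc
        intro s hs
        apply ENNReal.ofReal_le_ofReal
        have hs0 : (0:ℝ) ≤ s := by linarith [hs.1]
        have hsα : s ^ α₂ ≤ t ^ α₁ := by
          rw [← hTα]; exact Real.rpow_le_rpow hs0 hs.2 h2.le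
        have hsαpos : (0:ℝ) < s ^ α₂ := Real.rpow_pos_of_pos (by linarith [hs.1]) _
        apply one_div_le_one_div_of_le (by positivity)
        nlinarith
    _ ≤ ∫⁻ s in Ici (1:ℝ), ENNReal.ofReal (1 / (t ^ α₁ + s ^ α₂) ^ 2) :=
        lintegral_mono_set (fun x hx => hx.1)
end

section
/- Let $0 < \alpha_3 \leq \alpha_2 \leq \alpha_1 \leq 2$ with $2 - 1/\alpha_1 - 1/\alpha_2 - 1/\alpha_3 \leq 0$. Then $\int_1^{\infty}\int_1^{\infty}\int_1^{\infty} \frac{dx_1\, dx_2\, dx_3}{(x_1^{\alpha_1} + x_2^{\alpha_2} + x_3^{\alpha_3})^2} = \infty$. -/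
open Set MeasureTheory Real

theorem stmt9 (α₁ α₂ α₃ : ℝ) (h3 : 0 < α₃) (h32 : α₃ ≤ α₂) (h21 : α₂ ≤ α₁) (h12 : α₁ ≤ 2)
    (hγ : 2 - 1 / α₁ - 1 / α₂ - 1 / α₃ ≤ 0) :
    (∫⁻ x₁ in Ici (1 : ℝ), ∫⁻ x₂ in Ici (1 : ℝ), ∫⁻ x₃ in Ici (1 : ℝ),
        ENNReal.ofReal (1 / (x₁ ^ α₁ + x₂ ^ α₂ + x₃ ^ α₃) ^ 2)) = ⊤ := by
  have hα2 : 0 < α₂ := lt_of_lt_of_le h3 h32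
  have hα1 : 0 < α₁ := lt_of_lt_of_le hα2 h21
  set β₂ := α₁ / α₂ with hb2
  set β₃ := α₁ / α₃ with hb3
  have hβ₂ : 1 ≤ β₂ := (one_le_div hα2).2 h21
  have hβ₃ : 1 ≤ β₃ := (one_le_div h3).2 (h32.trans h21)
  have hexp : -1 ≤ β₂ + β₃ - (α₁ + α₁) := by
    have hA : 2 - 1/α₁ ≤ 1/α₂ + 1/α₃ := by linarith
    have hmul := mul_le_mul_of_nonneg_left hA hα1.le
    have h1 : α₁ * (1/α₁) = 1 := by field_simp
    have h2 : α₁ * (1/α₂) = β₂ := by rw [hb2, mul_one_div]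
    have h3' : α₁ * (1/α₃) = β₃ := by rw [hb3, mul_one_div]
    rw [mul_sub, mul_add, h1, h2, h3'] at hmul
    linarith
  have key : ∀ x₁ : ℝ, x₁ ∈ Ici (2:ℝ) →
      ENNReal.ofReal (x₁ ^ (-1:ℝ) * (1/36)) ≤
      ∫⁻ x₂ in Ici (1:ℝ), ∫⁻ x₃ in Ici (1:ℝ),
        ENNReal.ofReal (1 / (x₁ ^ α₁ + x₂ ^ α₂ + x₃ ^ α₃) ^ 2) := by
    intro x₁ hx₁
    simp only [mem_Ici] at hx₁
    have hx1 : (1:ℝ) ≤ x₁ := by linarith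
    have hx0 : (0:ℝ) < x₁ := by linarith
    have hD : (0:ℝ) < x₁ ^ α₁ := rpow_pos_of_pos hx0 _
    have hB₂ : (2:ℝ) ≤ x₁ ^ β₂ := by
      calc (2:ℝ) ≤ x₁ := hx₁
        _ = x₁ ^ (1:ℝ) := (rpow_one _).symm
        _ ≤ x₁ ^ β₂ := rpow_le_rpow_of_exponent_le hx1 hβ₂
    have hB₃ : (2:ℝ) ≤ x₁ ^ β₃ := by
      calc (2:ℝ) ≤ x₁ := hx₁
        _ = x₁ ^ (1:ℝ) := (rpow_one _).symm
        _ ≤ x₁ ^ β₃ := rpow_le_rpow_of_exponent_le hx1 hβ₃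
    have inner : ∀ x₂ ∈ Icc (1:ℝ) (x₁ ^ β₂),
        ENNReal.ofReal (1 / (9 * (x₁ ^ α₁) ^ 2)) * ENNReal.ofReal (x₁ ^ β₃ - 1) ≤
        ∫⁻ x₃ in Ici (1:ℝ),
          ENNReal.ofReal (1 / (x₁ ^ α₁ + x₂ ^ α₂ + x₃ ^ α₃) ^ 2) := by
      intro x₂ hx₂
      have hx₂0 : (0:ℝ) < x₂ := lt_of_lt_of_le zero_lt_one hx₂.1
      have hx2a : x₂ ^ α₂ ≤ x₁ ^ α₁ := by
        calc x₂ ^ α₂ ≤ (x₁ ^ β₂) ^ α₂ := rpow_le_rpow hx₂0.le hx₂.2 hα2.le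
          _ = x₁ ^ (β₂ * α₂) := by rw [← Real.rpow_mul hx0.le]
          _ = x₁ ^ α₁ := by rw [hb2, div_mul_cancel₀ _ hα2.ne']
      have pointwise : ∀ x₃ ∈ Icc (1:ℝ) (x₁ ^ β₃),
          ENNReal.ofReal (1 / (9 * (x₁ ^ α₁) ^ 2)) ≤
          ENNReal.ofReal (1 / (x₁ ^ α₁ + x₂ ^ α₂ + x₃ ^ α₃) ^ 2) := by
        intro x₃ hx₃
        have hx₃0 : (0:ℝ) < x₃ := lt_of_lt_of_le zero_lt_one hx₃.1
        have hx3a : x₃ ^ α₃ ≤ x₁ ^ α₁ := by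
          calc x₃ ^ α₃ ≤ (x₁ ^ β₃) ^ α₃ := rpow_le_rpow hx₃0.le hx₃.2 h3.le
            _ = x₁ ^ (β₃ * α₃) := by rw [← Real.rpow_mul hx0.le]
            _ = x₁ ^ α₁ := by rw [hb3, div_mul_cancel₀ _ h3.ne']
        have hs2 : (0:ℝ) < x₂ ^ α₂ := rpow_pos_of_pos hx₂0 _
        have hs3 : (0:ℝ) < x₃ ^ α₃ := rpow_pos_of_pos hx₃0 _
        have hspos : (0:ℝ) < x₁ ^ α₁ + x₂ ^ α₂ + x₃ ^ α₃ := by linarith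
        refine ENNReal.ofReal_le_ofReal ?_
        refine one_div_le_one_div_of_le (by positivity) ?_
        nlinarith
      calc ENNReal.ofReal (1 / (9 * (x₁ ^ α₁) ^ 2)) * ENNReal.ofReal (x₁ ^ β₃ - 1)
          = ∫⁻ _ in Icc (1:ℝ) (x₁ ^ β₃), ENNReal.ofReal (1 / (9 * (x₁ ^ α₁) ^ 2)) := by
            rw [setLIntegral_const, Real.volume_Icc]
        _ ≤ ∫⁻ x₃ in Icc (1:ℝ) (x₁ ^ β₃),
              ENNReal.ofReal (1 / (x₁ ^ α₁ + x₂ ^ α₂ + x₃ ^ α₃) ^ 2) :=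
            setLIntegral_mono' measurableSet_Icc pointwise
        _ ≤ ∫⁻ x₃ in Ici (1:ℝ),
              ENNReal.ofReal (1 / (x₁ ^ α₁ + x₂ ^ α₂ + x₃ ^ α₃) ^ 2) :=
            lintegral_mono_set Icc_subset_Ici_self
    have hreal : x₁ ^ (-1:ℝ) * (1/36) ≤
        1 / (9 * (x₁ ^ α₁) ^ 2) * (x₁ ^ β₃ - 1) * (x₁ ^ β₂ - 1) := by
      have e3 : x₁ ^ β₃ / 2 ≤ x₁ ^ β₃ - 1 := by linarith
      have e2 : x₁ ^ β₂ / 2 ≤ x₁ ^ β₂ - 1 := by linarith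
      have step1 : x₁ ^ (-1:ℝ) ≤ x₁ ^ (β₂ + β₃ - (α₁ + α₁)) :=
        rpow_le_rpow_of_exponent_le hx1 hexp
      have step2 : x₁ ^ (β₂ + β₃ - (α₁ + α₁)) =
          x₁ ^ β₂ * x₁ ^ β₃ / (x₁ ^ α₁ * x₁ ^ α₁) := by
        rw [Real.rpow_sub hx0, Real.rpow_add hx0, Real.rpow_add hx0]
      have ha : (0:ℝ) ≤ 1 / (9 * (x₁ ^ α₁) ^ 2) := by positivity
      have step3 : 1 / (9 * (x₁ ^ α₁) ^ 2) * (x₁ ^ β₃ / 2) * (x₁ ^ β₂ / 2) ≤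
          1 / (9 * (x₁ ^ α₁) ^ 2) * (x₁ ^ β₃ - 1) * (x₁ ^ β₂ - 1) :=
        mul_le_mul (mul_le_mul_of_nonneg_left e3 ha) e2 (by linarith)
          (mul_nonneg ha (by linarith))
      have step4 : x₁ ^ (β₂ + β₃ - (α₁ + α₁)) * (1/36) =
          1 / (9 * (x₁ ^ α₁) ^ 2) * (x₁ ^ β₃ / 2) * (x₁ ^ β₂ / 2) := by
        rw [step2]; field_simp; ring
      calc x₁ ^ (-1:ℝ) * (1/36) ≤ x₁ ^ (β₂ + β₃ - (α₁ + α₁)) * (1/36) := by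
            apply mul_le_mul_of_nonneg_right step1; norm_num
        _ = 1 / (9 * (x₁ ^ α₁) ^ 2) * (x₁ ^ β₃ / 2) * (x₁ ^ β₂ / 2) := step4
        _ ≤ _ := step3
    calc ENNReal.ofReal (x₁ ^ (-1:ℝ) * (1/36))
        ≤ ENNReal.ofReal (1 / (9 * (x₁ ^ α₁) ^ 2) * (x₁ ^ β₃ - 1) * (x₁ ^ β₂ - 1)) :=
          ENNReal.ofReal_le_ofReal hreal
      _ = ENNReal.ofReal (1 / (9 * (x₁ ^ α₁) ^ 2)) * ENNReal.ofReal (x₁ ^ β₃ - 1) *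
            ENNReal.ofReal (x₁ ^ β₂ - 1) := by
          rw [ENNReal.ofReal_mul (mul_nonneg (by positivity) (by linarith)),
            ENNReal.ofReal_mul (by positivity)]
      _ = ∫⁻ _ in Icc (1:ℝ) (x₁ ^ β₂),
            ENNReal.ofReal (1 / (9 * (x₁ ^ α₁) ^ 2)) * ENNReal.ofReal (x₁ ^ β₃ - 1) := by
          rw [setLIntegral_const, Real.volume_Icc]
      _ ≤ ∫⁻ x₂ in Icc (1:ℝ) (x₁ ^ β₂), ∫⁻ x₃ in Ici (1:ℝ),
            ENNReal.ofReal (1 / (x₁ ^ α₁ + x₂ ^ α₂ + x₃ ^ α₃) ^ 2) :=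
          setLIntegral_mono' measurableSet_Icc inner
      _ ≤ _ := lintegral_mono_set Icc_subset_Ici_self
  have hdiv : (∫⁻ x₁ in Ici (2:ℝ), ENNReal.ofReal (x₁ ^ (-1:ℝ) * (1/36))) = ⊤ := by
    by_contra h
    have hm : AEStronglyMeasurable (fun x : ℝ => x ^ (-1:ℝ) * (1/36))
        (volume.restrict (Ici (2:ℝ))) :=
      ((measurable_id.pow measurable_const).mul_const _).aestronglyMeasurable
    have hnn : 0 ≤ᵐ[volume.restrict (Ici (2:ℝ))] fun x : ℝ => x ^ (-1:ℝ) * (1/36) := by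
      refine (ae_restrict_iff' measurableSet_Ici).2 (Filter.Eventually.of_forall fun x hx => ?_)
      have : (0:ℝ) ≤ x := le_trans (by norm_num) hx
      positivity
    have hint : Integrable (fun x : ℝ => x ^ (-1:ℝ) * (1/36))
        (volume.restrict (Ici (2:ℝ))) :=
      (lintegral_ofReal_ne_top_iff_integrable hm hnn).1 h
    have hint' : IntegrableOn (fun x : ℝ => x ^ (-1:ℝ) * (1/36)) (Ici (2:ℝ)) := hint
    have h2 : IntegrableOn (fun x : ℝ => x ^ (-1:ℝ)) (Ioi (2:ℝ)) := by
      have h' : IntegrableOn (fun x : ℝ => x ^ (-1:ℝ) * (1/36)) (Ioi (2:ℝ)) :=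
        hint'.mono_set Ioi_subset_Ici_self
      have h'' : IntegrableOn (fun x : ℝ => 36 * (x ^ (-1:ℝ) * (1/36))) (Ioi (2:ℝ)) :=
        h'.const_mul (36:ℝ)
      exact h''.congr_fun (fun x _ => by ring) measurableSet_Ioi
    rw [integrableOn_Ioi_rpow_iff (by norm_num : (0:ℝ) < 2)] at h2
    linarith
  refine top_unique ?_
  calc (⊤ : ENNReal) = ∫⁻ x₁ in Ici (2:ℝ), ENNReal.ofReal (x₁ ^ (-1:ℝ) * (1/36)) := hdiv.symm
    _ ≤ ∫⁻ x₁ in Ici (2:ℝ), ∫⁻ x₂ in Ici (1:ℝ), ∫⁻ x₃ in Ici (1:ℝ),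
          ENNReal.ofReal (1 / (x₁ ^ α₁ + x₂ ^ α₂ + x₃ ^ α₃) ^ 2) :=
        setLIntegral_mono' measurableSet_Ici key
    _ ≤ _ := lintegral_mono_set (Ici_subset_Ici.2 one_le_two)
end

section
/- Let $2 \geq \alpha_1 \geq \alpha_2 \geq \alpha_3 > 0$ with $\gamma := 2 - 1/\alpha_1 - 1/\alpha_2 - 1/\alpha_3 > 0$, and suppose $\alpha_2 < 2$. Then for all integers $k, n, m \geq 1$ the integral $\int_1^{\infty}\int_1^{\infty}\int_1^{\infty} \frac{dx_1\,dx_2\,dx_3}{(x_1^{\alpha_1} + x_2^{\alpha_2} + x_3^{\alpha_3})\left(x_1^{\alpha_1} + x_2^{\alpha_2} + x_3^{\alpha_3} + k^{\alpha_1} + n^{\alpha_2} + m^{\alpha_3}\right)}$ is bounded above and below by constant multiples (constants depending only on $\alpha_1,\alpha_2,\alpha_3$) of $(k^{\alpha_1} + n^{\alpha_2} + m^{\alpha_3})^{-\gamma}$. -/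
open Set MeasureTheory Real
open scoped ENNReal NNReal

lemma aux_Ioc {p b : ℝ} (hp0 : 0 ≤ p) (hp1 : p < 1) (hb : 1 ≤ b) :
    ∫⁻ x in Ioc (1:ℝ) b, ENNReal.ofReal (x ^ (-p)) ≤ ENNReal.ofReal (b ^ (1 - p) / (1 - p)) := by
  have hInt : IntegrableOn (fun x : ℝ => x ^ (-p)) (Ioc 1 b) volume := by
    have := (intervalIntegral.intervalIntegrable_rpow' (a := 1) (b := b) (r := -p)
      (by linarith)).1
    simpa using this
  have hnn : 0 ≤ᵐ[volume.restrict (Ioc (1:ℝ) b)] fun x : ℝ => x ^ (-p) := by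
    filter_upwards [ae_restrict_mem measurableSet_Ioc] with x hx
    exact Real.rpow_nonneg (by linarith [hx.1]) _
  rw [← ofReal_integral_eq_lintegral_ofReal hInt hnn]
  apply ENNReal.ofReal_le_ofReal
  have hval : ∫ x in Ioc (1:ℝ) b, x ^ (-p) = (b ^ (-p + 1) - 1 ^ (-p + 1)) / (-p + 1) := by
    rw [← intervalIntegral.integral_of_le hb]
    exact integral_rpow (Or.inl (by linarith))
  rw [hval, Real.one_rpow, show -p + 1 = 1 - p by ring]
  have h1p : 0 < 1 - p := by linarith
  rw [div_le_div_iff₀ h1p h1p]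
  nlinarith [Real.rpow_nonneg (by linarith : (0:ℝ) ≤ b) (1-p)]

lemma aux_Ioi {q b : ℝ} (hq : 1 < q) (hb : 0 < b) :
    ∫⁻ x in Ioi b, ENNReal.ofReal (x ^ (-q)) ≤ ENNReal.ofReal (b ^ (1 - q) / (q - 1)) := by
  have hInt : IntegrableOn (fun x : ℝ => x ^ (-q)) (Ioi b) volume :=
    integrableOn_Ioi_rpow_of_lt (by linarith) hb
  have hnn : 0 ≤ᵐ[volume.restrict (Ioi b)] fun x : ℝ => x ^ (-q) := by
    filter_upwards [ae_restrict_mem measurableSet_Ioi] with x hx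
    exact Real.rpow_nonneg (le_of_lt (hb.trans hx)) _
  rw [← ofReal_integral_eq_lintegral_ofReal hInt hnn]
  apply ENNReal.ofReal_le_ofReal
  rw [integral_Ioi_rpow_of_lt (by linarith) hb, show -q + 1 = -(q - 1) by ring,
      show (1:ℝ) - q = -(q - 1) by ring, neg_div_neg_eq]

lemma coord_min_le {α S p x : ℝ} (hS : 0 < S) (hx : 0 < x)
    {D : ℝ} (hD1 : S ^ (p/α) * x ^ p ≤ D) (hD2 : x ^ (2*p) ≤ D) :
    D⁻¹ ≤ min (S ^ (-(p/α)) * x ^ (-p)) (x ^ (-(2*p))) := by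
  have h1 : S ^ (-(p/α)) * x ^ (-p) = (S ^ (p/α) * x ^ p)⁻¹ := by
    rw [Real.rpow_neg hS.le, Real.rpow_neg hx.le, mul_inv]
  have h2 : x ^ (-(2*p)) = (x ^ (2*p))⁻¹ := Real.rpow_neg hx.le _
  refine le_min ?_ ?_
  · rw [h1]
    exact inv_anti₀ (by positivity) hD1
  · rw [h2]
    exact inv_anti₀ (by positivity) hD2

lemma pointwise_bound {α₁ α₂ α₃ S p x₁ x₂ x₃ : ℝ}
    (hα₁ : 0 < α₁) (hα₂ : 0 < α₂) (hα₃ : 0 < α₃) (hS : 1 ≤ S) (hp : 0 < p)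
    (hw : p/α₁ + p/α₂ + p/α₃ = 1)
    (hx₁ : 1 ≤ x₁) (hx₂ : 1 ≤ x₂) (hx₃ : 1 ≤ x₃) :
    1 / ((x₁ ^ α₁ + x₂ ^ α₂ + x₃ ^ α₃) * (x₁ ^ α₁ + x₂ ^ α₂ + x₃ ^ α₃ + S)) ≤
      min (S ^ (-(p/α₁)) * x₁ ^ (-p)) (x₁ ^ (-(2*p))) *
      (min (S ^ (-(p/α₂)) * x₂ ^ (-p)) (x₂ ^ (-(2*p))) *
       min (S ^ (-(p/α₃)) * x₃ ^ (-p)) (x₃ ^ (-(2*p)))) := by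
  have hS0 : (0:ℝ) < S := by linarith
  have hx₁0 : (0:ℝ) < x₁ := by linarith
  have hx₂0 : (0:ℝ) < x₂ := by linarith
  have hx₃0 : (0:ℝ) < x₃ := by linarith
  set T := x₁ ^ α₁ + x₂ ^ α₂ + x₃ ^ α₃ with hT
  have ha₁ : 0 < x₁ ^ α₁ := Real.rpow_pos_of_pos hx₁0 _
  have ha₂ : 0 < x₂ ^ α₂ := Real.rpow_pos_of_pos hx₂0 _
  have ha₃ : 0 < x₃ ^ α₃ := Real.rpow_pos_of_pos hx₃0 _
  have hT0 : 0 < T := by rw [hT]; positivity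
  have hTS : 0 < T + S := by linarith
  have key : ∀ α x : ℝ, 0 < α → 0 < x → x ^ α ≤ T →
      S ^ (p/α) * x ^ p ≤ T ^ (p/α) * (T+S) ^ (p/α) ∧
      x ^ (2*p) ≤ T ^ (p/α) * (T+S) ^ (p/α) := by
    intro α x hα hx0 hxT
    have hw0 : (0:ℝ) ≤ p / α := by positivity
    have hxp : x ^ p = (x ^ α) ^ (p/α) := by
      rw [← Real.rpow_mul hx0.le]
      congr 1
      field_simp
    have h1 : x ^ p ≤ T ^ (p/α) := by
      rw [hxp]; exact Real.rpow_le_rpow (by positivity) hxT hw0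
    have h2 : x ^ p ≤ (T+S) ^ (p/α) :=
      h1.trans (Real.rpow_le_rpow hT0.le (by linarith) hw0)
    have h3 : S ^ (p/α) ≤ (T+S) ^ (p/α) :=
      Real.rpow_le_rpow hS0.le (by linarith) hw0
    constructor
    · calc S ^ (p/α) * x ^ p ≤ (T+S) ^ (p/α) * T ^ (p/α) :=
            mul_le_mul h3 h1 (by positivity) (by positivity)
        _ = T ^ (p/α) * (T+S) ^ (p/α) := by ring
    · have hxx : x ^ (2*p) = x ^ p * x ^ p := by
        rw [← Real.rpow_add hx0]; congr 1; ring
      rw [hxx]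
      exact mul_le_mul h1 h2 (by positivity) (by positivity)
  have k₁ := key α₁ x₁ hα₁ hx₁0 (by linarith)
  have k₂ := key α₂ x₂ hα₂ hx₂0 (by linarith)
  have k₃ := key α₃ x₃ hα₃ hx₃0 (by linarith)
  have m₁ := coord_min_le hS0 hx₁0 k₁.1 k₁.2
  have m₂ := coord_min_le hS0 hx₂0 k₂.1 k₂.2
  have m₃ := coord_min_le hS0 hx₃0 k₃.1 k₃.2
  have hprod : (T ^ (p/α₁) * (T+S) ^ (p/α₁))⁻¹ *
      ((T ^ (p/α₂) * (T+S) ^ (p/α₂))⁻¹ * (T ^ (p/α₃) * (T+S) ^ (p/α₃))⁻¹) =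
      1 / (T * (T + S)) := by
    rw [← mul_inv, ← mul_inv, one_div]
    congr 1
    rw [show T ^ (p/α₁) * (T+S) ^ (p/α₁) * (T ^ (p/α₂) * (T+S) ^ (p/α₂) *
        (T ^ (p/α₃) * (T+S) ^ (p/α₃))) =
        (T ^ (p/α₁) * T ^ (p/α₂) * T ^ (p/α₃)) *
        ((T+S) ^ (p/α₁) * (T+S) ^ (p/α₂) * (T+S) ^ (p/α₃)) by ring,
      ← Real.rpow_add hT0, ← Real.rpow_add hT0, ← Real.rpow_add hTS, ← Real.rpow_add hTS,
      hw, Real.rpow_one, Real.rpow_one]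
  calc 1 / (T * (T + S)) = _ := hprod.symm
    _ ≤ _ := by
        apply mul_le_mul m₁ (mul_le_mul m₂ m₃ (by positivity) ?_) (by positivity) ?_
        · exact le_trans (by positivity) m₂
        · exact le_trans (by positivity) m₁

lemma coord_int {α S p : ℝ} (hα : 0 < α) (hS : 1 ≤ S) (hp2 : 1/2 < p) (hp1 : p < 1) :
    ∫⁻ x in Ici (1:ℝ), ENNReal.ofReal (min (S ^ (-(p/α)) * x ^ (-p)) (x ^ (-(2*p))))
      ≤ ENNReal.ofReal ((1/(1-p) + 1/(2*p-1)) * S ^ ((1 - 2*p)/α)) := by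
  have hS0 : (0:ℝ) < S := by linarith
  have hp0 : (0:ℝ) < p := by linarith
  set b := S ^ (1/α) with hbdef
  have hb1 : (1:ℝ) ≤ b := Real.one_le_rpow hS (by positivity)
  have hb0 : (0:ℝ) < b := by linarith
  rw [← setLIntegral_congr (Ioi_ae_eq_Ici (a := (1:ℝ))), ← Ioc_union_Ioi_eq_Ioi hb1,
    lintegral_union measurableSet_Ioi Ioc_disjoint_Ioi_same]
  have hterm1 : ∫⁻ x in Ioc (1:ℝ) b, ENNReal.ofReal (min (S ^ (-(p/α)) * x ^ (-p)) (x ^ (-(2*p))))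
      ≤ ENNReal.ofReal (S ^ ((1 - 2*p)/α) / (1 - p)) := by
    calc ∫⁻ x in Ioc (1:ℝ) b, ENNReal.ofReal (min (S ^ (-(p/α)) * x ^ (-p)) (x ^ (-(2*p))))
        ≤ ∫⁻ x in Ioc (1:ℝ) b, ENNReal.ofReal (S ^ (-(p/α))) * ENNReal.ofReal (x ^ (-p)) := by
          apply setLIntegral_mono' measurableSet_Ioc
          intro x _
          rw [← ENNReal.ofReal_mul (by positivity)]
          exact ENNReal.ofReal_le_ofReal (min_le_left _ _)
      _ = ENNReal.ofReal (S ^ (-(p/α))) * ∫⁻ x in Ioc (1:ℝ) b, ENNReal.ofReal (x ^ (-p)) :=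
          lintegral_const_mul' _ _ ENNReal.ofReal_ne_top
      _ ≤ ENNReal.ofReal (S ^ (-(p/α))) * ENNReal.ofReal (b ^ (1 - p) / (1 - p)) :=
          mul_le_mul_right (aux_Ioc hp0.le hp1 hb1) _
      _ = ENNReal.ofReal (S ^ ((1 - 2*p)/α) / (1 - p)) := by
          rw [← ENNReal.ofReal_mul (by positivity)]
          congr 1
          rw [hbdef, ← Real.rpow_mul hS0.le, mul_div_assoc', ← Real.rpow_add hS0]
          congr 2
          field_simp
          ring
  have hterm2 : ∫⁻ x in Ioi b, ENNReal.ofReal (min (S ^ (-(p/α)) * x ^ (-p)) (x ^ (-(2*p))))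
      ≤ ENNReal.ofReal (S ^ ((1 - 2*p)/α) / (2*p - 1)) := by
    calc ∫⁻ x in Ioi b, ENNReal.ofReal (min (S ^ (-(p/α)) * x ^ (-p)) (x ^ (-(2*p))))
        ≤ ∫⁻ x in Ioi b, ENNReal.ofReal (x ^ (-(2*p))) := by
          apply setLIntegral_mono' measurableSet_Ioi
          intro x _
          exact ENNReal.ofReal_le_ofReal (min_le_right _ _)
      _ ≤ ENNReal.ofReal (b ^ (1 - 2*p) / (2*p - 1)) := aux_Ioi (by linarith) hb0
      _ = ENNReal.ofReal (S ^ ((1 - 2*p)/α) / (2*p - 1)) := by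
          congr 1
          rw [hbdef, ← Real.rpow_mul hS0.le]
          congr 2
          field_simp
  calc _ ≤ ENNReal.ofReal (S ^ ((1 - 2*p)/α) / (1 - p)) +
        ENNReal.ofReal (S ^ ((1 - 2*p)/α) / (2*p - 1)) := add_le_add hterm1 hterm2
    _ = ENNReal.ofReal ((1/(1-p) + 1/(2*p-1)) * S ^ ((1 - 2*p)/α)) := by
        have h1 : (1:ℝ) - p ≠ 0 := by linarith
        have h2 : 2*p - 1 ≠ 0 := by linarith
        rw [← ENNReal.ofReal_add (div_nonneg (by positivity) (by linarith))
          (div_nonneg (by positivity) (by linarith))]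
        congr 1
        field_simp

lemma lb_helper {s : Set ℝ} (hs : MeasurableSet s) (hsub : s ⊆ Ici 1)
    {f : ℝ → ℝ≥0∞} {e : ℝ≥0∞} (h : ∀ x ∈ s, e ≤ f x) :
    e * volume s ≤ ∫⁻ x in Ici (1:ℝ), f x :=
  calc e * volume s = ∫⁻ _ in s, e ∂volume := (setLIntegral_const s e).symm
    _ ≤ ∫⁻ x in s, f x := setLIntegral_mono' hs h
    _ ≤ ∫⁻ x in Ici 1, f x := lintegral_mono_set hsub

set_option maxHeartbeats 2000000 in
theorem stmt11 (α₁ α₂ α₃ : ℝ) (h3 : 0 < α₃) (h32 : α₃ ≤ α₂) (h21 : α₂ ≤ α₁) (h12 : α₁ ≤ 2)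
    (h2lt : α₂ < 2) (hγ : 0 < 2 - 1 / α₁ - 1 / α₂ - 1 / α₃) :
    ∃ c C : ℝ, 0 < c ∧ c ≤ C ∧ ∀ k n m : ℕ, 1 ≤ k → 1 ≤ n → 1 ≤ m →
      ENNReal.ofReal (c * ((k : ℝ) ^ α₁ + (n : ℝ) ^ α₂ + (m : ℝ) ^ α₃)
          ^ (-(2 - 1 / α₁ - 1 / α₂ - 1 / α₃))) ≤
        (∫⁻ x₁ in Ici (1 : ℝ), ∫⁻ x₂ in Ici (1 : ℝ), ∫⁻ x₃ in Ici (1 : ℝ),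
          ENNReal.ofReal (1 / ((x₁ ^ α₁ + x₂ ^ α₂ + x₃ ^ α₃) *
            (x₁ ^ α₁ + x₂ ^ α₂ + x₃ ^ α₃ + (k : ℝ) ^ α₁ + (n : ℝ) ^ α₂ + (m : ℝ) ^ α₃)))) ∧
      (∫⁻ x₁ in Ici (1 : ℝ), ∫⁻ x₂ in Ici (1 : ℝ), ∫⁻ x₃ in Ici (1 : ℝ),
          ENNReal.ofReal (1 / ((x₁ ^ α₁ + x₂ ^ α₂ + x₃ ^ α₃) *
            (x₁ ^ α₁ + x₂ ^ α₂ + x₃ ^ α₃ + (k : ℝ) ^ α₁ + (n : ℝ) ^ α₂ + (m : ℝ) ^ α₃)))) ≤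
        ENNReal.ofReal (C * ((k : ℝ) ^ α₁ + (n : ℝ) ^ α₂ + (m : ℝ) ^ α₃)
          ^ (-(2 - 1 / α₁ - 1 / α₂ - 1 / α₃))) := by
  have hα3 : 0 < α₃ := h3
  have hα2 : 0 < α₂ := lt_of_lt_of_le h3 h32
  have hα1 : 0 < α₁ := lt_of_lt_of_le hα2 h21
  set L := 1/α₁ + 1/α₂ + 1/α₃ with hL
  have hL2 : L < 2 := by rw [hL]; linarith
  have hL1 : 1 < L := by
    have hb : 1/2 < 1/α₂ := by
      rw [div_lt_div_iff₀ (by norm_num) hα2]; linarith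
    have hc : 1/α₂ ≤ 1/α₃ := one_div_le_one_div_of_le hα3 h32
    have ha : 0 < 1/α₁ := by positivity
    rw [hL]; linarith
  have hL0 : 0 < L := by linarith
  set p := 1/L with hp
  have hp2 : 1/2 < p := by rw [hp, div_lt_div_iff₀ (by norm_num) hL0]; linarith
  have hp1 : p < 1 := by rw [hp, div_lt_one hL0]; linarith
  have hp0 : (0:ℝ) < p := by linarith
  have hw : p/α₁ + p/α₂ + p/α₃ = 1 := by
    rw [hp, hL]
    field_simp
  have hK2 : 2 < 1/(1-p) + 1/(2*p-1) := by
    have h1 : 0 < 1-p := by linarith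
    have h2 : 0 < 2*p-1 := by linarith
    have h3' : 2 < 1/(1-p) := by rw [lt_div_iff₀ h1]; linarith
    have h4 : 0 < 1/(2*p-1) := by positivity
    linarith
  have hC : (1:ℝ)/156 ≤ (1/(1-p) + 1/(2*p-1)) * ((1/(1-p) + 1/(2*p-1)) * (1/(1-p) + 1/(2*p-1))) := by
    have h4 : 4 < (1/(1-p) + 1/(2*p-1)) * (1/(1-p) + 1/(2*p-1)) := by nlinarith [hK2]
    nlinarith [hK2, h4]
  clear_value L p
  refine ⟨1/156, (1/(1-p) + 1/(2*p-1)) * ((1/(1-p) + 1/(2*p-1)) * (1/(1-p) + 1/(2*p-1))),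
    by norm_num, hC, ?_⟩
  intro k n m hk hn hm
  have hk1 : (1:ℝ) ≤ (k:ℝ) := by exact_mod_cast hk
  have hn1 : (1:ℝ) ≤ (n:ℝ) := by exact_mod_cast hn
  have hm1 : (1:ℝ) ≤ (m:ℝ) := by exact_mod_cast hm
  have hka : (1:ℝ) ≤ (k:ℝ) ^ α₁ := Real.one_le_rpow hk1 hα1.le
  have hna : (1:ℝ) ≤ (n:ℝ) ^ α₂ := Real.one_le_rpow hn1 hα2.le
  have hma : (1:ℝ) ≤ (m:ℝ) ^ α₃ := Real.one_le_rpow hm1 hα3.le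
  set S := (k:ℝ) ^ α₁ + (n:ℝ) ^ α₂ + (m:ℝ) ^ α₃ with hS
  clear_value S
  have hS1 : (1:ℝ) ≤ S := by rw [hS]; linarith
  have hS0 : (0:ℝ) < S := by linarith
  have hexp : (-(2 - 1/α₁ - 1/α₂ - 1/α₃)) = L - 2 := by rw [hL]; ring
  rw [hexp]
  have hcoord : ∀ α x : ℝ, 0 < α → α ≤ 2 → x ∈ Icc (S^(1/α)) (2*S^(1/α)) →
      S ≤ x^α ∧ x^α ≤ 4*S := by
    intro α x hα ha2 hx
    have hbα : (S^(1/α))^α = S := by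
      rw [← Real.rpow_mul hS0.le, one_div_mul_cancel hα.ne', Real.rpow_one]
    have hbpos : 0 < S^(1/α) := Real.rpow_pos_of_pos hS0 _
    constructor
    · calc S = (S^(1/α))^α := hbα.symm
        _ ≤ x^α := Real.rpow_le_rpow hbpos.le hx.1 hα.le
    · calc x^α ≤ (2*S^(1/α))^α := Real.rpow_le_rpow (le_trans hbpos.le hx.1) hx.2 hα.le
        _ = 2^α * S := by rw [Real.mul_rpow (by norm_num) hbpos.le, hbα]
        _ ≤ 4 * S := by
            have h24 : (2:ℝ)^α ≤ 4 := by
              calc (2:ℝ)^α ≤ 2^(2:ℝ) := Real.rpow_le_rpow_of_exponent_le (by norm_num) ha2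
                _ = 4 := by
                    rw [show (2:ℝ) = ((2:ℕ):ℝ) by norm_num, Real.rpow_natCast]; norm_num
            nlinarith [hS0]
  have hbox1 : (1:ℝ) ≤ S^(1/α₁) := Real.one_le_rpow hS1 (by positivity)
  have hbox2 : (1:ℝ) ≤ S^(1/α₂) := Real.one_le_rpow hS1 (by positivity)
  have hbox3 : (1:ℝ) ≤ S^(1/α₃) := Real.one_le_rpow hS1 (by positivity)
  constructor
  · -- lower bound
    have hbox : ∀ x₁ ∈ Icc (S^(1/α₁)) (2*S^(1/α₁)), ∀ x₂ ∈ Icc (S^(1/α₂)) (2*S^(1/α₂)),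
        ∀ x₃ ∈ Icc (S^(1/α₃)) (2*S^(1/α₃)),
        ENNReal.ofReal (1/(156*(S*S))) ≤ ENNReal.ofReal (1 / ((x₁^α₁+x₂^α₂+x₃^α₃) *
          (x₁^α₁+x₂^α₂+x₃^α₃+(k:ℝ)^α₁+(n:ℝ)^α₂+(m:ℝ)^α₃))) := by
      intro x₁ hx₁ x₂ hx₂ x₃ hx₃
      obtain ⟨hl1, hu1⟩ := hcoord α₁ x₁ hα1 h12 hx₁
      obtain ⟨hl2, hu2⟩ := hcoord α₂ x₂ hα2 (le_of_lt (lt_of_lt_of_le h2lt (le_refl 2))) hx₂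
      obtain ⟨hl3, hu3⟩ := hcoord α₃ x₃ hα3 (by linarith) hx₃
      apply ENNReal.ofReal_le_ofReal
      have hden : (x₁^α₁+x₂^α₂+x₃^α₃) * (x₁^α₁+x₂^α₂+x₃^α₃+(k:ℝ)^α₁+(n:ℝ)^α₂+(m:ℝ)^α₃)
          = (x₁^α₁+x₂^α₂+x₃^α₃) * (x₁^α₁+x₂^α₂+x₃^α₃+S) := by rw [hS]; ring
      rw [hden]
      have hTpos : 0 < x₁^α₁+x₂^α₂+x₃^α₃ := by linarith
      have hT12 : x₁^α₁+x₂^α₂+x₃^α₃ ≤ 12*S := by linarith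
      have h13S : x₁^α₁+x₂^α₂+x₃^α₃+S ≤ 13*S := by linarith
      have hprod : (x₁^α₁+x₂^α₂+x₃^α₃) * (x₁^α₁+x₂^α₂+x₃^α₃+S) ≤ 156*(S*S) := by
        nlinarith [mul_le_mul hT12 h13S (by linarith) (by linarith)]
      apply one_div_le_one_div_of_le (by positivity) hprod
    have hvol : ∀ b : ℝ, volume (Icc b (2*b)) = ENNReal.ofReal b := by
      intro b; rw [Real.volume_Icc]; congr 1; ring
    have lb3 : ∀ x₁ ∈ Icc (S^(1/α₁)) (2*S^(1/α₁)), ∀ x₂ ∈ Icc (S^(1/α₂)) (2*S^(1/α₂)),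
        ENNReal.ofReal (1/(156*(S*S))) * ENNReal.ofReal (S^(1/α₃)) ≤ ∫⁻ x₃ in Ici (1:ℝ),
          ENNReal.ofReal (1 / ((x₁^α₁+x₂^α₂+x₃^α₃) *
            (x₁^α₁+x₂^α₂+x₃^α₃+(k:ℝ)^α₁+(n:ℝ)^α₂+(m:ℝ)^α₃))) := by
      intro x₁ hx₁ x₂ hx₂
      have := lb_helper measurableSet_Icc
        (fun x hx => le_trans hbox3 hx.1) (hbox x₁ hx₁ x₂ hx₂)
      rwa [hvol] at this
    have lb2 : ∀ x₁ ∈ Icc (S^(1/α₁)) (2*S^(1/α₁)),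
        (ENNReal.ofReal (1/(156*(S*S))) * ENNReal.ofReal (S^(1/α₃))) * ENNReal.ofReal (S^(1/α₂)) ≤
          ∫⁻ x₂ in Ici (1:ℝ), ∫⁻ x₃ in Ici (1:ℝ),
          ENNReal.ofReal (1 / ((x₁^α₁+x₂^α₂+x₃^α₃) *
            (x₁^α₁+x₂^α₂+x₃^α₃+(k:ℝ)^α₁+(n:ℝ)^α₂+(m:ℝ)^α₃))) := by
      intro x₁ hx₁
      have := lb_helper measurableSet_Icc
        (fun x hx => le_trans hbox2 hx.1) (lb3 x₁ hx₁)
      rwa [hvol] at this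
    have lb1 : ((ENNReal.ofReal (1/(156*(S*S))) * ENNReal.ofReal (S^(1/α₃))) * ENNReal.ofReal (S^(1/α₂))) *
        ENNReal.ofReal (S^(1/α₁)) ≤
          ∫⁻ x₁ in Ici (1:ℝ), ∫⁻ x₂ in Ici (1:ℝ), ∫⁻ x₃ in Ici (1:ℝ),
          ENNReal.ofReal (1 / ((x₁^α₁+x₂^α₂+x₃^α₃) *
            (x₁^α₁+x₂^α₂+x₃^α₃+(k:ℝ)^α₁+(n:ℝ)^α₂+(m:ℝ)^α₃))) := by
      have := lb_helper measurableSet_Icc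
        (fun x hx => le_trans hbox1 hx.1) lb2
      rwa [hvol] at this
    refine le_trans (le_of_eq ?_) lb1
    rw [← ENNReal.ofReal_mul (by positivity), ← ENNReal.ofReal_mul (by positivity),
      ← ENNReal.ofReal_mul (by positivity)]
    congr 1
    have hSS : S * S = S ^ (2:ℝ) := by
      rw [show (2:ℝ) = ((2:ℕ):ℝ) by norm_num, Real.rpow_natCast]; ring
    have hprodb : S^(1/α₃) * S^(1/α₂) * S^(1/α₁) = S ^ L := by
      rw [← Real.rpow_add hS0, ← Real.rpow_add hS0, hL]
      congr 1
      ring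
    have h2' : S^(L-2) * (S*S) = S^L := by
      rw [hSS, ← Real.rpow_add hS0]
      congr 1
      ring
    have hSSne : (156:ℝ)*(S*S) ≠ 0 := by positivity
    calc 1/156 * S^(L-2) = (S^(L-2) * (S*S)) / (156*(S*S)) := by
          field_simp
      _ = S^L / (156*(S*S)) := by rw [h2']
      _ = (S^(1/α₃) * S^(1/α₂) * S^(1/α₁)) / (156*(S*S)) := by rw [hprodb]
      _ = 1/(156*(S*S)) * (S^(1/α₃)) * (S^(1/α₂)) * (S^(1/α₁)) := by ring
  · -- upper bound
    have hup3 : ∀ x₁ ∈ Ici (1:ℝ), ∀ x₂ ∈ Ici (1:ℝ),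
        (∫⁻ x₃ in Ici (1:ℝ), ENNReal.ofReal (1 / ((x₁^α₁+x₂^α₂+x₃^α₃) *
          (x₁^α₁+x₂^α₂+x₃^α₃+(k:ℝ)^α₁+(n:ℝ)^α₂+(m:ℝ)^α₃)))) ≤
        ENNReal.ofReal (min (S ^ (-(p/α₁)) * x₁ ^ (-p)) (x₁ ^ (-(2*p)))) *
        (ENNReal.ofReal (min (S ^ (-(p/α₂)) * x₂ ^ (-p)) (x₂ ^ (-(2*p)))) *
         ENNReal.ofReal ((1/(1-p) + 1/(2*p-1)) * S ^ ((1 - 2*p)/α₃))) := by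
      intro x₁ hx₁ x₂ hx₂
      have hx₁' : (1:ℝ) ≤ x₁ := hx₁
      have hx₂' : (1:ℝ) ≤ x₂ := hx₂
      have hm₁nn : (0:ℝ) ≤ min (S ^ (-(p/α₁)) * x₁ ^ (-p)) (x₁ ^ (-(2*p))) :=
        le_min (mul_nonneg (Real.rpow_nonneg hS0.le _) (Real.rpow_nonneg (by linarith) _))
          (Real.rpow_nonneg (by linarith) _)
      have hm₂nn : (0:ℝ) ≤ min (S ^ (-(p/α₂)) * x₂ ^ (-p)) (x₂ ^ (-(2*p))) :=
        le_min (mul_nonneg (Real.rpow_nonneg hS0.le _) (Real.rpow_nonneg (by linarith) _))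
          (Real.rpow_nonneg (by linarith) _)
      calc (∫⁻ x₃ in Ici (1:ℝ), ENNReal.ofReal (1 / ((x₁^α₁+x₂^α₂+x₃^α₃) *
            (x₁^α₁+x₂^α₂+x₃^α₃+(k:ℝ)^α₁+(n:ℝ)^α₂+(m:ℝ)^α₃))))
          ≤ ∫⁻ x₃ in Ici (1:ℝ),
            ENNReal.ofReal ((min (S ^ (-(p/α₁)) * x₁ ^ (-p)) (x₁ ^ (-(2*p)))) *
              (min (S ^ (-(p/α₂)) * x₂ ^ (-p)) (x₂ ^ (-(2*p))))) *
            ENNReal.ofReal (min (S ^ (-(p/α₃)) * x₃ ^ (-p)) (x₃ ^ (-(2*p)))) := by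
            apply setLIntegral_mono' measurableSet_Ici
            intro x₃ hx₃
            have hx₃' : (1:ℝ) ≤ x₃ := hx₃
            rw [← ENNReal.ofReal_mul (mul_nonneg hm₁nn hm₂nn)]
            apply ENNReal.ofReal_le_ofReal
            have hpb := pointwise_bound hα1 hα2 hα3 hS1 hp0 hw hx₁' hx₂' hx₃'
            calc 1 / ((x₁^α₁+x₂^α₂+x₃^α₃) *
                  (x₁^α₁+x₂^α₂+x₃^α₃+(k:ℝ)^α₁+(n:ℝ)^α₂+(m:ℝ)^α₃))
                = 1 / ((x₁^α₁+x₂^α₂+x₃^α₃) * (x₁^α₁+x₂^α₂+x₃^α₃+S)) := by rw [hS]; ring_nf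
              _ ≤ _ := hpb.trans_eq (by ring)
        _ = ENNReal.ofReal ((min (S ^ (-(p/α₁)) * x₁ ^ (-p)) (x₁ ^ (-(2*p)))) *
              (min (S ^ (-(p/α₂)) * x₂ ^ (-p)) (x₂ ^ (-(2*p))))) *
            ∫⁻ x₃ in Ici (1:ℝ),
              ENNReal.ofReal (min (S ^ (-(p/α₃)) * x₃ ^ (-p)) (x₃ ^ (-(2*p)))) :=
            lintegral_const_mul' _ _ ENNReal.ofReal_ne_top
        _ ≤ ENNReal.ofReal ((min (S ^ (-(p/α₁)) * x₁ ^ (-p)) (x₁ ^ (-(2*p)))) *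
              (min (S ^ (-(p/α₂)) * x₂ ^ (-p)) (x₂ ^ (-(2*p))))) *
            ENNReal.ofReal ((1/(1-p) + 1/(2*p-1)) * S ^ ((1 - 2*p)/α₃)) :=
            mul_le_mul_right (coord_int hα3 hS1 hp2 hp1) _
        _ = _ := by rw [ENNReal.ofReal_mul hm₁nn]; ring
    have hup2 : ∀ x₁ ∈ Ici (1:ℝ),
        (∫⁻ x₂ in Ici (1:ℝ), ∫⁻ x₃ in Ici (1:ℝ), ENNReal.ofReal (1 / ((x₁^α₁+x₂^α₂+x₃^α₃) *
          (x₁^α₁+x₂^α₂+x₃^α₃+(k:ℝ)^α₁+(n:ℝ)^α₂+(m:ℝ)^α₃)))) ≤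
        ENNReal.ofReal (min (S ^ (-(p/α₁)) * x₁ ^ (-p)) (x₁ ^ (-(2*p)))) *
        (ENNReal.ofReal ((1/(1-p) + 1/(2*p-1)) * S ^ ((1 - 2*p)/α₂)) *
         ENNReal.ofReal ((1/(1-p) + 1/(2*p-1)) * S ^ ((1 - 2*p)/α₃))) := by
      intro x₁ hx₁
      calc (∫⁻ x₂ in Ici (1:ℝ), ∫⁻ x₃ in Ici (1:ℝ), ENNReal.ofReal (1 / ((x₁^α₁+x₂^α₂+x₃^α₃) *
            (x₁^α₁+x₂^α₂+x₃^α₃+(k:ℝ)^α₁+(n:ℝ)^α₂+(m:ℝ)^α₃))))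
          ≤ ∫⁻ x₂ in Ici (1:ℝ),
            (ENNReal.ofReal (min (S ^ (-(p/α₁)) * x₁ ^ (-p)) (x₁ ^ (-(2*p)))) *
             ENNReal.ofReal ((1/(1-p) + 1/(2*p-1)) * S ^ ((1 - 2*p)/α₃))) *
            ENNReal.ofReal (min (S ^ (-(p/α₂)) * x₂ ^ (-p)) (x₂ ^ (-(2*p)))) := by
            apply setLIntegral_mono' measurableSet_Ici
            intro x₂ hx₂
            exact (hup3 x₁ hx₁ x₂ hx₂).trans_eq (by ring)
        _ = (ENNReal.ofReal (min (S ^ (-(p/α₁)) * x₁ ^ (-p)) (x₁ ^ (-(2*p)))) *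
             ENNReal.ofReal ((1/(1-p) + 1/(2*p-1)) * S ^ ((1 - 2*p)/α₃))) *
            ∫⁻ x₂ in Ici (1:ℝ),
              ENNReal.ofReal (min (S ^ (-(p/α₂)) * x₂ ^ (-p)) (x₂ ^ (-(2*p)))) :=
            lintegral_const_mul' _ _ (by
              exact ENNReal.mul_ne_top ENNReal.ofReal_ne_top ENNReal.ofReal_ne_top)
        _ ≤ (ENNReal.ofReal (min (S ^ (-(p/α₁)) * x₁ ^ (-p)) (x₁ ^ (-(2*p)))) *
             ENNReal.ofReal ((1/(1-p) + 1/(2*p-1)) * S ^ ((1 - 2*p)/α₃))) *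
            ENNReal.ofReal ((1/(1-p) + 1/(2*p-1)) * S ^ ((1 - 2*p)/α₂)) :=
            mul_le_mul_right (coord_int hα2 hS1 hp2 hp1) _
        _ = _ := by ring
    calc (∫⁻ x₁ in Ici (1:ℝ), ∫⁻ x₂ in Ici (1:ℝ), ∫⁻ x₃ in Ici (1:ℝ),
          ENNReal.ofReal (1 / ((x₁^α₁+x₂^α₂+x₃^α₃) *
            (x₁^α₁+x₂^α₂+x₃^α₃+(k:ℝ)^α₁+(n:ℝ)^α₂+(m:ℝ)^α₃))))
        ≤ ∫⁻ x₁ in Ici (1:ℝ),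
          (ENNReal.ofReal ((1/(1-p) + 1/(2*p-1)) * S ^ ((1 - 2*p)/α₂)) *
           ENNReal.ofReal ((1/(1-p) + 1/(2*p-1)) * S ^ ((1 - 2*p)/α₃))) *
          ENNReal.ofReal (min (S ^ (-(p/α₁)) * x₁ ^ (-p)) (x₁ ^ (-(2*p)))) := by
          apply setLIntegral_mono' measurableSet_Ici
          intro x₁ hx₁
          exact (hup2 x₁ hx₁).trans_eq (by ring)
      _ = (ENNReal.ofReal ((1/(1-p) + 1/(2*p-1)) * S ^ ((1 - 2*p)/α₂)) *
           ENNReal.ofReal ((1/(1-p) + 1/(2*p-1)) * S ^ ((1 - 2*p)/α₃))) *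
          ∫⁻ x₁ in Ici (1:ℝ),
            ENNReal.ofReal (min (S ^ (-(p/α₁)) * x₁ ^ (-p)) (x₁ ^ (-(2*p)))) :=
          lintegral_const_mul' _ _ (by
            exact ENNReal.mul_ne_top ENNReal.ofReal_ne_top ENNReal.ofReal_ne_top)
      _ ≤ (ENNReal.ofReal ((1/(1-p) + 1/(2*p-1)) * S ^ ((1 - 2*p)/α₂)) *
           ENNReal.ofReal ((1/(1-p) + 1/(2*p-1)) * S ^ ((1 - 2*p)/α₃))) *
          ENNReal.ofReal ((1/(1-p) + 1/(2*p-1)) * S ^ ((1 - 2*p)/α₁)) :=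
          mul_le_mul_right (coord_int hα1 hS1 hp2 hp1) _
      _ = ENNReal.ofReal ((1/(1-p) + 1/(2*p-1)) * ((1/(1-p) + 1/(2*p-1)) *
            (1/(1-p) + 1/(2*p-1))) * S ^ (L-2)) := by
          have hKnn : (0:ℝ) ≤ 1/(1-p) + 1/(2*p-1) := by linarith
          rw [← ENNReal.ofReal_mul (mul_nonneg hKnn (Real.rpow_nonneg hS0.le _)),
            ← ENNReal.ofReal_mul (mul_nonneg (mul_nonneg hKnn (Real.rpow_nonneg hS0.le _))
              (mul_nonneg hKnn (Real.rpow_nonneg hS0.le _)))]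
          congr 1
          rw [show ((1/(1-p) + 1/(2*p-1)) * S ^ ((1 - 2*p)/α₂) *
              ((1/(1-p) + 1/(2*p-1)) * S ^ ((1 - 2*p)/α₃)) *
              ((1/(1-p) + 1/(2*p-1)) * S ^ ((1 - 2*p)/α₁))) =
              (1/(1-p) + 1/(2*p-1)) * ((1/(1-p) + 1/(2*p-1)) * (1/(1-p) + 1/(2*p-1))) *
              (S ^ ((1 - 2*p)/α₁) * S ^ ((1 - 2*p)/α₂) * S ^ ((1 - 2*p)/α₃)) by ring,
            ← Real.rpow_add hS0, ← Real.rpow_add hS0]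
          have h1 : (1-2*p)*L = L - 2 := by
            rw [hp]; field_simp
          have hsum : (1 - 2*p)/α₁ + (1 - 2*p)/α₂ + (1 - 2*p)/α₃ = L - 2 := by
            calc (1 - 2*p)/α₁ + (1 - 2*p)/α₂ + (1 - 2*p)/α₃ = (1-2*p)*L := by rw [hL]; ring
              _ = L - 2 := h1
          rw [hsum]
end

section
/- Let $2 - 2/\alpha_1 - 1/\alpha_3 \leq 0$ with $3/2 \leq \alpha_1 \leq 2$ and $0 < \alpha_3 \leq \alpha_1$. Then $\int_2^{\infty}\int_1^{z}\int_1^{z} \left(x^{\alpha_1} + y^{\alpha_1}\ln^{\alpha_1} z + z^{\alpha_3}\right)^{-2}\, dx\, dy\, dz = \infty$. -/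
open Set MeasureTheory Real

lemma aux_log_top (a c : ℝ) (ha : 3 ≤ a) (hc : 0 < c) :
    ∫⁻ z in Ici a, ENNReal.ofReal (c / (z * Real.log z)) = ⊤ := by
  apply ENNReal.eq_top_of_forall_nnreal_le
  intro r
  have ha0 : (0:ℝ) < a := by linarith
  have ha1 : (1:ℝ) < a := by linarith
  set t : ℝ := (r : ℝ) / c + Real.log (Real.log a) with ht
  set b : ℝ := max a (Real.exp (Real.exp t)) with hb
  have hab : a ≤ b := le_max_left _ _
  have hb0 : 0 < b := lt_of_lt_of_le ha0 hab
  have key : ∀ z ∈ Set.Icc a b, HasDerivAt (fun z => c * Real.log (Real.log z))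
      (c / (z * Real.log z)) z := by
    intro z hz
    have hz0 : 0 < z := lt_of_lt_of_le ha0 hz.1
    have hlz : 0 < Real.log z := Real.log_pos (lt_of_lt_of_le ha1 hz.1)
    have h1 : HasDerivAt Real.log z⁻¹ z := Real.hasDerivAt_log hz0.ne'
    have h2 : HasDerivAt Real.log (Real.log z)⁻¹ (Real.log z) := Real.hasDerivAt_log hlz.ne'
    have h3 := (h2.comp z h1).const_mul c
    rw [show c / (z * Real.log z) = c * ((Real.log z)⁻¹ * z⁻¹) by ring]
    exact h3
  have hcont : ContinuousOn (fun z => c / (z * Real.log z)) (Set.Icc a b) := by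
    apply ContinuousOn.div continuousOn_const
    · apply continuousOn_id.mul (Real.continuousOn_log.mono ?_)
      intro z hz
      simp only [mem_compl_iff, mem_singleton_iff]
      intro h; rw [h] at hz; linarith [hz.1]
    · intro z hz
      have hz0 : 0 < z := lt_of_lt_of_le ha0 hz.1
      have hlz : 0 < Real.log z := Real.log_pos (lt_of_lt_of_le ha1 hz.1)
      positivity
  have hII : IntervalIntegrable (fun z => c / (z * Real.log z)) volume a b :=
    ContinuousOn.intervalIntegrable (by rwa [Set.uIcc_of_le hab])
  have hFTC := intervalIntegral.integral_eq_sub_of_hasDerivAt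
    (fun z hz => key z (by rwa [Set.uIcc_of_le hab] at hz)) hII
  have hIoc : IntegrableOn (fun z => c / (z * Real.log z)) (Set.Ioc a b) volume := hII.1
  have hnn : 0 ≤ᵐ[volume.restrict (Set.Ioc a b)] fun z => c / (z * Real.log z) := by
    filter_upwards [ae_restrict_mem measurableSet_Ioc] with z hz
    have hz0 : 0 < z := lt_trans ha0 hz.1
    have hlz : 0 < Real.log z := Real.log_pos (lt_trans ha1 hz.1)
    positivity
  have h1 : Real.exp t ≤ Real.log b := (Real.le_log_iff_exp_le hb0).2 (le_max_right _ _)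
  have h2 : t ≤ Real.log (Real.log b) :=
    (Real.le_log_iff_exp_le (lt_of_lt_of_le (Real.exp_pos t) h1)).2 h1
  calc (r : ENNReal) = ENNReal.ofReal (r : ℝ) := ENNReal.ofReal_coe_nnreal.symm
    _ ≤ ENNReal.ofReal (c * Real.log (Real.log b) - c * Real.log (Real.log a)) := by
        apply ENNReal.ofReal_le_ofReal
        have hct : c * t = (r : ℝ) + c * Real.log (Real.log a) := by
          rw [ht]; field_simp
        nlinarith [mul_le_mul_of_nonneg_left h2 hc.le]
    _ = ENNReal.ofReal (∫ z in a..b, c / (z * Real.log z)) := by rw [hFTC]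
    _ = ENNReal.ofReal (∫ z in Set.Ioc a b, c / (z * Real.log z)) := by
        rw [intervalIntegral.integral_of_le hab]
    _ = ∫⁻ z in Set.Ioc a b, ENNReal.ofReal (c / (z * Real.log z)) :=
        MeasureTheory.ofReal_integral_eq_lintegral_ofReal hIoc hnn
    _ ≤ ∫⁻ z in Set.Ici a, ENNReal.ofReal (c / (z * Real.log z)) :=
        lintegral_mono_set (fun z hz => hz.1.le)

set_option maxHeartbeats 1000000 in
theorem stmt14 (α₁ α₃ : ℝ) (h1 : 3 / 2 ≤ α₁) (h12 : α₁ ≤ 2) (h3 : 0 < α₃) (h31 : α₃ ≤ α₁)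
    (hγ : 2 - 2 / α₁ - 1 / α₃ ≤ 0) :
    (∫⁻ z in Ici (2 : ℝ), ∫⁻ y in Icc (1 : ℝ) z, ∫⁻ x in Icc (1 : ℝ) z,
        ENNReal.ofReal (1 / (x ^ α₁ + y ^ α₁ * Real.log z ^ α₁ + z ^ α₃) ^ 2)) = ⊤ := by
  have hα₁ : (0:ℝ) < α₁ := by linarith
  set β := α₃ / α₁ with hβ
  have hβpos : 0 < β := div_pos h3 hα₁
  have hβ1 : β ≤ 1 := div_le_one_of_le₀ h31 hα₁.le
  have hβα : β * α₁ = α₃ := div_mul_cancel₀ _ hα₁.ne'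
  have hexp : α₃ + α₃ ≤ β + β + 1 := by
    have h4 : 2 ≤ 2 / α₁ + 1 / α₃ := by linarith
    have h5 := mul_le_mul_of_nonneg_right h4 h3.le
    have he : (2 / α₁ + 1 / α₃) * α₃ = 2 * β + 1 := by
      rw [hβ]; field_simp
    nlinarith [h5, he]
  have hev : ∀ᶠ z in Filter.atTop, 4 * Real.log z ≤ z ^ β := by
    have h := (isLittleO_log_rpow_atTop hβpos).def (by norm_num : (0:ℝ) < 1/4)
    filter_upwards [h, Filter.eventually_ge_atTop (1:ℝ)] with z hz hz1
    have hlz : 0 ≤ Real.log z := Real.log_nonneg hz1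
    have hpz : 0 ≤ z ^ β := Real.rpow_nonneg (by linarith) β
    rw [Real.norm_eq_abs, Real.norm_eq_abs, abs_of_nonneg hlz, abs_of_nonneg hpz] at hz
    linarith
  obtain ⟨a, ha⟩ := Filter.eventually_atTop.mp (hev.and (Filter.eventually_ge_atTop (3:ℝ)))
  have ha3 : 3 ≤ a := (ha a le_rfl).2
  have key : ∀ z ∈ Ici a,
      ENNReal.ofReal ((1/72) / (z * Real.log z)) ≤
        ∫⁻ y in Icc (1:ℝ) z, ∫⁻ x in Icc (1:ℝ) z,
          ENNReal.ofReal (1 / (x ^ α₁ + y ^ α₁ * Real.log z ^ α₁ + z ^ α₃) ^ 2) := by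
    intro z hz
    obtain ⟨h4log, hz3⟩ := ha z hz
    have hz0 : (0:ℝ) < z := by linarith
    have hz1 : (1:ℝ) ≤ z := by linarith
    have hL1 : (1:ℝ) ≤ Real.log z := by
      rw [Real.le_log_iff_exp_le hz0]
      have := Real.exp_one_lt_d9
      linarith
    have hL0 : (0:ℝ) < Real.log z := by linarith
    set A := z ^ β with hA
    have hA4 : (4:ℝ) ≤ A := by
      calc (4:ℝ) ≤ 4 * Real.log z := by linarith
        _ ≤ A := h4log
    have hAz : A ≤ z := by
      calc A = z ^ β := rfl
        _ ≤ z ^ (1:ℝ) := Real.rpow_le_rpow_of_exponent_le hz1 hβ1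
        _ = z := Real.rpow_one z
    set S := z ^ α₃ with hS
    have hS1 : (1:ℝ) ≤ S := Real.one_le_rpow hz1 h3.le
    set U := A / (2 * Real.log z) with hU
    have hU2 : (2:ℝ) ≤ U := by
      rw [hU, le_div_iff₀ (by positivity)]
      linarith
    have hUz : U ≤ z := by
      have h6 : U ≤ A / 2 := by
        rw [hU]; gcongr; linarith
      linarith
    have hSSA : S * S ≤ A * A * z := by
      rw [hS, hA]
      calc z ^ α₃ * z ^ α₃ = z ^ (α₃ + α₃) := (Real.rpow_add hz0 _ _).symm
        _ ≤ z ^ (β + β + 1) := Real.rpow_le_rpow_of_exponent_le hz1 hexp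
        _ = z ^ β * z ^ β * z := by
            rw [Real.rpow_add hz0, Real.rpow_add hz0, Real.rpow_one]
    have hden : ∀ x ∈ Icc (1:ℝ) A, ∀ y ∈ Icc (1:ℝ) U,
        ENNReal.ofReal (1 / (3*S)^2) ≤
          ENNReal.ofReal (1 / (x ^ α₁ + y ^ α₁ * Real.log z ^ α₁ + z ^ α₃) ^ 2) := by
      intro x hx y hy
      have hx0 : (0:ℝ) < x := lt_of_lt_of_le zero_lt_one hx.1
      have hy0 : (0:ℝ) ≤ y := le_trans zero_le_one hy.1
      have hxa : x ^ α₁ ≤ S := by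
        calc x ^ α₁ ≤ A ^ α₁ := Real.rpow_le_rpow hx0.le hx.2 hα₁.le
          _ = z ^ (β * α₁) := by rw [hA, ← Real.rpow_mul hz0.le]
          _ = S := by rw [hβα, hS]
      have hyl : y * Real.log z ≤ A := by
        have h7 : y * Real.log z ≤ U * Real.log z :=
          mul_le_mul_of_nonneg_right hy.2 hL0.le
        have h8 : U * Real.log z = A / 2 := by
          rw [hU]; field_simp
        linarith
      have hya : y ^ α₁ * Real.log z ^ α₁ ≤ S := by
        rw [← Real.mul_rpow hy0 hL0.le]
        calc (y * Real.log z) ^ α₁ ≤ A ^ α₁ :=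
              Real.rpow_le_rpow (by positivity) hyl hα₁.le
          _ = z ^ (β * α₁) := by rw [hA, ← Real.rpow_mul hz0.le]
          _ = S := by rw [hβα, hS]
      have hxp : 0 < x ^ α₁ := Real.rpow_pos_of_pos hx0 _
      have hynn : 0 ≤ y ^ α₁ * Real.log z ^ α₁ :=
        mul_nonneg (Real.rpow_nonneg hy0 _) (Real.rpow_nonneg hL0.le _)
      have hSp : (0:ℝ) < S := by linarith
      have hzS : z ^ α₃ = S := hS.symm
      have hdpos : 0 < x ^ α₁ + y ^ α₁ * Real.log z ^ α₁ + z ^ α₃ := by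
        rw [hzS]; linarith
      have hd3 : x ^ α₁ + y ^ α₁ * Real.log z ^ α₁ + z ^ α₃ ≤ 3 * S := by
        rw [hzS]; linarith
      apply ENNReal.ofReal_le_ofReal
      apply one_div_le_one_div_of_le (by positivity)
      nlinarith [hdpos, hd3]
    have hinner : ∀ y ∈ Icc (1:ℝ) U,
        ENNReal.ofReal (1 / (3*S)^2) * ENNReal.ofReal (A - 1) ≤
          ∫⁻ x in Icc (1:ℝ) z,
            ENNReal.ofReal (1 / (x ^ α₁ + y ^ α₁ * Real.log z ^ α₁ + z ^ α₃) ^ 2) := by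
      intro y hy
      calc ENNReal.ofReal (1 / (3*S)^2) * ENNReal.ofReal (A - 1)
          = ENNReal.ofReal (1 / (3*S)^2) * volume (Icc (1:ℝ) A) := by
            rw [Real.volume_Icc]
        _ = ∫⁻ _ in Icc (1:ℝ) A, ENNReal.ofReal (1 / (3*S)^2) :=
            (setLIntegral_const _ _).symm
        _ ≤ ∫⁻ x in Icc (1:ℝ) A,
              ENNReal.ofReal (1 / (x ^ α₁ + y ^ α₁ * Real.log z ^ α₁ + z ^ α₃) ^ 2) :=
            setLIntegral_mono' measurableSet_Icc (fun x hx => hden x hx y hy)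
        _ ≤ ∫⁻ x in Icc (1:ℝ) z,
              ENNReal.ofReal (1 / (x ^ α₁ + y ^ α₁ * Real.log z ^ α₁ + z ^ α₃) ^ 2) :=
            lintegral_mono_set (Icc_subset_Icc_right hAz)
    have hre : (1/72) / (z * Real.log z) ≤ (1 / (3*S)^2) * (A/2) * (U/2) := by
      have hSp : (0:ℝ) < S := by linarith
      have hh : (1 / (3*S)^2) * (A/2) * (U/2) = (A*A) / (72 * (S*S) * Real.log z) := by
        rw [hU]; field_simp; ring
      rw [hh, div_le_div_iff₀ (by positivity) (by positivity)]
      have hkey : S * S * Real.log z ≤ A * A * (z * Real.log z) := by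
        nlinarith [mul_le_mul_of_nonneg_right hSSA hL0.le]
      linarith [hkey]
    have hq : (1 / (3*S)^2) * (A/2) * (U/2) ≤ (1 / (3*S)^2) * (A - 1) * (U - 1) := by
      have hSp : (0:ℝ) < S := by linarith
      have h75 : (0:ℝ) ≤ 1 / (3*S)^2 := by positivity
      have hq2 : (A/2) * (U/2) ≤ (A - 1) * (U - 1) := by nlinarith
      calc (1 / (3*S)^2) * (A/2) * (U/2) = (1 / (3*S)^2) * ((A/2) * (U/2)) := by ring
        _ ≤ (1 / (3*S)^2) * ((A - 1) * (U - 1)) := mul_le_mul_of_nonneg_left hq2 h75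
        _ = (1 / (3*S)^2) * (A - 1) * (U - 1) := by ring
    calc ENNReal.ofReal ((1/72) / (z * Real.log z))
        ≤ ENNReal.ofReal ((1 / (3*S)^2) * (A - 1) * (U - 1)) :=
          ENNReal.ofReal_le_ofReal (le_trans hre hq)
      _ = ENNReal.ofReal (1 / (3*S)^2) * ENNReal.ofReal (A - 1) * ENNReal.ofReal (U - 1) := by
          have hp1 : (0:ℝ) ≤ 1 / (3*S)^2 := by positivity
          have hp2 : (0:ℝ) ≤ 1 / (3*S)^2 * (A - 1) := mul_nonneg hp1 (by linarith)
          rw [ENNReal.ofReal_mul hp2, ENNReal.ofReal_mul hp1]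
      _ = (ENNReal.ofReal (1 / (3*S)^2) * ENNReal.ofReal (A - 1)) * volume (Icc (1:ℝ) U) := by
          rw [Real.volume_Icc]
      _ = ∫⁻ _ in Icc (1:ℝ) U,
            ENNReal.ofReal (1 / (3*S)^2) * ENNReal.ofReal (A - 1) :=
          (setLIntegral_const _ _).symm
      _ ≤ ∫⁻ y in Icc (1:ℝ) U, ∫⁻ x in Icc (1:ℝ) z,
            ENNReal.ofReal (1 / (x ^ α₁ + y ^ α₁ * Real.log z ^ α₁ + z ^ α₃) ^ 2) :=
          setLIntegral_mono' measurableSet_Icc hinner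
      _ ≤ ∫⁻ y in Icc (1:ℝ) z, ∫⁻ x in Icc (1:ℝ) z,
            ENNReal.ofReal (1 / (x ^ α₁ + y ^ α₁ * Real.log z ^ α₁ + z ^ α₃) ^ 2) :=
          lintegral_mono_set (Icc_subset_Icc_right hUz)
  refine eq_top_iff.mpr ?_
  calc (⊤:ENNReal) = ∫⁻ z in Ici a, ENNReal.ofReal ((1/72) / (z * Real.log z)) :=
        (aux_log_top a (1/72) ha3 (by norm_num)).symm
    _ ≤ ∫⁻ z in Ici a, ∫⁻ y in Icc (1:ℝ) z, ∫⁻ x in Icc (1:ℝ) z,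
          ENNReal.ofReal (1 / (x ^ α₁ + y ^ α₁ * Real.log z ^ α₁ + z ^ α₃) ^ 2) :=
        setLIntegral_mono' measurableSet_Ici key
    _ ≤ ∫⁻ z in Ici (2:ℝ), ∫⁻ y in Icc (1:ℝ) z, ∫⁻ x in Icc (1:ℝ) z,
          ENNReal.ofReal (1 / (x ^ α₁ + y ^ α₁ * Real.log z ^ α₁ + z ^ α₃) ^ 2) :=
        lintegral_mono_set (Ici_subset_Ici.2 (by linarith))
end

section
/- Let $3/2 \leq \alpha_1 \leq 2$ and $0 < \alpha_2 < \alpha_1$ with $2 - 1/\alpha_1 - 2/\alpha_2 \leq 0$. Then $\int_2^{\infty}\int_1^{y}\int_1^{y} \left(x^{\alpha_1} + y^{\alpha_2} + z^{\alpha_2}\ln^{\alpha_2} y\right)^{-2}\, dx\, dz\, dy = \infty$. -/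
open Set MeasureTheory Real
open scoped ENNReal NNReal

lemma loglog_lintegral_top (K : ℝ) (hK : 3 ≤ K) :
    ∫⁻ y in Ici K, ENNReal.ofReal ((y * Real.log y)⁻¹) = ⊤ := by
  have hK0 : (0:ℝ) < K := by linarith
  have hlogK : 0 < Real.log K := Real.log_pos (by linarith)
  have key : ∀ T, K ≤ T →
      ENNReal.ofReal (Real.log (Real.log T) - Real.log (Real.log K)) ≤
        ∫⁻ y in Ici K, ENNReal.ofReal ((y * Real.log y)⁻¹) := by
    intro T hT
    have hpos : ∀ y ∈ Icc K T, 0 < y ∧ 0 < Real.log y := by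
      intro y hy
      exact ⟨lt_of_lt_of_le hK0 hy.1, Real.log_pos (by linarith [hy.1])⟩
    have hderiv : ∀ y ∈ Icc K T,
        HasDerivAt (fun t => Real.log (Real.log t)) ((y * Real.log y)⁻¹) y := by
      intro y hy
      obtain ⟨hy0, hly0⟩ := hpos y hy
      have h1 : HasDerivAt Real.log y⁻¹ y := Real.hasDerivAt_log hy0.ne'
      have h2 : HasDerivAt Real.log (Real.log y)⁻¹ (Real.log y) :=
        Real.hasDerivAt_log hly0.ne'
      have := h2.comp y h1
      simpa [mul_inv, mul_comm, Function.comp_def] using this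
    have hcont : ContinuousOn (fun y => (y * Real.log y)⁻¹) (Icc K T) := by
      apply ContinuousOn.inv₀
      · exact continuousOn_id.mul (Real.continuousOn_log.mono (by
          intro y hy; simp only [mem_compl_iff, mem_singleton_iff]
          exact (lt_of_lt_of_le hK0 hy.1).ne'))
      · intro y hy
        obtain ⟨hy0, hly0⟩ := hpos y hy
        positivity
    have hint : IntervalIntegrable (fun y => (y * Real.log y)⁻¹) volume K T := by
      apply ContinuousOn.intervalIntegrable
      rwa [uIcc_of_le hT]
    have heq : ∫ y in K..T, (y * Real.log y)⁻¹ =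
        Real.log (Real.log T) - Real.log (Real.log K) :=
      intervalIntegral.integral_eq_sub_of_hasDerivAt (by rwa [uIcc_of_le hT]) hint
    calc ENNReal.ofReal (Real.log (Real.log T) - Real.log (Real.log K))
        = ENNReal.ofReal (∫ y in Ioc K T, (y * Real.log y)⁻¹) := by
          rw [← heq, intervalIntegral.integral_of_le hT]
      _ = ∫⁻ y in Ioc K T, ENNReal.ofReal ((y * Real.log y)⁻¹) := by
          apply ofReal_integral_eq_lintegral_ofReal
          · exact hint.1
          · filter_upwards [ae_restrict_mem measurableSet_Ioc] with y hy
            obtain ⟨hy0, hly0⟩ := hpos y ⟨hy.1.le, hy.2⟩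
            positivity
      _ ≤ ∫⁻ y in Ici K, ENNReal.ofReal ((y * Real.log y)⁻¹) :=
          lintegral_mono_set (fun y hy => hy.1.le)
  apply ENNReal.eq_top_of_forall_nnreal_le
  intro r
  set T : ℝ := max K (Real.exp (Real.exp (r + Real.log (Real.log K)))) with hTdef
  have hT : K ≤ T := le_max_left _ _
  have hT2 : Real.exp (Real.exp (r + Real.log (Real.log K))) ≤ T := le_max_right _ _
  have hlogT : Real.exp (r + Real.log (Real.log K)) ≤ Real.log T := by
    calc Real.exp (r + Real.log (Real.log K))
        = Real.log (Real.exp (Real.exp (r + Real.log (Real.log K)))) := (Real.log_exp _).symm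
      _ ≤ Real.log T := Real.log_le_log (Real.exp_pos _) hT2
  have h2 : (r : ℝ) + Real.log (Real.log K) ≤ Real.log (Real.log T) := by
    calc (r : ℝ) + Real.log (Real.log K)
        = Real.log (Real.exp (r + Real.log (Real.log K))) := (Real.log_exp _).symm
      _ ≤ Real.log (Real.log T) := Real.log_le_log (Real.exp_pos _) hlogT
  calc (r : ℝ≥0∞) = ENNReal.ofReal r := ENNReal.ofReal_coe_nnreal.symm
    _ ≤ ENNReal.ofReal (Real.log (Real.log T) - Real.log (Real.log K)) :=
        ENNReal.ofReal_le_ofReal (by linarith)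
    _ ≤ _ := key T hT


theorem stmt15 (α₁ α₂ : ℝ) (h1 : 3 / 2 ≤ α₁) (h12 : α₁ ≤ 2) (h2 : 0 < α₂) (h21 : α₂ < α₁)
    (hγ : 2 - 1 / α₁ - 2 / α₂ ≤ 0) :
    (∫⁻ y in Ici (2 : ℝ), ∫⁻ z in Icc (1 : ℝ) y, ∫⁻ x in Icc (1 : ℝ) y,
        ENNReal.ofReal (1 / (x ^ α₁ + y ^ α₂ + z ^ α₂ * Real.log y ^ α₂) ^ 2)) = ⊤ := by
  have hα₁0 : (0:ℝ) < α₁ := by linarith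
  set r : ℝ := α₂ / α₁ with hrdef
  have hr0 : 0 < r := div_pos h2 hα₁0
  have hr1 : r < 1 := (div_lt_one hα₁0).mpr h21
  set K : ℝ := max 16 ((2:ℝ) ^ (α₁ / α₂)) with hKdef
  have hK16 : (16:ℝ) ≤ K := le_max_left _ _
  have hK3 : (3:ℝ) ≤ K := by linarith
  -- pointwise bound for y ≥ K
  have main : ∀ y ∈ Ici K,
      ENNReal.ofReal (1/36) * ENNReal.ofReal ((y * Real.log y)⁻¹) ≤
        ∫⁻ z in Icc (1 : ℝ) y, ∫⁻ x in Icc (1 : ℝ) y,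
          ENNReal.ofReal (1 / (x ^ α₁ + y ^ α₂ + z ^ α₂ * Real.log y ^ α₂) ^ 2) := by
    intro y hy
    have hy16 : (16:ℝ) ≤ y := le_trans hK16 hy
    have hy0 : (0:ℝ) < y := by linarith
    have hy1 : (1:ℝ) ≤ y := by linarith
    have hL1 : (1:ℝ) ≤ Real.log y := by
      rw [Real.le_log_iff_exp_le hy0]
      calc Real.exp 1 ≤ 3 := by nlinarith [Real.exp_one_lt_d9]
        _ ≤ y := by linarith
    have hL0 : (0:ℝ) < Real.log y := by linarith
    have hLy : 2 * Real.log y ≤ y := by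
      have hs0 : 0 ≤ Real.sqrt y := Real.sqrt_nonneg y
      have hs2 : Real.sqrt y ^ 2 = y := Real.sq_sqrt hy0.le
      have hs4 : 4 ≤ Real.sqrt y := by nlinarith
      have hlog : Real.log (Real.sqrt y) = Real.log y / 2 := Real.log_sqrt hy0.le
      have := Real.log_le_sub_one_of_pos (show 0 < Real.sqrt y by linarith)
      nlinarith
    have hyK2 : (2:ℝ) ^ (α₁ / α₂) ≤ y := le_trans (le_max_right _ _) hy
    have hB2 : (2:ℝ) ≤ y ^ r := by
      have h1' : ((2:ℝ) ^ (α₁ / α₂)) ^ r ≤ y ^ r :=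
        Real.rpow_le_rpow (Real.rpow_nonneg (by norm_num) _) hyK2 hr0.le
      have h2' : ((2:ℝ) ^ (α₁ / α₂)) ^ r = 2 := by
        rw [← Real.rpow_mul (by norm_num : (0:ℝ) ≤ 2)]
        rw [show α₁ / α₂ * r = 1 by rw [hrdef]; field_simp]
        exact Real.rpow_one 2
      linarith
    have hBy : y ^ r ≤ y := by
      calc y ^ r ≤ y ^ (1:ℝ) := Real.rpow_le_rpow_of_exponent_le hy1 hr1.le
        _ = y := Real.rpow_one y
    have hA0 : (0:ℝ) < y ^ α₂ := Real.rpow_pos_of_pos hy0 _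
    -- key exponent inequality
    have hq : α₂ * 2 ≤ r + 2 := by
      have h' : (2 - 1 / α₁ - 2 / α₂) * α₂ ≤ 0 := mul_nonpos_of_nonpos_of_nonneg hγ h2.le
      have e1 : 2 / α₂ * α₂ = 2 := div_mul_cancel₀ _ h2.ne'
      have e2 : 1 / α₁ * α₂ = α₂ / α₁ := one_div_mul_eq_div _ _
      rw [hrdef]; nlinarith [h', e1, e2]
    have hkey : (y ^ α₂) ^ 2 ≤ y ^ r * y * y := by
      have e1 : (y ^ α₂) ^ 2 = y ^ (α₂ * 2) := by
        rw [Real.rpow_mul hy0.le, Real.rpow_two]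
      have e2 : y ^ r * y * y = y ^ (r + 2) := by
        rw [show r + 2 = r + 1 + 1 by ring, Real.rpow_add hy0, Real.rpow_add hy0,
          Real.rpow_one]
      rw [e1, e2]
      exact Real.rpow_le_rpow_of_exponent_le hy1 hq
    -- the real inequality
    have realineq : 1/36 * (y * Real.log y)⁻¹ ≤
        1 / (3 * y ^ α₂) ^ 2 * (y ^ r - 1) * (y / Real.log y - 1) := by
      set A := y ^ α₂
      set B := y ^ r
      set L := Real.log y
      have e : 1 / (3 * A) ^ 2 * (B - 1) * (y / L - 1) = (B - 1) * (y - L) / (9 * A ^ 2 * L) := by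
        field_simp; ring_nf
      have e2 : 1 / 36 * (y * L)⁻¹ = 1 / (36 * (y * L)) := by field_simp
      rw [e, e2, div_le_div_iff₀ (by positivity) (by positivity)]
      nlinarith [mul_le_mul_of_nonneg_right hkey hL0.le,
        mul_nonneg (mul_nonneg (mul_nonneg (sub_nonneg.2 hB2) (sub_nonneg.2 hLy)) hy0.le) hL0.le,
        mul_nonneg (mul_nonneg (sub_nonneg.2 hLy) hy0.le) hL0.le,
        mul_nonneg (mul_nonneg (mul_nonneg (sub_nonneg.2 hB2) hL0.le) hy0.le) hL0.le]
    have hsub1 : Icc (1:ℝ) (y ^ r) ⊆ Icc 1 y := Icc_subset_Icc le_rfl hBy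
    have hsub2 : Icc (1:ℝ) (y / Real.log y) ⊆ Icc 1 y :=
      Icc_subset_Icc le_rfl (div_le_self hy0.le hL1)
    calc ENNReal.ofReal (1/36) * ENNReal.ofReal ((y * Real.log y)⁻¹)
        = ENNReal.ofReal (1/36 * (y * Real.log y)⁻¹) := by
          rw [ENNReal.ofReal_mul (by norm_num)]
      _ ≤ ENNReal.ofReal (1 / (3 * y ^ α₂) ^ 2 * (y ^ r - 1) * (y / Real.log y - 1)) :=
          ENNReal.ofReal_le_ofReal realineq
      _ = ENNReal.ofReal (1 / (3 * y ^ α₂) ^ 2) * ENNReal.ofReal (y ^ r - 1) *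
            ENNReal.ofReal (y / Real.log y - 1) := by
          rw [ENNReal.ofReal_mul (mul_nonneg (by positivity) (by linarith)),
            ENNReal.ofReal_mul (by positivity)]
      _ = ∫⁻ _ in Icc (1:ℝ) (y / Real.log y), ∫⁻ _ in Icc (1:ℝ) (y ^ r),
            ENNReal.ofReal (1 / (3 * y ^ α₂) ^ 2) := by
          simp only [setLIntegral_const, Real.volume_Icc]
      _ ≤ ∫⁻ z in Icc (1:ℝ) (y / Real.log y), ∫⁻ x in Icc (1:ℝ) (y ^ r),
            ENNReal.ofReal (1 / (x ^ α₁ + y ^ α₂ + z ^ α₂ * Real.log y ^ α₂) ^ 2) := by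
          apply setLIntegral_mono' measurableSet_Icc
          intro z hz
          apply setLIntegral_mono' measurableSet_Icc
          intro x hx
          apply ENNReal.ofReal_le_ofReal
          have hx1 : (1:ℝ) ≤ x := hx.1
          have hz1 : (1:ℝ) ≤ z := hz.1
          have hxb : x ^ α₁ ≤ y ^ α₂ := by
            calc x ^ α₁ ≤ (y ^ r) ^ α₁ :=
                  Real.rpow_le_rpow (by linarith) hx.2 hα₁0.le
              _ = y ^ (r * α₁) := by rw [← Real.rpow_mul hy0.le]
              _ = y ^ α₂ := by rw [hrdef, div_mul_cancel₀ _ hα₁0.ne']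
          have hzb : z ^ α₂ * Real.log y ^ α₂ ≤ y ^ α₂ := by
            rw [← Real.mul_rpow (by linarith) hL0.le]
            apply Real.rpow_le_rpow (by positivity) _ h2.le
            calc z * Real.log y ≤ y / Real.log y * Real.log y :=
                  mul_le_mul_of_nonneg_right hz.2 hL0.le
              _ = y := div_mul_cancel₀ _ hL0.ne'
          have hd0 : 0 < x ^ α₁ + y ^ α₂ + z ^ α₂ * Real.log y ^ α₂ := by
            have := Real.rpow_nonneg (by linarith : (0:ℝ) ≤ x) α₁
            have := mul_nonneg (Real.rpow_nonneg (by linarith : (0:ℝ) ≤ z) α₂)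
              (Real.rpow_nonneg hL0.le α₂)
            linarith
          have hd3 : x ^ α₁ + y ^ α₂ + z ^ α₂ * Real.log y ^ α₂ ≤ 3 * y ^ α₂ := by
            linarith
          apply one_div_le_one_div_of_le (by positivity)
          exact pow_le_pow_left₀ hd0.le hd3 2
      _ ≤ ∫⁻ z in Icc (1:ℝ) (y / Real.log y), ∫⁻ x in Icc (1:ℝ) y,
            ENNReal.ofReal (1 / (x ^ α₁ + y ^ α₂ + z ^ α₂ * Real.log y ^ α₂) ^ 2) :=
          lintegral_mono fun z => lintegral_mono_set hsub1
      _ ≤ _ := lintegral_mono_set hsub2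
  -- conclude
  rw [eq_top_iff]
  calc (⊤:ℝ≥0∞) = ENNReal.ofReal (1/36) * ∫⁻ y in Ici K, ENNReal.ofReal ((y * Real.log y)⁻¹) := by
        rw [loglog_lintegral_top K hK3, ENNReal.mul_top]
        exact (ENNReal.ofReal_pos.mpr (by norm_num)).ne'
    _ = ∫⁻ y in Ici K, ENNReal.ofReal (1/36) * ENNReal.ofReal ((y * Real.log y)⁻¹) :=
        (lintegral_const_mul' _ _ ENNReal.ofReal_ne_top).symm
    _ ≤ ∫⁻ y in Ici K, ∫⁻ z in Icc (1 : ℝ) y, ∫⁻ x in Icc (1 : ℝ) y,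
          ENNReal.ofReal (1 / (x ^ α₁ + y ^ α₂ + z ^ α₂ * Real.log y ^ α₂) ^ 2) :=
        setLIntegral_mono' measurableSet_Ici main
    _ ≤ _ := lintegral_mono_set (fun y hy => le_trans (by linarith : (2:ℝ) ≤ K) hy)
end
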